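/- arXiv:1509.01518 — 3 statements merged into one kernel-verified Lean document; each statement's English description precedes it below -/
import Mathlib

section
/- Let (H,α) be a Hom-bialgebra and σ: H⊗H → k a linear map with σ∘(α⊗α) = σ. The multiplication h·_σ g = σ(h₁,g₁)α⁻¹(h₂g₂) on H is Hom-associative (with respect to α) if and only if σ is a left Hom-2-cocycle, i.e. σ(l₁,k₁)σ(α²(h), l₂k₂) = σ(h₁,l₁)σ(h₂l₂, α²(k)) for all h,k,l ∈ H. -/
open scoped TensorProduct BigOperators

universe u v

/-- A Hom-Hopf algebra over a field `k`, with a chosen Sweedler-type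
decomposition (`Idx`, `T`, `d1`, `d2`) of the comultiplication:
`comul h = ∑ i ∈ T h, d1 h i ⊗ₜ d2 h i`.  The structure map `α` is assumed
bijective (a linear equivalence), as throughout the paper. -/
structure HomHopf (k : Type u) (H : Type v) [Field k] [AddCommGroup H] [Module k H] where
  mul : H →ₗ[k] H →ₗ[k] H
  one : H
  α : H ≃ₗ[k] H
  comul : H →ₗ[k] H ⊗[k] H
  counit : H →ₗ[k] k
  S : H →ₗ[k] H
  Idx : Type v
  T : H → Finset Idx
  d1 : H → Idx → H
  d2 : H → Idx → H
  repr : ∀ h, comul h = ∑ i ∈ T h, d1 h i ⊗ₜ[k] d2 h i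
  α_one : α one = one
  α_mul : ∀ x y, α (mul x y) = mul (α x) (α y)
  one_mul : ∀ x, mul one x = α x
  mul_one : ∀ x, mul x one = α x
  hom_assoc : ∀ x y z, mul (α x) (mul y z) = mul (mul x y) (α z)
  counit_α : ∀ h, counit (α h) = counit h
  comul_α : ∀ h, comul (α h) = ∑ i ∈ T h, α (d1 h i) ⊗ₜ[k] α (d2 h i)
  counit_left : ∀ h, ∑ i ∈ T h, counit (d1 h i) • d2 h i = α h
  counit_right : ∀ h, ∑ i ∈ T h, counit (d2 h i) • d1 h i = α h
  hom_coassoc : ∀ h,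
    (TensorProduct.assoc k H H H) (∑ i ∈ T h, comul (d1 h i) ⊗ₜ[k] α (d2 h i))
      = ∑ i ∈ T h, α (d1 h i) ⊗ₜ[k] comul (d2 h i)
  counit_one : counit one = 1
  counit_mul : ∀ x y, counit (mul x y) = counit x * counit y
  comul_one : comul one = one ⊗ₜ[k] one
  comul_mul : ∀ x y, comul (mul x y)
      = ∑ i ∈ T x, ∑ j ∈ T y, mul (d1 x i) (d1 y j) ⊗ₜ[k] mul (d2 x i) (d2 y j)
  S_α : ∀ h, S (α h) = α (S h)
  S_left : ∀ h, ∑ i ∈ T h, mul (S (d1 h i)) (d2 h i) = counit h • one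
  S_right : ∀ h, ∑ i ∈ T h, mul (d1 h i) (S (d2 h i)) = counit h • one

/-- A unital Hom-associative algebra with bijective structure map. -/
structure HomAlg (k : Type u) (A : Type v) [Field k] [AddCommGroup A] [Module k A] where
  mul : A →ₗ[k] A →ₗ[k] A
  one : A
  β : A ≃ₗ[k] A
  β_one : β one = one
  β_mul : ∀ x y, β (mul x y) = mul (β x) (β y)
  one_mul : ∀ x, mul one x = β x
  mul_one : ∀ x, mul x one = β x
  hom_assoc : ∀ x y z, mul (β x) (mul y z) = mul (mul x y) (β z)

section Lazy

variable {k : Type u} {H : Type v} [Field k] [AddCommGroup H] [Module k H]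

/-- `σ ∘ (α ⊗ α) = σ`. -/
def AlphaInvariant2 (HH : HomHopf k H) (σ : H → H → k) : Prop :=
  ∀ h g, σ (HH.α h) (HH.α g) = σ h g

/-- The left Hom-2-cocycle equation
`σ(l₁,k₁)σ(α²(h), l₂k₂) = σ(h₁,l₁)σ(h₂l₂, α²(k))`. -/
def LeftCocycleEq (HH : HomHopf k H) (σ : H → H → k) : Prop :=
  ∀ h l m, ∑ j ∈ HH.T l, ∑ n ∈ HH.T m,
      σ (HH.d1 l j) (HH.d1 m n) * σ (HH.α (HH.α h)) (HH.mul (HH.d2 l j) (HH.d2 m n))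
    = ∑ i ∈ HH.T h, ∑ j ∈ HH.T l,
      σ (HH.d1 h i) (HH.d1 l j) * σ (HH.mul (HH.d2 h i) (HH.d2 l j)) (HH.α (HH.α m))

/-- The right Hom-2-cocycle equation
`σ(α²(h), l₁k₁)σ(l₂,k₂) = σ(h₁l₁, α²(k))σ(h₂,l₂)`. -/
def RightCocycleEq (HH : HomHopf k H) (σ : H → H → k) : Prop :=
  ∀ h l m, ∑ j ∈ HH.T l, ∑ n ∈ HH.T m,
      σ (HH.α (HH.α h)) (HH.mul (HH.d1 l j) (HH.d1 m n)) * σ (HH.d2 l j) (HH.d2 m n)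
    = ∑ i ∈ HH.T h, ∑ j ∈ HH.T l,
      σ (HH.mul (HH.d1 h i) (HH.d1 l j)) (HH.α (HH.α m)) * σ (HH.d2 h i) (HH.d2 l j)

/-- A left Hom-2-cocycle. -/
def IsLeftCocycle (HH : HomHopf k H) (σ : H → H → k) : Prop :=
  AlphaInvariant2 HH σ ∧ LeftCocycleEq HH σ

/-- A right Hom-2-cocycle. -/
def IsRightCocycle (HH : HomHopf k H) (σ : H → H → k) : Prop :=
  AlphaInvariant2 HH σ ∧ RightCocycleEq HH σ

/-- `σ` is normalized: `σ(1,h) = σ(h,1) = ε(h)`. -/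
def Normalized2 (HH : HomHopf k H) (σ : H → H → k) : Prop :=
  (∀ h, σ HH.one h = HH.counit h) ∧ (∀ h, σ h HH.one = HH.counit h)

/-- `τ` is the convolution inverse of `σ : H ⊗ H → k`. -/
def ConvInv2 (HH : HomHopf k H) (σ τ : H → H → k) : Prop :=
  (∀ h g, ∑ i ∈ HH.T h, ∑ j ∈ HH.T g,
      σ (HH.d1 h i) (HH.d1 g j) * τ (HH.d2 h i) (HH.d2 g j) = HH.counit h * HH.counit g) ∧
  (∀ h g, ∑ i ∈ HH.T h, ∑ j ∈ HH.T g,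
      τ (HH.d1 h i) (HH.d1 g j) * σ (HH.d2 h i) (HH.d2 g j) = HH.counit h * HH.counit g)

/-- `σ` is lazy: `σ(h₁,g₁)h₂g₂ = h₁g₁σ(h₂,g₂)`. -/
def IsLazy2 (HH : HomHopf k H) (σ : H → H → k) : Prop :=
  ∀ h g, ∑ i ∈ HH.T h, ∑ j ∈ HH.T g,
      σ (HH.d1 h i) (HH.d1 g j) • HH.mul (HH.d2 h i) (HH.d2 g j)
    = ∑ i ∈ HH.T h, ∑ j ∈ HH.T g,
      σ (HH.d2 h i) (HH.d2 g j) • HH.mul (HH.d1 h i) (HH.d1 g j)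

/-- The convolution product of `σ, τ : H ⊗ H → k`. -/
def conv2 (HH : HomHopf k H) (σ τ : H → H → k) : H → H → k :=
  fun h g => ∑ i ∈ HH.T h, ∑ j ∈ HH.T g,
    σ (HH.d1 h i) (HH.d1 g j) * τ (HH.d2 h i) (HH.d2 g j)

/-- The deformed multiplication `h ·_σ g = σ(h₁,g₁)α⁻¹(h₂g₂)` on `H`. -/
def mulSigma (HH : HomHopf k H) (σ : H → H → k) : H → H → H :=
  fun h g => ∑ i ∈ HH.T h, ∑ j ∈ HH.T g,
    σ (HH.d1 h i) (HH.d1 g j) • HH.α.symm (HH.mul (HH.d2 h i) (HH.d2 g j))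

/-- The convolution product of `γ, δ : H → k`. -/
def conv1 (HH : HomHopf k H) (γ δ : H → k) : H → k :=
  fun h => ∑ i ∈ HH.T h, γ (HH.d1 h i) * δ (HH.d2 h i)

/-- `δ` is the convolution inverse of `γ : H → k`. -/
def ConvInv1 (HH : HomHopf k H) (γ δ : H → k) : Prop :=
  (∀ h, conv1 HH γ δ h = HH.counit h) ∧ (∀ h, conv1 HH δ γ h = HH.counit h)

/-- `γ : H → k` is lazy: `γ(h₁)h₂ = h₁γ(h₂)`. -/
def IsLazy1 (HH : HomHopf k H) (γ : H → k) : Prop :=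
  ∀ h, ∑ i ∈ HH.T h, γ (HH.d1 h i) • HH.d2 h i = ∑ i ∈ HH.T h, γ (HH.d2 h i) • HH.d1 h i

/-- `D¹(γ)(h,g) = γ(h₁)γ(g₁)γ⁻¹(h₂g₂)` (with `δ` the convolution inverse of `γ`). -/
def D1 (HH : HomHopf k H) (γ δ : H → k) : H → H → k :=
  fun h g => ∑ i ∈ HH.T h, ∑ j ∈ HH.T g,
    γ (HH.d1 h i) * γ (HH.d1 g j) * δ (HH.mul (HH.d2 h i) (HH.d2 g j))

end Lazy
section Aux

open TensorProduct

variable {k : Type u} {H : Type v} [Field k] [AddCommGroup H] [Module k H]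

namespace HomHopf

variable (HH : HomHopf k H)

lemma symm_mul (a b : H) :
    HH.α.symm (HH.mul a b) = HH.mul (HH.α.symm a) (HH.α.symm b) := by
  apply HH.α.injective
  rw [HH.α.apply_symm_apply, HH.α_mul, HH.α.apply_symm_apply, HH.α.apply_symm_apply]

lemma comul_alpha (h : H) :
    HH.comul (HH.α h)
      = TensorProduct.map (HH.α : H →ₗ[k] H) (HH.α : H →ₗ[k] H) (HH.comul h) := by
  rw [HH.comul_α, HH.repr h, map_sum]
  simp [TensorProduct.map_tmul]

lemma comul_symm (u : H) :
    HH.comul (HH.α.symm u)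
      = TensorProduct.map (HH.α.symm : H →ₗ[k] H) (HH.α.symm : H →ₗ[k] H) (HH.comul u) := by
  have h := HH.comul_alpha (HH.α.symm u)
  rw [HH.α.apply_symm_apply] at h
  rw [h, ← LinearMap.comp_apply, ← TensorProduct.map_comp,
    show ((HH.α.symm : H →ₗ[k] H) ∘ₗ (HH.α : H →ₗ[k] H)) = LinearMap.id from by ext a; simp,
    TensorProduct.map_id, LinearMap.id_apply]

lemma counit_symm (u : H) : HH.counit (HH.α.symm u) = HH.counit u := by
  have := HH.counit_α (HH.α.symm u)
  rw [HH.α.apply_symm_apply] at this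
  exact this.symm

end HomHopf

end Aux
section Aux2

open TensorProduct

variable {k : Type u} {H : Type v} [Field k] [AddCommGroup H] [Module k H]

/-- The bilinear map on `H ⊗ H` realizing `mulSigma`. -/
noncomputable def Fmap (HH : HomHopf k H) (σ : H →ₗ[k] H →ₗ[k] k) :
    (H ⊗[k] H) →ₗ[k] (H ⊗[k] H) →ₗ[k] H :=
  TensorProduct.lift <| LinearMap.mk₂ k
    (fun a b => TensorProduct.lift <| LinearMap.mk₂ k
      (fun c d => σ a c • HH.α.symm (HH.mul b d))
      (by intro c c' d; simp [add_smul])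
      (by intro s c d; simp only [map_smul, LinearMap.smul_apply, smul_smul, smul_eq_mul])
      (by intro c d d'; simp [smul_add])
      (by intro s c d; simp only [map_smul, LinearMap.smul_apply]; rw [smul_comm]))
    (by intro a a' b; apply TensorProduct.ext'; intro c d
        simp [TensorProduct.lift.tmul, add_smul])
    (by intro s a b; apply TensorProduct.ext'; intro c d
        simp only [TensorProduct.lift.tmul, LinearMap.mk₂_apply, map_smul,
          LinearMap.smul_apply, smul_smul, smul_eq_mul])
    (by intro a b b'; apply TensorProduct.ext'; intro c d
        simp [TensorProduct.lift.tmul, smul_add])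
    (by intro s a b; apply TensorProduct.ext'; intro c d
        simp only [TensorProduct.lift.tmul, LinearMap.mk₂_apply, map_smul,
          LinearMap.smul_apply, smul_smul, smul_eq_mul]
        rw [mul_comm])

@[simp] lemma Fmap_tmul (HH : HomHopf k H) (σ : H →ₗ[k] H →ₗ[k] k) (a b c d : H) :
    Fmap HH σ (a ⊗ₜ[k] b) (c ⊗ₜ[k] d) = σ a c • HH.α.symm (HH.mul b d) := by
  simp [Fmap, TensorProduct.lift.tmul]

lemma mulSigma_eq_F (HH : HomHopf k H) (σ : H →ₗ[k] H →ₗ[k] k) (h g : H) :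
    mulSigma HH (fun a b => σ a b) h g = Fmap HH σ (HH.comul h) (HH.comul g) := by
  rw [HH.repr h, HH.repr g, map_sum]
  simp only [mulSigma, map_sum, LinearMap.sum_apply, Fmap_tmul]
  rw [Finset.sum_comm]

/-- A trilinear map `(a,b,c) ↦ (p a * q b) • r c`. -/
noncomputable def triMap (p q : H →ₗ[k] k) (r : H →ₗ[k] H) :
    H →ₗ[k] H →ₗ[k] H →ₗ[k] H :=
  LinearMap.mk₂ k (fun a b => (p a * q b) • r)
    (by intro a a' b; simp [add_mul, add_smul])
    (by intro s a b; simp [smul_smul, smul_eq_mul, mul_assoc])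
    (by intro a b b'; simp [mul_add, add_smul])
    (by intro s a b; simp [smul_eq_mul, smul_smul, mul_left_comm])

@[simp] lemma triMap_apply (p q : H →ₗ[k] k) (r : H →ₗ[k] H) (a b c : H) :
    triMap p q r a b c = (p a * q b) • r c := rfl

/-- Substitution of tensor identities into trilinear expressions. -/
lemma tri_eq2 (T₀ : H →ₗ[k] H →ₗ[k] H →ₗ[k] H) {ι ι' : Type*} (S : Finset ι)
    (S₁ S₂ : ι → Finset ι')
    (a b c : ι → ι' → H) (a' b' c' : ι → ι' → H)
    (h : ∑ j ∈ S, ∑ p ∈ S₁ j, a j p ⊗ₜ[k] (b j p ⊗ₜ[k] c j p)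
       = ∑ j ∈ S, ∑ p ∈ S₂ j, a' j p ⊗ₜ[k] (b' j p ⊗ₜ[k] c' j p)) :
    ∑ j ∈ S, ∑ p ∈ S₁ j, T₀ (a j p) (b j p) (c j p)
      = ∑ j ∈ S, ∑ p ∈ S₂ j, T₀ (a' j p) (b' j p) (c' j p) := by
  have hF := congrArg
    (TensorProduct.lift ((TensorProduct.lift.equiv (RingHom.id k) H H H).toLinearMap ∘ₗ T₀)) h
  simpa [map_sum, TensorProduct.lift.tmul] using hF

/-- Flattened Hom-coassociativity. -/
lemma coassoc_sum (HH : HomHopf k H) (w : H) :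
    ∑ j ∈ HH.T w, ∑ p ∈ HH.T (HH.d1 w j),
        HH.d1 (HH.d1 w j) p ⊗ₜ[k] (HH.d2 (HH.d1 w j) p ⊗ₜ[k] HH.α (HH.d2 w j))
      = ∑ j ∈ HH.T w, ∑ p ∈ HH.T (HH.d2 w j),
        HH.α (HH.d1 w j) ⊗ₜ[k] (HH.d1 (HH.d2 w j) p ⊗ₜ[k] HH.d2 (HH.d2 w j) p) := by
  have h := HH.hom_coassoc w
  calc ∑ j ∈ HH.T w, ∑ p ∈ HH.T (HH.d1 w j),
        HH.d1 (HH.d1 w j) p ⊗ₜ[k] (HH.d2 (HH.d1 w j) p ⊗ₜ[k] HH.α (HH.d2 w j))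
      = (TensorProduct.assoc k H H H)
          (∑ j ∈ HH.T w, HH.comul (HH.d1 w j) ⊗ₜ[k] HH.α (HH.d2 w j)) := by
        rw [map_sum]
        refine Finset.sum_congr rfl fun j _ => ?_
        rw [HH.repr (HH.d1 w j), TensorProduct.sum_tmul, map_sum]
        simp [TensorProduct.assoc_tmul]
    _ = ∑ j ∈ HH.T w, HH.α (HH.d1 w j) ⊗ₜ[k] HH.comul (HH.d2 w j) := h
    _ = _ := by
        refine Finset.sum_congr rfl fun j _ => ?_
        rw [HH.repr (HH.d2 w j), TensorProduct.tmul_sum]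

/-- Hom-coassociativity with `α⁻¹` on the first leg. -/
lemma coassoc_sum' (HH : HomHopf k H) (w : H) :
    ∑ j ∈ HH.T w, ∑ p ∈ HH.T (HH.d2 w j),
        HH.d1 w j ⊗ₜ[k] (HH.d1 (HH.d2 w j) p ⊗ₜ[k] HH.d2 (HH.d2 w j) p)
      = ∑ j ∈ HH.T w, ∑ p ∈ HH.T (HH.d1 w j),
        HH.α.symm (HH.d1 (HH.d1 w j) p) ⊗ₜ[k]
          (HH.d2 (HH.d1 w j) p ⊗ₜ[k] HH.α (HH.d2 w j)) := by
  have h := congrArg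
    (TensorProduct.map (HH.α.symm : H →ₗ[k] H) (LinearMap.id : H ⊗[k] H →ₗ[k] H ⊗[k] H))
    (coassoc_sum HH w)
  simp only [map_sum, TensorProduct.map_tmul, LinearMap.id_apply, LinearEquiv.coe_coe,
    LinearEquiv.symm_apply_apply] at h
  exact h.symm

end Aux2
section Aux3

open TensorProduct

variable {k : Type u} {H : Type v} [Field k] [AddCommGroup H] [Module k H]
variable (HH : HomHopf k H) (σ : H →ₗ[k] H →ₗ[k] k)
variable (hα : AlphaInvariant2 HH (fun h g => σ h g))

include hα

lemma sigma_symm_symm (a b : H) : σ (HH.α.symm a) (HH.α.symm b) = σ a b := by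
  have h := hα (HH.α.symm a) (HH.α.symm b)
  simp only [HH.α.apply_symm_apply] at h
  exact h.symm

lemma sigma_alpha_symm (a u : H) :
    σ (HH.α a) (HH.α.symm u) = σ (HH.α (HH.α a)) u := by
  have h := hα (HH.α a) (HH.α.symm u)
  rw [HH.α.apply_symm_apply] at h
  exact h.symm

lemma sigma_symm_alpha (u a : H) :
    σ (HH.α.symm u) (HH.α a) = σ u (HH.α (HH.α a)) := by
  have h := hα (HH.α.symm u) (HH.α a)
  rw [HH.α.apply_symm_apply] at h
  exact h.symm

lemma counit_mulSigma (h g : H) :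
    HH.counit (mulSigma HH (fun a b => σ a b) h g) = σ h g := by
  have h1 : σ (HH.α h) (HH.α g)
      = ∑ i ∈ HH.T h, ∑ j ∈ HH.T g,
          HH.counit (HH.d2 h i) * HH.counit (HH.d2 g j)
            * σ (HH.d1 h i) (HH.d1 g j) := by
    rw [← HH.counit_right h, ← HH.counit_right g]
    simp only [map_sum, map_smul, LinearMap.sum_apply, LinearMap.smul_apply, smul_eq_mul,
      Finset.mul_sum, Finset.sum_mul]
    rw [Finset.sum_comm]
    refine Finset.sum_congr rfl fun i _ => Finset.sum_congr rfl fun j _ => ?_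
    ring
  have h2 : σ (HH.α h) (HH.α g) = σ h g := hα h g
  rw [← h2, h1]
  simp only [mulSigma, map_sum, map_smul, HH.counit_symm, HH.counit_mul, smul_eq_mul]
  refine Finset.sum_congr rfl fun i _ => Finset.sum_congr rfl fun j _ => ?_
  ring

end Aux3
section Aux4

open TensorProduct

lemma sum_swap12_3 {β : Type*} [AddCommMonoid β] {ι κ γ : Type*}
    (s : Finset ι) (u : ι → Finset κ) (t : Finset γ) (f : ι → κ → γ → β) :
    ∑ a ∈ s, ∑ b ∈ u a, ∑ c ∈ t, f a b c
      = ∑ c ∈ t, ∑ a ∈ s, ∑ b ∈ u a, f a b c := by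
  calc ∑ a ∈ s, ∑ b ∈ u a, ∑ c ∈ t, f a b c
      = ∑ a ∈ s, ∑ c ∈ t, ∑ b ∈ u a, f a b c :=
        Finset.sum_congr rfl fun a _ => Finset.sum_comm
    _ = ∑ c ∈ t, ∑ a ∈ s, ∑ b ∈ u a, f a b c := Finset.sum_comm

lemma swapblock {β : Type*} [AddCommMonoid β] {ι₁ κ₁ ι₂ κ₂ : Type*}
    (s : Finset ι₁) (u : ι₁ → Finset κ₁) (t : Finset ι₂) (v : ι₂ → Finset κ₂)
    (f : ι₁ → κ₁ → ι₂ → κ₂ → β) :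
    ∑ a ∈ s, ∑ b ∈ u a, ∑ c ∈ t, ∑ d ∈ v c, f a b c d
      = ∑ c ∈ t, ∑ d ∈ v c, ∑ a ∈ s, ∑ b ∈ u a, f a b c d := by
  calc ∑ a ∈ s, ∑ b ∈ u a, ∑ c ∈ t, ∑ d ∈ v c, f a b c d
      = ∑ a ∈ s, ∑ b ∈ u a, ∑ x ∈ t.sigma v, f a b x.1 x.2 := by
        refine Finset.sum_congr rfl fun a _ => Finset.sum_congr rfl fun b _ => ?_
        rw [Finset.sum_sigma]
    _ = ∑ x ∈ t.sigma v, ∑ a ∈ s, ∑ b ∈ u a, f a b x.1 x.2 :=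
        sum_swap12_3 s u (t.sigma v) _
    _ = ∑ c ∈ t, ∑ d ∈ v c, ∑ a ∈ s, ∑ b ∈ u a, f a b c d := by
        rw [Finset.sum_sigma]

variable {k : Type u} {H : Type v} [Field k] [AddCommGroup H] [Module k H]

lemma vec_eq (HH : HomHopf k H) (a b c : H) :
    HH.mul a (HH.α.symm (HH.mul b c))
      = HH.mul (HH.α.symm (HH.mul a b)) c := by
  have h := HH.hom_assoc (HH.α.symm a) (HH.α.symm b) (HH.α.symm c)
  rw [HH.α.apply_symm_apply, HH.α.apply_symm_apply] at h
  rw [HH.symm_mul a b, HH.symm_mul b c]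
  exact h

/-- Forward direction: Hom-associativity of `·_σ` implies the left cocycle equation. -/
lemma mulSigma_forward (HH : HomHopf k H) (σ : H →ₗ[k] H →ₗ[k] k)
    (hα : AlphaInvariant2 HH (fun h g => σ h g))
    (hassoc : ∀ x y z : H,
        mulSigma HH (fun h g => σ h g) (HH.α x) (mulSigma HH (fun h g => σ h g) y z)
          = mulSigma HH (fun h g => σ h g) (mulSigma HH (fun h g => σ h g) x y) (HH.α z)) :
    LeftCocycleEq HH (fun h g => σ h g) := by
  intro h l m
  have he := congrArg HH.counit (hassoc h l m)
  rw [counit_mulSigma HH σ hα, counit_mulSigma HH σ hα] at he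
  have e1 : σ (HH.α h) (mulSigma HH (fun a b => σ a b) l m)
      = ∑ j ∈ HH.T l, ∑ n ∈ HH.T m,
          σ (HH.d1 l j) (HH.d1 m n)
            * σ (HH.α (HH.α h)) (HH.mul (HH.d2 l j) (HH.d2 m n)) := by
    simp only [mulSigma, map_sum, map_smul, smul_eq_mul]
    refine Finset.sum_congr rfl fun j _ => Finset.sum_congr rfl fun n _ => ?_
    rw [sigma_alpha_symm HH σ hα]
  have e2 : σ (mulSigma HH (fun a b => σ a b) h l) (HH.α m)
      = ∑ i ∈ HH.T h, ∑ j ∈ HH.T l,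
          σ (HH.d1 h i) (HH.d1 l j)
            * σ (HH.mul (HH.d2 h i) (HH.d2 l j)) (HH.α (HH.α m)) := by
    simp only [mulSigma, map_sum, map_smul, LinearMap.sum_apply, LinearMap.smul_apply,
      smul_eq_mul]
    refine Finset.sum_congr rfl fun i _ => Finset.sum_congr rfl fun j _ => ?_
    rw [sigma_symm_alpha HH σ hα]
  rw [e1, e2] at he
  exact he

end Aux4
section Aux5

open TensorProduct

lemma fac_smul {M : Type*} [AddCommGroup M] {R : Type*} [Field R] [Module R M]
    {ι₁ ι₂ : Type*} (s₁ : Finset ι₁) (s₂ : ι₁ → Finset ι₂) (g : ι₁ → ι₂ → R) (w : M) :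
    ∑ a ∈ s₁, ∑ b ∈ s₂ a, g a b • w = (∑ a ∈ s₁, ∑ b ∈ s₂ a, g a b) • w := by
  simp [Finset.sum_smul]

variable {k : Type u} {H : Type v} [Field k] [AddCommGroup H] [Module k H]

lemma mulSigma_backward (HH : HomHopf k H) (σ : H →ₗ[k] H →ₗ[k] k)
    (hα : AlphaInvariant2 HH (fun h g => σ h g))
    (hc : LeftCocycleEq HH (fun h g => σ h g)) (x y z : H) :
    mulSigma HH (fun h g => σ h g) (HH.α x) (mulSigma HH (fun h g => σ h g) y z)
      = mulSigma HH (fun h g => σ h g) (mulSigma HH (fun h g => σ h g) x y) (HH.α z) := by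
  have hc' : ∀ h l m : H, ∑ j ∈ HH.T l, ∑ n ∈ HH.T m,
      σ (HH.d1 l j) (HH.d1 m n) * σ (HH.α (HH.α h)) (HH.mul (HH.d2 l j) (HH.d2 m n))
    = ∑ i ∈ HH.T h, ∑ j ∈ HH.T l,
      σ (HH.d1 h i) (HH.d1 l j) * σ (HH.mul (HH.d2 h i) (HH.d2 l j)) (HH.α (HH.α m)) := hc
  -- comultiplication of mulSigma y z, blocked order (j,p,n,q)
  have hΔV : HH.comul (mulSigma HH (fun h g => σ h g) y z)
      = ∑ j ∈ HH.T y, ∑ p ∈ HH.T (HH.d2 y j), ∑ n ∈ HH.T z, ∑ q ∈ HH.T (HH.d2 z n),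
          σ (HH.d1 y j) (HH.d1 z n) •
            (HH.α.symm (HH.mul (HH.d1 (HH.d2 y j) p) (HH.d1 (HH.d2 z n) q)) ⊗ₜ[k]
              HH.α.symm (HH.mul (HH.d2 (HH.d2 y j) p) (HH.d2 (HH.d2 z n) q))) := by
    simp only [mulSigma, map_sum, map_smul, HomHopf.comul_symm, HH.comul_mul,
      TensorProduct.map_tmul, LinearEquiv.coe_coe, Finset.smul_sum]
    exact Finset.sum_congr rfl fun j _ => Finset.sum_comm
  have hΔU : HH.comul (mulSigma HH (fun h g => σ h g) x y)
      = ∑ i ∈ HH.T x, ∑ p ∈ HH.T (HH.d2 x i), ∑ j ∈ HH.T y, ∑ q ∈ HH.T (HH.d2 y j),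
          σ (HH.d1 x i) (HH.d1 y j) •
            (HH.α.symm (HH.mul (HH.d1 (HH.d2 x i) p) (HH.d1 (HH.d2 y j) q)) ⊗ₜ[k]
              HH.α.symm (HH.mul (HH.d2 (HH.d2 x i) p) (HH.d2 (HH.d2 y j) q))) := by
    simp only [mulSigma, map_sum, map_smul, HomHopf.comul_symm, HH.comul_mul,
      TensorProduct.map_tmul, LinearEquiv.coe_coe, Finset.smul_sum]
    exact Finset.sum_congr rfl fun i _ => Finset.sum_comm
  have hL1 : mulSigma HH (fun h g => σ h g) (HH.α x) (mulSigma HH (fun h g => σ h g) y z)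
      = ∑ i ∈ HH.T x, ∑ j ∈ HH.T y, ∑ p ∈ HH.T (HH.d2 y j),
          ∑ n ∈ HH.T z, ∑ q ∈ HH.T (HH.d2 z n),
          (σ (HH.d1 y j) (HH.d1 z n)
            * σ (HH.α (HH.α (HH.d1 x i))) (HH.mul (HH.d1 (HH.d2 y j) p) (HH.d1 (HH.d2 z n) q)))
            • HH.mul (HH.d2 x i)
                (HH.α.symm (HH.α.symm
                  (HH.mul (HH.d2 (HH.d2 y j) p) (HH.d2 (HH.d2 z n) q)))) := by
    rw [mulSigma_eq_F, HH.comul_α, hΔV]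
    simp only [map_sum, LinearMap.sum_apply, map_smul, LinearMap.smul_apply, Fmap_tmul,
      smul_smul, Finset.smul_sum]
    rw [(sum_swap12_3 (HH.T y) (fun j => HH.T (HH.d2 y j)) (HH.T x) _).symm]
    refine Finset.sum_congr rfl fun j _ => Finset.sum_congr rfl fun p _ => ?_
    rw [(sum_swap12_3 (HH.T z) (fun n => HH.T (HH.d2 z n)) (HH.T x) _).symm]
    refine Finset.sum_congr rfl fun n _ => Finset.sum_congr rfl fun q _ =>
      Finset.sum_congr rfl fun i _ => ?_
    rw [sigma_alpha_symm HH σ hα, HH.symm_mul, LinearEquiv.symm_apply_apply]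
  -- reorder: (i, j,p, n,q) → (i, n,q, j,p)
  have hL2 : mulSigma HH (fun h g => σ h g) (HH.α x) (mulSigma HH (fun h g => σ h g) y z)
      = ∑ i ∈ HH.T x, ∑ n ∈ HH.T z, ∑ q ∈ HH.T (HH.d2 z n),
          ∑ j ∈ HH.T y, ∑ p ∈ HH.T (HH.d2 y j),
          (σ (HH.d1 y j) (HH.d1 z n)
            * σ (HH.α (HH.α (HH.d1 x i))) (HH.mul (HH.d1 (HH.d2 y j) p) (HH.d1 (HH.d2 z n) q)))
            • HH.mul (HH.d2 x i)
                (HH.α.symm (HH.α.symm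
                  (HH.mul (HH.d2 (HH.d2 y j) p) (HH.d2 (HH.d2 z n) q)))) := by
    rw [hL1]
    exact Finset.sum_congr rfl fun i _ => swapblock _ _ _ _ _
  -- substitute Hom-coassociativity in the y-variables
  have hL3 : mulSigma HH (fun h g => σ h g) (HH.α x) (mulSigma HH (fun h g => σ h g) y z)
      = ∑ i ∈ HH.T x, ∑ n ∈ HH.T z, ∑ q ∈ HH.T (HH.d2 z n),
          ∑ j ∈ HH.T y, ∑ j' ∈ HH.T (HH.d1 y j),
          (σ (HH.α.symm (HH.d1 (HH.d1 y j) j')) (HH.d1 z n)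
            * σ (HH.α (HH.α (HH.d1 x i))) (HH.mul (HH.d2 (HH.d1 y j) j') (HH.d1 (HH.d2 z n) q)))
            • HH.mul (HH.d2 x i)
                (HH.α.symm (HH.α.symm
                  (HH.mul (HH.α (HH.d2 y j)) (HH.d2 (HH.d2 z n) q)))) := by
    rw [hL2]
    refine Finset.sum_congr rfl fun i _ => Finset.sum_congr rfl fun n _ =>
      Finset.sum_congr rfl fun q _ => ?_
    have h5 := tri_eq2
      (triMap (σ.flip (HH.d1 z n))
        ((σ (HH.α (HH.α (HH.d1 x i)))) ∘ₗ (HH.mul.flip (HH.d1 (HH.d2 z n) q)))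
        ((HH.mul (HH.d2 x i)) ∘ₗ HH.α.symm.toLinearMap ∘ₗ HH.α.symm.toLinearMap ∘ₗ
          (HH.mul.flip (HH.d2 (HH.d2 z n) q))))
      (HH.T y) (fun j => HH.T (HH.d2 y j)) (fun j => HH.T (HH.d1 y j))
      _ _ _ _ _ _ (coassoc_sum' HH y)
    simpa only [triMap_apply, LinearMap.comp_apply, LinearMap.flip_apply,
      LinearEquiv.coe_toLinearMap] using h5
  -- reorder: (i, n,q, j,j') → (i, j,j', n,q)
  have hL4 : mulSigma HH (fun h g => σ h g) (HH.α x) (mulSigma HH (fun h g => σ h g) y z)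
      = ∑ i ∈ HH.T x, ∑ j ∈ HH.T y, ∑ j' ∈ HH.T (HH.d1 y j),
          ∑ n ∈ HH.T z, ∑ q ∈ HH.T (HH.d2 z n),
          (σ (HH.α.symm (HH.d1 (HH.d1 y j) j')) (HH.d1 z n)
            * σ (HH.α (HH.α (HH.d1 x i))) (HH.mul (HH.d2 (HH.d1 y j) j') (HH.d1 (HH.d2 z n) q)))
            • HH.mul (HH.d2 x i)
                (HH.α.symm (HH.α.symm
                  (HH.mul (HH.α (HH.d2 y j)) (HH.d2 (HH.d2 z n) q)))) := by
    rw [hL3]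
    exact Finset.sum_congr rfl fun i _ => swapblock _ _ _ _ _
  -- substitute Hom-coassociativity in the z-variables
  have hL5 : mulSigma HH (fun h g => σ h g) (HH.α x) (mulSigma HH (fun h g => σ h g) y z)
      = ∑ i ∈ HH.T x, ∑ j ∈ HH.T y, ∑ j' ∈ HH.T (HH.d1 y j),
          ∑ n ∈ HH.T z, ∑ n' ∈ HH.T (HH.d1 z n),
          (σ (HH.α.symm (HH.d1 (HH.d1 y j) j')) (HH.α.symm (HH.d1 (HH.d1 z n) n'))
            * σ (HH.α (HH.α (HH.d1 x i))) (HH.mul (HH.d2 (HH.d1 y j) j') (HH.d2 (HH.d1 z n) n')))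
            • HH.mul (HH.d2 x i)
                (HH.α.symm (HH.α.symm
                  (HH.mul (HH.α (HH.d2 y j)) (HH.α (HH.d2 z n))))) := by
    rw [hL4]
    refine Finset.sum_congr rfl fun i _ => Finset.sum_congr rfl fun j _ =>
      Finset.sum_congr rfl fun j' _ => ?_
    have h5 := tri_eq2
      (triMap (σ (HH.α.symm (HH.d1 (HH.d1 y j) j')))
        ((σ (HH.α (HH.α (HH.d1 x i)))) ∘ₗ (HH.mul (HH.d2 (HH.d1 y j) j')))
        ((HH.mul (HH.d2 x i)) ∘ₗ HH.α.symm.toLinearMap ∘ₗ HH.α.symm.toLinearMap ∘ₗ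
          (HH.mul (HH.α (HH.d2 y j)))))
      (HH.T z) (fun n => HH.T (HH.d2 z n)) (fun n => HH.T (HH.d1 z n))
      _ _ _ _ _ _ (coassoc_sum' HH z)
    simpa only [triMap_apply, LinearMap.comp_apply, LinearMap.flip_apply,
      LinearEquiv.coe_toLinearMap] using h5
  -- simplify using α-invariance of σ and multiplicativity of α
  have hL6 : mulSigma HH (fun h g => σ h g) (HH.α x) (mulSigma HH (fun h g => σ h g) y z)
      = ∑ i ∈ HH.T x, ∑ j ∈ HH.T y, ∑ j' ∈ HH.T (HH.d1 y j),
          ∑ n ∈ HH.T z, ∑ n' ∈ HH.T (HH.d1 z n),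
          (σ (HH.d1 (HH.d1 y j) j') (HH.d1 (HH.d1 z n) n')
            * σ (HH.α (HH.α (HH.d1 x i))) (HH.mul (HH.d2 (HH.d1 y j) j') (HH.d2 (HH.d1 z n) n')))
            • HH.mul (HH.d2 x i) (HH.α.symm (HH.mul (HH.d2 y j) (HH.d2 z n))) := by
    rw [hL5]
    refine Finset.sum_congr rfl fun i _ => Finset.sum_congr rfl fun j _ =>
      Finset.sum_congr rfl fun j' _ => Finset.sum_congr rfl fun n _ =>
      Finset.sum_congr rfl fun n' _ => ?_
    rw [sigma_symm_symm HH σ hα, ← HH.α_mul, LinearEquiv.symm_apply_apply]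
  -- reorder: (i, j, j', n, n') → (i, j, n, j', n')
  have hL7 : mulSigma HH (fun h g => σ h g) (HH.α x) (mulSigma HH (fun h g => σ h g) y z)
      = ∑ i ∈ HH.T x, ∑ j ∈ HH.T y, ∑ n ∈ HH.T z,
          ∑ j' ∈ HH.T (HH.d1 y j), ∑ n' ∈ HH.T (HH.d1 z n),
          (σ (HH.d1 (HH.d1 y j) j') (HH.d1 (HH.d1 z n) n')
            * σ (HH.α (HH.α (HH.d1 x i))) (HH.mul (HH.d2 (HH.d1 y j) j') (HH.d2 (HH.d1 z n) n')))
            • HH.mul (HH.d2 x i) (HH.α.symm (HH.mul (HH.d2 y j) (HH.d2 z n))) := by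
    rw [hL6]
    exact Finset.sum_congr rfl fun i _ => Finset.sum_congr rfl fun j _ => Finset.sum_comm
  -- apply the cocycle equation
  have hL8 : mulSigma HH (fun h g => σ h g) (HH.α x) (mulSigma HH (fun h g => σ h g) y z)
      = ∑ i ∈ HH.T x, ∑ j ∈ HH.T y, ∑ n ∈ HH.T z,
          ∑ i' ∈ HH.T (HH.d1 x i), ∑ j' ∈ HH.T (HH.d1 y j),
          (σ (HH.d1 (HH.d1 x i) i') (HH.d1 (HH.d1 y j) j')
            * σ (HH.mul (HH.d2 (HH.d1 x i) i') (HH.d2 (HH.d1 y j) j')) (HH.α (HH.α (HH.d1 z n))))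
            • HH.mul (HH.d2 x i) (HH.α.symm (HH.mul (HH.d2 y j) (HH.d2 z n))) := by
    rw [hL7]
    refine Finset.sum_congr rfl fun i _ => Finset.sum_congr rfl fun j _ =>
      Finset.sum_congr rfl fun n _ => ?_
    rw [fac_smul, fac_smul, hc' (HH.d1 x i) (HH.d1 y j) (HH.d1 z n)]
  -- right-hand side
  have hR1 : mulSigma HH (fun h g => σ h g) (mulSigma HH (fun h g => σ h g) x y) (HH.α z)
      = ∑ n ∈ HH.T z, ∑ i ∈ HH.T x, ∑ p ∈ HH.T (HH.d2 x i),
          ∑ j ∈ HH.T y, ∑ q ∈ HH.T (HH.d2 y j),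
          (σ (HH.d1 x i) (HH.d1 y j)
            * σ (HH.mul (HH.d1 (HH.d2 x i) p) (HH.d1 (HH.d2 y j) q)) (HH.α (HH.α (HH.d1 z n))))
            • HH.mul
                (HH.α.symm (HH.α.symm
                  (HH.mul (HH.d2 (HH.d2 x i) p) (HH.d2 (HH.d2 y j) q))))
                (HH.d2 z n) := by
    rw [mulSigma_eq_F, HH.comul_α, hΔU]
    simp only [map_sum, LinearMap.sum_apply, map_smul, LinearMap.smul_apply, Fmap_tmul,
      smul_smul, Finset.smul_sum]
    refine Finset.sum_congr rfl fun n _ => Finset.sum_congr rfl fun i _ =>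
      Finset.sum_congr rfl fun p _ => Finset.sum_congr rfl fun j _ =>
      Finset.sum_congr rfl fun q _ => ?_
    rw [sigma_symm_alpha HH σ hα, HH.symm_mul, LinearEquiv.symm_apply_apply, mul_comm]
  -- reorder: (n, i,p, j,q) → (n, j,q, i,p)
  have hR2 : mulSigma HH (fun h g => σ h g) (mulSigma HH (fun h g => σ h g) x y) (HH.α z)
      = ∑ n ∈ HH.T z, ∑ j ∈ HH.T y, ∑ q ∈ HH.T (HH.d2 y j),
          ∑ i ∈ HH.T x, ∑ p ∈ HH.T (HH.d2 x i),
          (σ (HH.d1 x i) (HH.d1 y j)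
            * σ (HH.mul (HH.d1 (HH.d2 x i) p) (HH.d1 (HH.d2 y j) q)) (HH.α (HH.α (HH.d1 z n))))
            • HH.mul
                (HH.α.symm (HH.α.symm
                  (HH.mul (HH.d2 (HH.d2 x i) p) (HH.d2 (HH.d2 y j) q))))
                (HH.d2 z n) := by
    rw [hR1]
    exact Finset.sum_congr rfl fun n _ => swapblock _ _ _ _ _
  -- substitute Hom-coassociativity in the x-variables
  have hR3 : mulSigma HH (fun h g => σ h g) (mulSigma HH (fun h g => σ h g) x y) (HH.α z)
      = ∑ n ∈ HH.T z, ∑ j ∈ HH.T y, ∑ q ∈ HH.T (HH.d2 y j),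
          ∑ i ∈ HH.T x, ∑ i' ∈ HH.T (HH.d1 x i),
          (σ (HH.α.symm (HH.d1 (HH.d1 x i) i')) (HH.d1 y j)
            * σ (HH.mul (HH.d2 (HH.d1 x i) i') (HH.d1 (HH.d2 y j) q)) (HH.α (HH.α (HH.d1 z n))))
            • HH.mul
                (HH.α.symm (HH.α.symm
                  (HH.mul (HH.α (HH.d2 x i)) (HH.d2 (HH.d2 y j) q))))
                (HH.d2 z n) := by
    rw [hR2]
    refine Finset.sum_congr rfl fun n _ => Finset.sum_congr rfl fun j _ =>
      Finset.sum_congr rfl fun q _ => ?_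
    have h5 := tri_eq2
      (triMap (σ.flip (HH.d1 y j))
        ((σ.flip (HH.α (HH.α (HH.d1 z n)))) ∘ₗ (HH.mul.flip (HH.d1 (HH.d2 y j) q)))
        ((HH.mul.flip (HH.d2 z n)) ∘ₗ HH.α.symm.toLinearMap ∘ₗ HH.α.symm.toLinearMap ∘ₗ
          (HH.mul.flip (HH.d2 (HH.d2 y j) q))))
      (HH.T x) (fun i => HH.T (HH.d2 x i)) (fun i => HH.T (HH.d1 x i))
      _ _ _ _ _ _ (coassoc_sum' HH x)
    simpa only [triMap_apply, LinearMap.comp_apply, LinearMap.flip_apply,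
      LinearEquiv.coe_toLinearMap] using h5
  -- reorder: (n, j,q, i,i') → (n, i,i', j,q)
  have hR4 : mulSigma HH (fun h g => σ h g) (mulSigma HH (fun h g => σ h g) x y) (HH.α z)
      = ∑ n ∈ HH.T z, ∑ i ∈ HH.T x, ∑ i' ∈ HH.T (HH.d1 x i),
          ∑ j ∈ HH.T y, ∑ q ∈ HH.T (HH.d2 y j),
          (σ (HH.α.symm (HH.d1 (HH.d1 x i) i')) (HH.d1 y j)
            * σ (HH.mul (HH.d2 (HH.d1 x i) i') (HH.d1 (HH.d2 y j) q)) (HH.α (HH.α (HH.d1 z n))))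
            • HH.mul
                (HH.α.symm (HH.α.symm
                  (HH.mul (HH.α (HH.d2 x i)) (HH.d2 (HH.d2 y j) q))))
                (HH.d2 z n) := by
    rw [hR3]
    exact Finset.sum_congr rfl fun n _ => swapblock _ _ _ _ _
  -- substitute Hom-coassociativity in the y-variables
  have hR5 : mulSigma HH (fun h g => σ h g) (mulSigma HH (fun h g => σ h g) x y) (HH.α z)
      = ∑ n ∈ HH.T z, ∑ i ∈ HH.T x, ∑ i' ∈ HH.T (HH.d1 x i),
          ∑ j ∈ HH.T y, ∑ j' ∈ HH.T (HH.d1 y j),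
          (σ (HH.α.symm (HH.d1 (HH.d1 x i) i')) (HH.α.symm (HH.d1 (HH.d1 y j) j'))
            * σ (HH.mul (HH.d2 (HH.d1 x i) i') (HH.d2 (HH.d1 y j) j')) (HH.α (HH.α (HH.d1 z n))))
            • HH.mul
                (HH.α.symm (HH.α.symm
                  (HH.mul (HH.α (HH.d2 x i)) (HH.α (HH.d2 y j)))))
                (HH.d2 z n) := by
    rw [hR4]
    refine Finset.sum_congr rfl fun n _ => Finset.sum_congr rfl fun i _ =>
      Finset.sum_congr rfl fun i' _ => ?_
    have h5 := tri_eq2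
      (triMap (σ (HH.α.symm (HH.d1 (HH.d1 x i) i')))
        ((σ.flip (HH.α (HH.α (HH.d1 z n)))) ∘ₗ (HH.mul (HH.d2 (HH.d1 x i) i')))
        ((HH.mul.flip (HH.d2 z n)) ∘ₗ HH.α.symm.toLinearMap ∘ₗ HH.α.symm.toLinearMap ∘ₗ
          (HH.mul (HH.α (HH.d2 x i)))))
      (HH.T y) (fun j => HH.T (HH.d2 y j)) (fun j => HH.T (HH.d1 y j))
      _ _ _ _ _ _ (coassoc_sum' HH y)
    simpa only [triMap_apply, LinearMap.comp_apply, LinearMap.flip_apply,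
      LinearEquiv.coe_toLinearMap] using h5
  -- simplify
  have hR6 : mulSigma HH (fun h g => σ h g) (mulSigma HH (fun h g => σ h g) x y) (HH.α z)
      = ∑ n ∈ HH.T z, ∑ i ∈ HH.T x, ∑ i' ∈ HH.T (HH.d1 x i),
          ∑ j ∈ HH.T y, ∑ j' ∈ HH.T (HH.d1 y j),
          (σ (HH.d1 (HH.d1 x i) i') (HH.d1 (HH.d1 y j) j')
            * σ (HH.mul (HH.d2 (HH.d1 x i) i') (HH.d2 (HH.d1 y j) j')) (HH.α (HH.α (HH.d1 z n))))
            • HH.mul (HH.α.symm (HH.mul (HH.d2 x i) (HH.d2 y j))) (HH.d2 z n) := by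
    rw [hR5]
    refine Finset.sum_congr rfl fun n _ => Finset.sum_congr rfl fun i _ =>
      Finset.sum_congr rfl fun i' _ => Finset.sum_congr rfl fun j _ =>
      Finset.sum_congr rfl fun j' _ => ?_
    rw [sigma_symm_symm HH σ hα, ← HH.α_mul, LinearEquiv.symm_apply_apply]
  -- conclude
  rw [hL8, hR6]
  rw [show (∑ i ∈ HH.T x, ∑ j ∈ HH.T y, ∑ n ∈ HH.T z,
        ∑ i' ∈ HH.T (HH.d1 x i), ∑ j' ∈ HH.T (HH.d1 y j),
        (σ (HH.d1 (HH.d1 x i) i') (HH.d1 (HH.d1 y j) j')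
          * σ (HH.mul (HH.d2 (HH.d1 x i) i') (HH.d2 (HH.d1 y j) j')) (HH.α (HH.α (HH.d1 z n))))
          • HH.mul (HH.d2 x i) (HH.α.symm (HH.mul (HH.d2 y j) (HH.d2 z n))))
      = ∑ n ∈ HH.T z, ∑ i ∈ HH.T x, ∑ j ∈ HH.T y,
        ∑ i' ∈ HH.T (HH.d1 x i), ∑ j' ∈ HH.T (HH.d1 y j),
        (σ (HH.d1 (HH.d1 x i) i') (HH.d1 (HH.d1 y j) j')
          * σ (HH.mul (HH.d2 (HH.d1 x i) i') (HH.d2 (HH.d1 y j) j')) (HH.α (HH.α (HH.d1 z n))))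
          • HH.mul (HH.d2 x i) (HH.α.symm (HH.mul (HH.d2 y j) (HH.d2 z n)))
      from sum_swap12_3 (HH.T x) (fun _ => HH.T y) (HH.T z) _]
  refine Finset.sum_congr rfl fun n _ => Finset.sum_congr rfl fun i _ => ?_
  rw [Finset.sum_comm]
  refine Finset.sum_congr rfl fun i' _ => Finset.sum_congr rfl fun j _ =>
    Finset.sum_congr rfl fun j' _ => ?_
  rw [vec_eq]

end Aux5

/-- For a linear functional `σ : H ⊗ H → k` with `σ∘(α⊗α) = σ`,
the deformed multiplication `h ·_σ g = σ(h₁,g₁)α⁻¹(h₂g₂)` is Hom-associative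
(`α(h)·(g·l) = (h·g)·α(l)`) if and only if `σ` satisfies the left Hom-2-cocycle
equation `σ(l₁,k₁)σ(α²(h), l₂k₂) = σ(h₁,l₁)σ(h₂l₂, α²(k))`. -/
theorem mulSigma_homAssoc_iff_leftCocycle
    {k : Type u} {H : Type v} [Field k] [AddCommGroup H] [Module k H]
    (HH : HomHopf k H) (σ : H →ₗ[k] H →ₗ[k] k)
    (hα : AlphaInvariant2 HH (fun h g => σ h g)) :
    (∀ x y z : H,
        mulSigma HH (fun h g => σ h g) (HH.α x) (mulSigma HH (fun h g => σ h g) y z)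
          = mulSigma HH (fun h g => σ h g) (mulSigma HH (fun h g => σ h g) x y) (HH.α z))
    ↔ LeftCocycleEq HH (fun h g => σ h g) := by
  exact ⟨fun h => mulSigma_forward HH σ hα h, fun hcoc x y z => mulSigma_backward HH σ hα hcoc x y z⟩
end

section
/- Let (H,α) be a Hom-bialgebra and σ: H⊗H → k normalized (σ(1,h) = σ(h,1) = ε(h)) and convolution invertible with σ∘(α⊗α) = σ. Then σ is a left Hom-2-cocycle if and only if its convolution inverse σ⁻¹ is a right Hom-2-cocycle, i.e. σ⁻¹(α²(h), l₁k₁)σ⁻¹(l₂,k₂) = σ⁻¹(h₁l₁, α²(k))σ⁻¹(h₂,l₂). -/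
open scoped TensorProduct BigOperators

universe u v

section Aux
variable {k : Type u} {H : Type v} [Field k] [AddCommGroup H] [Module k H] (HH : HomHopf k H)

open TensorProduct LinearMap

lemma HomHopf.sum_eq {ι : Type*} (B : H →ₗ[k] H →ₗ[k] k) {x : H} {s : Finset ι} {u v : ι → H}
    (h : HH.comul x = ∑ i ∈ s, u i ⊗ₜ[k] v i) :
    ∑ i ∈ HH.T x, B (HH.d1 x i) (HH.d2 x i) = ∑ i ∈ s, B (u i) (v i) := by
  have h2 := (HH.repr x).symm.trans h
  have h3 := congrArg (TensorProduct.lift B) h2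
  simpa [map_sum] using h3

lemma HomHopf.coassoc' (F : H →ₗ[k] H →ₗ[k] H →ₗ[k] k) (x : H) :
    ∑ i ∈ HH.T x, ∑ p ∈ HH.T (HH.d1 x i),
        F (HH.d1 (HH.d1 x i) p) (HH.d2 (HH.d1 x i) p) (HH.α (HH.d2 x i))
      = ∑ i ∈ HH.T x, ∑ p ∈ HH.T (HH.d2 x i),
        F (HH.α (HH.d1 x i)) (HH.d1 (HH.d2 x i) p) (HH.d2 (HH.d2 x i) p) := by
  have h := HH.hom_coassoc x
  set G : H ⊗[k] (H ⊗[k] H) →ₗ[k] k :=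
    TensorProduct.lift ((TensorProduct.lift.equiv (RingHom.id k) H H k).toLinearMap ∘ₗ F) with hG
  have h3 := congrArg G h
  simpa [hG, HH.repr, map_sum, TensorProduct.sum_tmul, TensorProduct.tmul_sum,
    TensorProduct.assoc_tmul, TensorProduct.lift.tmul] using h3


/-- Bundled convolution of trilinear forms, level of tensor squares. -/
noncomputable def Phi3 (f g : H →ₗ[k] H →ₗ[k] H →ₗ[k] k) :
    (H ⊗[k] H) →ₗ[k] (H ⊗[k] H) →ₗ[k] (H ⊗[k] H) →ₗ[k] k :=
  TensorProduct.lift <| LinearMap.mk₂' k k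
    (fun a b => TensorProduct.lift <| LinearMap.mk₂' k k
      (fun c d => TensorProduct.lift <| LinearMap.mk₂' k k
        (fun e e' => f a c e * g b d e')
        (by intros; simp [map_add, LinearMap.add_apply, add_mul])
        (by intros; simp [map_smul, LinearMap.smul_apply, smul_eq_mul]; ring)
        (by intros; simp [map_add, mul_add])
        (by intros; simp [map_smul, smul_eq_mul]; ring))
      (by intros; ext u v; simp [TensorProduct.lift.tmul, map_add, LinearMap.add_apply, add_mul])
      (by intros; ext u v; simp [TensorProduct.lift.tmul, map_smul, LinearMap.smul_apply, smul_eq_mul]; ring)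
      (by intros; ext u v; simp [TensorProduct.lift.tmul, map_add, LinearMap.add_apply, mul_add])
      (by intros; ext u v; simp [TensorProduct.lift.tmul, map_smul, LinearMap.smul_apply, smul_eq_mul]; ring))
    (by intros; ext u v u' v'; simp [TensorProduct.lift.tmul, map_add, LinearMap.add_apply, add_mul])
    (by intros; ext u v u' v'; simp [TensorProduct.lift.tmul, map_smul, LinearMap.smul_apply, smul_eq_mul]; ring)
    (by intros; ext u v u' v'; simp [TensorProduct.lift.tmul, map_add, LinearMap.add_apply, mul_add])
    (by intros; ext u v u' v'; simp [TensorProduct.lift.tmul, map_smul, LinearMap.smul_apply, smul_eq_mul]; ring)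

/-- Bundled convolution product of trilinear forms. -/
noncomputable def HomHopf.Cb (f g : H →ₗ[k] H →ₗ[k] H →ₗ[k] k) :
    H →ₗ[k] H →ₗ[k] H →ₗ[k] k :=
  (((Phi3 f g).comp HH.comul).compl₂ HH.comul).compr₂ (LinearMap.lcomp k k HH.comul)

lemma HomHopf.Cb_apply (f g : H →ₗ[k] H →ₗ[k] H →ₗ[k] k) (x y z : H) :
    HH.Cb f g x y z
      = ∑ i ∈ HH.T x, ∑ j ∈ HH.T y, ∑ n ∈ HH.T z,
          f (HH.d1 x i) (HH.d1 y j) (HH.d1 z n) * g (HH.d2 x i) (HH.d2 y j) (HH.d2 z n) := by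
  simp [HomHopf.Cb, Phi3, HH.repr, map_sum, LinearMap.sum_apply,
    TensorProduct.lift.tmul, LinearMap.mk₂'_apply]
  rw [Finset.sum_comm]


noncomputable def Phi2 (f g : H →ₗ[k] H →ₗ[k] k) :
    (H ⊗[k] H) →ₗ[k] (H ⊗[k] H) →ₗ[k] k :=
  TensorProduct.lift <| LinearMap.mk₂' k k
    (fun a b => TensorProduct.lift <| LinearMap.mk₂' k k
      (fun c d => f a c * g b d)
      (by intros; simp [map_add, LinearMap.add_apply, add_mul])
      (by intros; simp [map_smul, LinearMap.smul_apply, smul_eq_mul]; ring)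
      (by intros; simp [map_add, mul_add])
      (by intros; simp [map_smul, smul_eq_mul]; ring))
    (by intros; ext u v; simp [TensorProduct.lift.tmul, map_add, LinearMap.add_apply, add_mul])
    (by intros; ext u v; simp [TensorProduct.lift.tmul, map_smul, LinearMap.smul_apply, smul_eq_mul]; ring)
    (by intros; ext u v; simp [TensorProduct.lift.tmul, map_add, LinearMap.add_apply, mul_add])
    (by intros; ext u v; simp [TensorProduct.lift.tmul, map_smul, LinearMap.smul_apply, smul_eq_mul]; ring)

noncomputable def HomHopf.Cb2 (f g : H →ₗ[k] H →ₗ[k] k) : H →ₗ[k] H →ₗ[k] k :=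
  ((Phi2 f g).comp HH.comul).compl₂ HH.comul

lemma HomHopf.Cb2_apply (f g : H →ₗ[k] H →ₗ[k] k) (x y : H) :
    HH.Cb2 f g x y
      = ∑ i ∈ HH.T x, ∑ j ∈ HH.T y,
          f (HH.d1 x i) (HH.d1 y j) * g (HH.d2 x i) (HH.d2 y j) := by
  simp [HomHopf.Cb2, Phi2, HH.repr, map_sum, LinearMap.sum_apply,
    TensorProduct.lift.tmul, LinearMap.mk₂'_apply]
  rw [Finset.sum_comm]

lemma HomHopf.sum_counit_left (φ : H →ₗ[k] k) (z : H) :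
    ∑ n ∈ HH.T z, HH.counit (HH.d1 z n) * φ (HH.d2 z n) = φ (HH.α z) := by
  rw [← HH.counit_left z, map_sum]
  simp [smul_eq_mul]

lemma HomHopf.sum_counit_right (φ : H →ₗ[k] k) (z : H) :
    ∑ n ∈ HH.T z, φ (HH.d1 z n) * HH.counit (HH.d2 z n) = φ (HH.α z) := by
  rw [← HH.counit_right z, map_sum]
  simp [smul_eq_mul, mul_comm]


noncomputable def HomHopf.eps2 : H →ₗ[k] H →ₗ[k] k := HH.counit.smulRight HH.counit

noncomputable def HomHopf.eps3 : H →ₗ[k] H →ₗ[k] H →ₗ[k] k :=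
  HH.counit.smulRight HH.eps2

@[simp] lemma HomHopf.eps2_apply (a b : H) : HH.eps2 a b = HH.counit a * HH.counit b := by
  simp [HomHopf.eps2, smul_eq_mul]

@[simp] lemma HomHopf.eps3_apply (a b c : H) :
    HH.eps3 a b c = HH.counit a * (HH.counit b * HH.counit c) := by
  simp [HomHopf.eps3, HomHopf.eps2, smul_eq_mul]

noncomputable def HomHopf.sh3 (f : H →ₗ[k] H →ₗ[k] H →ₗ[k] k) :
    H →ₗ[k] H →ₗ[k] H →ₗ[k] k :=
  ((f.comp HH.α.toLinearMap).compl₂ HH.α.toLinearMap).compr₂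
    (LinearMap.lcomp k k HH.α.toLinearMap)

@[simp] lemma HomHopf.sh3_apply (f : H →ₗ[k] H →ₗ[k] H →ₗ[k] k) (x y z : H) :
    HH.sh3 f x y z = f (HH.α x) (HH.α y) (HH.α z) := rfl

noncomputable def HomHopf.sh3Inv (f : H →ₗ[k] H →ₗ[k] H →ₗ[k] k) :
    H →ₗ[k] H →ₗ[k] H →ₗ[k] k :=
  ((f.comp HH.α.symm.toLinearMap).compl₂ HH.α.symm.toLinearMap).compr₂
    (LinearMap.lcomp k k HH.α.symm.toLinearMap)

@[simp] lemma HomHopf.sh3Inv_apply (f : H →ₗ[k] H →ₗ[k] H →ₗ[k] k) (x y z : H) :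
    HH.sh3Inv f x y z = f (HH.α.symm x) (HH.α.symm y) (HH.α.symm z) := rfl

noncomputable def HomHopf.sh2 (f : H →ₗ[k] H →ₗ[k] k) : H →ₗ[k] H →ₗ[k] k :=
  (f.comp HH.α.toLinearMap).compl₂ HH.α.toLinearMap

@[simp] lemma HomHopf.sh2_apply (f : H →ₗ[k] H →ₗ[k] k) (x y : H) :
    HH.sh2 f x y = f (HH.α x) (HH.α y) := rfl

noncomputable def HomHopf.sh2Inv (f : H →ₗ[k] H →ₗ[k] k) : H →ₗ[k] H →ₗ[k] k :=
  (f.comp HH.α.symm.toLinearMap).compl₂ HH.α.symm.toLinearMap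

@[simp] lemma HomHopf.sh2Inv_apply (f : H →ₗ[k] H →ₗ[k] k) (x y : H) :
    HH.sh2Inv f x y = f (HH.α.symm x) (HH.α.symm y) := rfl

lemma HomHopf.unit3_left (f : H →ₗ[k] H →ₗ[k] H →ₗ[k] k) (x y z : H) :
    HH.Cb HH.eps3 f x y z = f (HH.α x) (HH.α y) (HH.α z) := by
  rw [HH.Cb_apply]
  have hz : ∀ a b : H,
      ∑ n ∈ HH.T z, HH.counit (HH.d1 z n) * f a b (HH.d2 z n) = f a b (HH.α z) :=
    fun a b => HH.sum_counit_left (f a b) z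
  have hy : ∀ a : H,
      ∑ j ∈ HH.T y, HH.counit (HH.d1 y j) * f a (HH.d2 y j) (HH.α z)
        = f a (HH.α y) (HH.α z) :=
    fun a => HH.sum_counit_left ((f a).flip (HH.α z)) y
  have hx : ∑ i ∈ HH.T x, HH.counit (HH.d1 x i) * f (HH.d2 x i) (HH.α y) (HH.α z)
      = f (HH.α x) (HH.α y) (HH.α z) :=
    HH.sum_counit_left ((f.flip (HH.α y)).flip (HH.α z)) x
  calc ∑ i ∈ HH.T x, ∑ j ∈ HH.T y, ∑ n ∈ HH.T z,
        HH.eps3 (HH.d1 x i) (HH.d1 y j) (HH.d1 z n) * f (HH.d2 x i) (HH.d2 y j) (HH.d2 z n)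
      = ∑ i ∈ HH.T x, HH.counit (HH.d1 x i) *
          ∑ j ∈ HH.T y, HH.counit (HH.d1 y j) *
            ∑ n ∈ HH.T z, HH.counit (HH.d1 z n)
              * f (HH.d2 x i) (HH.d2 y j) (HH.d2 z n) := by
        simp only [Finset.mul_sum]
        refine Finset.sum_congr rfl fun i _ => Finset.sum_congr rfl fun j _ =>
          Finset.sum_congr rfl fun n _ => ?_
        simp only [HH.eps3_apply]; ring
    _ = f (HH.α x) (HH.α y) (HH.α z) := by
        simp only [hz]
        rw [← hx]
        refine Finset.sum_congr rfl fun i _ => ?_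
        rw [hy]

lemma HomHopf.unit3_right (f : H →ₗ[k] H →ₗ[k] H →ₗ[k] k) (x y z : H) :
    HH.Cb f HH.eps3 x y z = f (HH.α x) (HH.α y) (HH.α z) := by
  rw [HH.Cb_apply]
  have hz : ∀ a b : H,
      ∑ n ∈ HH.T z, f a b (HH.d1 z n) * HH.counit (HH.d2 z n) = f a b (HH.α z) :=
    fun a b => HH.sum_counit_right (f a b) z
  have hy : ∀ a : H,
      ∑ j ∈ HH.T y, f a (HH.d1 y j) (HH.α z) * HH.counit (HH.d2 y j)
        = f a (HH.α y) (HH.α z) :=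
    fun a => HH.sum_counit_right ((f a).flip (HH.α z)) y
  have hx : ∑ i ∈ HH.T x, f (HH.d1 x i) (HH.α y) (HH.α z) * HH.counit (HH.d2 x i)
      = f (HH.α x) (HH.α y) (HH.α z) :=
    HH.sum_counit_right ((f.flip (HH.α y)).flip (HH.α z)) x
  calc ∑ i ∈ HH.T x, ∑ j ∈ HH.T y, ∑ n ∈ HH.T z,
        f (HH.d1 x i) (HH.d1 y j) (HH.d1 z n) * HH.eps3 (HH.d2 x i) (HH.d2 y j) (HH.d2 z n)
      = ∑ i ∈ HH.T x, (∑ j ∈ HH.T y, (∑ n ∈ HH.T z,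
            f (HH.d1 x i) (HH.d1 y j) (HH.d1 z n) * HH.counit (HH.d2 z n))
              * HH.counit (HH.d2 y j)) * HH.counit (HH.d2 x i) := by
        simp only [Finset.sum_mul]
        refine Finset.sum_congr rfl fun i _ => Finset.sum_congr rfl fun j _ =>
          Finset.sum_congr rfl fun n _ => ?_
        simp only [HH.eps3_apply]; ring
    _ = f (HH.α x) (HH.α y) (HH.α z) := by
        simp only [hz]
        rw [← hx]
        refine Finset.sum_congr rfl fun i _ => ?_
        rw [hy]

lemma HomHopf.unit2_left (f : H →ₗ[k] H →ₗ[k] k) (x y : H) :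
    HH.Cb2 HH.eps2 f x y = f (HH.α x) (HH.α y) := by
  rw [HH.Cb2_apply]
  have hy : ∀ a : H,
      ∑ j ∈ HH.T y, HH.counit (HH.d1 y j) * f a (HH.d2 y j) = f a (HH.α y) :=
    fun a => HH.sum_counit_left (f a) y
  have hx : ∑ i ∈ HH.T x, HH.counit (HH.d1 x i) * f (HH.d2 x i) (HH.α y)
      = f (HH.α x) (HH.α y) := HH.sum_counit_left (f.flip (HH.α y)) x
  calc ∑ i ∈ HH.T x, ∑ j ∈ HH.T y,
        HH.eps2 (HH.d1 x i) (HH.d1 y j) * f (HH.d2 x i) (HH.d2 y j)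
      = ∑ i ∈ HH.T x, HH.counit (HH.d1 x i) *
          ∑ j ∈ HH.T y, HH.counit (HH.d1 y j) * f (HH.d2 x i) (HH.d2 y j) := by
        simp only [Finset.mul_sum]
        refine Finset.sum_congr rfl fun i _ => Finset.sum_congr rfl fun j _ => ?_
        simp only [HH.eps2_apply]; ring
    _ = f (HH.α x) (HH.α y) := by
        simp only [hy]; exact hx

lemma HomHopf.unit2_right (f : H →ₗ[k] H →ₗ[k] k) (x y : H) :
    HH.Cb2 f HH.eps2 x y = f (HH.α x) (HH.α y) := by
  rw [HH.Cb2_apply]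
  have hy : ∀ a : H,
      ∑ j ∈ HH.T y, f a (HH.d1 y j) * HH.counit (HH.d2 y j) = f a (HH.α y) :=
    fun a => HH.sum_counit_right (f a) y
  have hx : ∑ i ∈ HH.T x, f (HH.d1 x i) (HH.α y) * HH.counit (HH.d2 x i)
      = f (HH.α x) (HH.α y) := HH.sum_counit_right (f.flip (HH.α y)) x
  calc ∑ i ∈ HH.T x, ∑ j ∈ HH.T y,
        f (HH.d1 x i) (HH.d1 y j) * HH.eps2 (HH.d2 x i) (HH.d2 y j)
      = ∑ i ∈ HH.T x, (∑ j ∈ HH.T y,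
          f (HH.d1 x i) (HH.d1 y j) * HH.counit (HH.d2 y j)) * HH.counit (HH.d2 x i) := by
        simp only [Finset.sum_mul]
        refine Finset.sum_congr rfl fun i _ => Finset.sum_congr rfl fun j _ => ?_
        simp only [HH.eps2_apply]; ring
    _ = f (HH.α x) (HH.α y) := by
        simp only [hy]; exact hx


noncomputable def mk3 (p q r : H →ₗ[k] k) : H →ₗ[k] H →ₗ[k] H →ₗ[k] k :=
  p.smulRight (q.smulRight r)

@[simp] lemma mk3_apply (p q r : H →ₗ[k] k) (a b c : H) :
    mk3 p q r a b c = p a * (q b * r c) := by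
  simp [mk3, smul_eq_mul]

noncomputable def ap23 (f : H →ₗ[k] H →ₗ[k] H →ₗ[k] k) (u v : H) : H →ₗ[k] k :=
  (f.flip u).flip v

@[simp] lemma ap23_apply (f : H →ₗ[k] H →ₗ[k] H →ₗ[k] k) (u v a : H) :
    ap23 f u v a = f a u v := rfl

section Reorder
variable {A B C D E F : Type v} {R : Type u} [AddCommMonoid R]

lemma sum_reorder1 (sa : Finset A) (sb : Finset B) (sc : Finset C)
    (sd : A → Finset D) (se : B → Finset E) (sf : C → Finset F)
    (t : A → B → C → D → E → F → R) :
    (∑ a ∈ sa, ∑ b ∈ sb, ∑ c ∈ sc, ∑ d ∈ sd a, ∑ e ∈ se b, ∑ f ∈ sf c, t a b c d e f)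
      = ∑ a ∈ sa, ∑ d ∈ sd a, ∑ b ∈ sb, ∑ e ∈ se b, ∑ c ∈ sc, ∑ f ∈ sf c,
          t a b c d e f := by
  refine Finset.sum_congr rfl fun a _ => ?_
  calc (∑ b ∈ sb, ∑ c ∈ sc, ∑ d ∈ sd a, ∑ e ∈ se b, ∑ f ∈ sf c, t a b c d e f)
      = ∑ b ∈ sb, ∑ d ∈ sd a, ∑ c ∈ sc, ∑ e ∈ se b, ∑ f ∈ sf c, t a b c d e f :=
        Finset.sum_congr rfl fun b _ => Finset.sum_comm
    _ = ∑ d ∈ sd a, ∑ b ∈ sb, ∑ c ∈ sc, ∑ e ∈ se b, ∑ f ∈ sf c, t a b c d e f :=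
        Finset.sum_comm
    _ = ∑ d ∈ sd a, ∑ b ∈ sb, ∑ e ∈ se b, ∑ c ∈ sc, ∑ f ∈ sf c, t a b c d e f :=
        Finset.sum_congr rfl fun d _ => Finset.sum_congr rfl fun b _ => Finset.sum_comm

lemma sum_reorder2 (sa : Finset A) (sb : Finset B) (sc : Finset C)
    (sd : A → Finset D) (se : B → Finset E) (sf : C → Finset F)
    (t : A → B → C → D → E → F → R) :
    (∑ a ∈ sa, ∑ d ∈ sd a, ∑ b ∈ sb, ∑ e ∈ se b, ∑ c ∈ sc, ∑ f ∈ sf c, t a b c d e f)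
      = ∑ b ∈ sb, ∑ e ∈ se b, ∑ a ∈ sa, ∑ d ∈ sd a, ∑ c ∈ sc, ∑ f ∈ sf c,
          t a b c d e f := by
  calc (∑ a ∈ sa, ∑ d ∈ sd a, ∑ b ∈ sb, ∑ e ∈ se b, ∑ c ∈ sc, ∑ f ∈ sf c, t a b c d e f)
      = ∑ a ∈ sa, ∑ b ∈ sb, ∑ d ∈ sd a, ∑ e ∈ se b, ∑ c ∈ sc, ∑ f ∈ sf c, t a b c d e f :=
        Finset.sum_congr rfl fun a _ => Finset.sum_comm
    _ = ∑ b ∈ sb, ∑ a ∈ sa, ∑ d ∈ sd a, ∑ e ∈ se b, ∑ c ∈ sc, ∑ f ∈ sf c, t a b c d e f :=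
        Finset.sum_comm
    _ = ∑ b ∈ sb, ∑ a ∈ sa, ∑ e ∈ se b, ∑ d ∈ sd a, ∑ c ∈ sc, ∑ f ∈ sf c, t a b c d e f :=
        Finset.sum_congr rfl fun b _ => Finset.sum_congr rfl fun a _ => Finset.sum_comm
    _ = ∑ b ∈ sb, ∑ e ∈ se b, ∑ a ∈ sa, ∑ d ∈ sd a, ∑ c ∈ sc, ∑ f ∈ sf c, t a b c d e f :=
        Finset.sum_congr rfl fun b _ => Finset.sum_comm

lemma sum_block_swap (sa : Finset A) (sd : A → Finset D) (sb : Finset B)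
    (se : B → Finset E) (u : A → D → B → E → R) :
    (∑ a ∈ sa, ∑ d ∈ sd a, ∑ b ∈ sb, ∑ e ∈ se b, u a d b e)
      = ∑ b ∈ sb, ∑ e ∈ se b, ∑ a ∈ sa, ∑ d ∈ sd a, u a d b e := by
  calc (∑ a ∈ sa, ∑ d ∈ sd a, ∑ b ∈ sb, ∑ e ∈ se b, u a d b e)
      = ∑ a ∈ sa, ∑ b ∈ sb, ∑ d ∈ sd a, ∑ e ∈ se b, u a d b e :=
        Finset.sum_congr rfl fun a _ => Finset.sum_comm
    _ = ∑ b ∈ sb, ∑ a ∈ sa, ∑ d ∈ sd a, ∑ e ∈ se b, u a d b e := Finset.sum_comm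
    _ = ∑ b ∈ sb, ∑ a ∈ sa, ∑ e ∈ se b, ∑ d ∈ sd a, u a d b e :=
        Finset.sum_congr rfl fun b _ => Finset.sum_congr rfl fun a _ => Finset.sum_comm
    _ = ∑ b ∈ sb, ∑ e ∈ se b, ∑ a ∈ sa, ∑ d ∈ sd a, u a d b e :=
        Finset.sum_congr rfl fun b _ => Finset.sum_comm

lemma sum_reorder3 (sa : Finset A) (sb : Finset B) (sc : Finset C)
    (sd : A → Finset D) (se : B → Finset E) (sf : C → Finset F)
    (t : A → B → C → D → E → F → R) :
    (∑ b ∈ sb, ∑ e ∈ se b, ∑ a ∈ sa, ∑ d ∈ sd a, ∑ c ∈ sc, ∑ f ∈ sf c, t a b c d e f)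
      = ∑ c ∈ sc, ∑ f ∈ sf c, ∑ a ∈ sa, ∑ d ∈ sd a, ∑ b ∈ sb, ∑ e ∈ se b,
          t a b c d e f := by
  calc (∑ b ∈ sb, ∑ e ∈ se b, ∑ a ∈ sa, ∑ d ∈ sd a, ∑ c ∈ sc, ∑ f ∈ sf c, t a b c d e f)
      = ∑ b ∈ sb, ∑ e ∈ se b, ∑ c ∈ sc, ∑ f ∈ sf c, ∑ a ∈ sa, ∑ d ∈ sd a,
          t a b c d e f :=
        Finset.sum_congr rfl fun b _ => Finset.sum_congr rfl fun e _ =>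
          sum_block_swap sa sd sc sf _
    _ = ∑ c ∈ sc, ∑ f ∈ sf c, ∑ b ∈ sb, ∑ e ∈ se b, ∑ a ∈ sa, ∑ d ∈ sd a,
          t a b c d e f := sum_block_swap sb se sc sf _
    _ = ∑ c ∈ sc, ∑ f ∈ sf c, ∑ a ∈ sa, ∑ d ∈ sd a, ∑ b ∈ sb, ∑ e ∈ se b,
          t a b c d e f :=
        Finset.sum_congr rfl fun c _ => Finset.sum_congr rfl fun fx _ =>
          sum_block_swap sb se sa sd _

lemma sum_reorder4 (sa : Finset A) (sb : Finset B) (sc : Finset C)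
    (sd : A → Finset D) (se : B → Finset E) (sf : C → Finset F)
    (t : A → B → C → D → E → F → R) :
    (∑ c ∈ sc, ∑ f ∈ sf c, ∑ a ∈ sa, ∑ d ∈ sd a, ∑ b ∈ sb, ∑ e ∈ se b, t a b c d e f)
      = ∑ a ∈ sa, ∑ b ∈ sb, ∑ c ∈ sc, ∑ d ∈ sd a, ∑ e ∈ se b, ∑ f ∈ sf c,
          t a b c d e f := by
  calc (∑ c ∈ sc, ∑ f ∈ sf c, ∑ a ∈ sa, ∑ d ∈ sd a, ∑ b ∈ sb, ∑ e ∈ se b, t a b c d e f)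
      = ∑ a ∈ sa, ∑ d ∈ sd a, ∑ c ∈ sc, ∑ f ∈ sf c, ∑ b ∈ sb, ∑ e ∈ se b,
          t a b c d e f := sum_block_swap sc sf sa sd _
    _ = ∑ a ∈ sa, ∑ d ∈ sd a, ∑ b ∈ sb, ∑ e ∈ se b, ∑ c ∈ sc, ∑ f ∈ sf c,
          t a b c d e f :=
        Finset.sum_congr rfl fun a _ => Finset.sum_congr rfl fun d _ =>
          sum_block_swap sc sf sb se _
    _ = ∑ a ∈ sa, ∑ b ∈ sb, ∑ c ∈ sc, ∑ d ∈ sd a, ∑ e ∈ se b, ∑ f ∈ sf c,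
          t a b c d e f := (sum_reorder1 sa sb sc sd se sf t).symm

end Reorder

noncomputable def ap13 (f : H →ₗ[k] H →ₗ[k] H →ₗ[k] k) (u w : H) : H →ₗ[k] k :=
  (f u).flip w

@[simp] lemma ap13_apply (f : H →ₗ[k] H →ₗ[k] H →ₗ[k] k) (u w b : H) :
    ap13 f u w b = f u b w := rfl

set_option maxHeartbeats 1600000 in
lemma HomHopf.assoc3 (f g e : H →ₗ[k] H →ₗ[k] H →ₗ[k] k) (x y z : H) :
    HH.Cb (HH.Cb f g) e x y z = HH.Cb (HH.sh3 f) (HH.Cb g (HH.sh3Inv e)) x y z := by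
  simp only [HH.Cb_apply, HomHopf.sh3_apply, HomHopf.sh3Inv_apply]
  simp only [Finset.sum_mul, Finset.mul_sum, mul_assoc]
  rw [sum_reorder1]
  conv_rhs => rw [← sum_reorder4]
  -- x-step
  have h1 := HH.coassoc' (∑ j ∈ HH.T y, ∑ q ∈ HH.T (HH.d1 y j), ∑ n ∈ HH.T z,
    ∑ r ∈ HH.T (HH.d1 z n),
      mk3 (ap23 f (HH.d1 (HH.d1 y j) q) (HH.d1 (HH.d1 z n) r))
        (ap23 g (HH.d2 (HH.d1 y j) q) (HH.d2 (HH.d1 z n) r))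
        (ap23 (e.comp HH.α.symm.toLinearMap) (HH.d2 y j) (HH.d2 z n))) x
  simp only [LinearMap.sum_apply, mk3_apply, ap23_apply, LinearMap.comp_apply,
    LinearEquiv.coe_coe, LinearEquiv.symm_apply_apply] at h1
  rw [h1, sum_reorder2]
  -- y-step
  have h2 := HH.coassoc' (∑ i ∈ HH.T x, ∑ p ∈ HH.T (HH.d2 x i), ∑ n ∈ HH.T z,
    ∑ r ∈ HH.T (HH.d1 z n),
      mk3 (ap13 f (HH.α (HH.d1 x i)) (HH.d1 (HH.d1 z n) r))
        (ap13 g (HH.d1 (HH.d2 x i) p) (HH.d2 (HH.d1 z n) r))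
        (ap13 (e.compl₂ HH.α.symm.toLinearMap) (HH.α.symm (HH.d2 (HH.d2 x i) p))
          (HH.d2 z n))) y
  simp only [LinearMap.sum_apply, mk3_apply, ap13_apply, LinearMap.compl₂_apply,
    LinearEquiv.coe_coe, LinearEquiv.symm_apply_apply] at h2
  rw [h2, sum_reorder3]
  -- z-step
  have h3 := HH.coassoc' (∑ i ∈ HH.T x, ∑ p ∈ HH.T (HH.d2 x i), ∑ j ∈ HH.T y,
    ∑ q ∈ HH.T (HH.d2 y j),
      mk3 (f (HH.α (HH.d1 x i)) (HH.α (HH.d1 y j)))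
        (g (HH.d1 (HH.d2 x i) p) (HH.d1 (HH.d2 y j) q))
        ((e (HH.α.symm (HH.d2 (HH.d2 x i) p)) (HH.α.symm (HH.d2 (HH.d2 y j) q))).comp
          HH.α.symm.toLinearMap)) z
  simp only [LinearMap.sum_apply, mk3_apply, LinearMap.comp_apply,
    LinearEquiv.coe_coe, LinearEquiv.symm_apply_apply] at h3
  rw [h3]


noncomputable def mk2 (p q : H →ₗ[k] k) : H →ₗ[k] H →ₗ[k] k := p.smulRight q

@[simp] lemma mk2_apply (p q : H →ₗ[k] k) (a b : H) : mk2 p q a b = p a * q b := by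
  simp [mk2, smul_eq_mul]

lemma sum_rot3 {A B C : Type v} {R : Type u} [AddCommMonoid R]
    (sa : Finset A) (sb : Finset B) (sc : Finset C) (t : A → B → C → R) :
    (∑ a ∈ sa, ∑ b ∈ sb, ∑ c ∈ sc, t a b c)
      = ∑ c ∈ sc, ∑ a ∈ sa, ∑ b ∈ sb, t a b c := by
  calc (∑ a ∈ sa, ∑ b ∈ sb, ∑ c ∈ sc, t a b c)
      = ∑ a ∈ sa, ∑ c ∈ sc, ∑ b ∈ sb, t a b c :=
        Finset.sum_congr rfl fun a _ => Finset.sum_comm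
    _ = ∑ c ∈ sc, ∑ a ∈ sa, ∑ b ∈ sb, t a b c := Finset.sum_comm

lemma sum_reorder1' {A B D E : Type v} {R : Type u} [AddCommMonoid R]
    (sa : Finset A) (sb : Finset B) (sd : A → Finset D) (se : B → Finset E)
    (t : A → B → D → E → R) :
    (∑ a ∈ sa, ∑ b ∈ sb, ∑ d ∈ sd a, ∑ e ∈ se b, t a b d e)
      = ∑ a ∈ sa, ∑ d ∈ sd a, ∑ b ∈ sb, ∑ e ∈ se b, t a b d e :=
  Finset.sum_congr rfl fun a _ => Finset.sum_comm

set_option maxHeartbeats 1600000 in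
lemma HomHopf.assoc2 (f g e : H →ₗ[k] H →ₗ[k] k) (x y : H) :
    HH.Cb2 (HH.Cb2 f g) e x y = HH.Cb2 (HH.sh2 f) (HH.Cb2 g (HH.sh2Inv e)) x y := by
  simp only [HH.Cb2_apply, HomHopf.sh2_apply, HomHopf.sh2Inv_apply]
  simp only [Finset.sum_mul, Finset.mul_sum, mul_assoc]
  rw [sum_reorder1']
  conv_rhs => rw [sum_reorder1', ← sum_block_swap]
  have h1 := HH.coassoc' (∑ j ∈ HH.T y, ∑ q ∈ HH.T (HH.d1 y j),
      mk3 (f.flip (HH.d1 (HH.d1 y j) q)) (g.flip (HH.d2 (HH.d1 y j) q))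
        ((e.comp HH.α.symm.toLinearMap).flip (HH.d2 y j))) x
  simp only [LinearMap.sum_apply, mk3_apply, LinearMap.flip_apply, LinearMap.comp_apply,
    LinearEquiv.coe_coe, LinearEquiv.symm_apply_apply] at h1
  rw [h1, sum_block_swap]
  have h2 := HH.coassoc' (∑ i ∈ HH.T x, ∑ p ∈ HH.T (HH.d2 x i),
      mk3 (f (HH.α (HH.d1 x i))) (g (HH.d1 (HH.d2 x i) p))
        ((e (HH.α.symm (HH.d2 (HH.d2 x i) p))).comp HH.α.symm.toLinearMap)) y
  simp only [LinearMap.sum_apply, mk3_apply, LinearMap.comp_apply,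
    LinearEquiv.coe_coe, LinearEquiv.symm_apply_apply] at h2
  rw [h2]

lemma HomHopf.Cb_alpha (f g : H →ₗ[k] H →ₗ[k] H →ₗ[k] k) (x y z : H) :
    HH.Cb f g (HH.α x) (HH.α y) (HH.α z)
      = ∑ i ∈ HH.T x, ∑ j ∈ HH.T y, ∑ n ∈ HH.T z,
          f (HH.α (HH.d1 x i)) (HH.α (HH.d1 y j)) (HH.α (HH.d1 z n))
            * g (HH.α (HH.d2 x i)) (HH.α (HH.d2 y j)) (HH.α (HH.d2 z n)) := by
  rw [HH.Cb_apply]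
  have e1 := HH.sum_eq (∑ j ∈ HH.T (HH.α y), ∑ n ∈ HH.T (HH.α z),
      mk2 (ap23 f (HH.d1 (HH.α y) j) (HH.d1 (HH.α z) n))
        (ap23 g (HH.d2 (HH.α y) j) (HH.d2 (HH.α z) n))) (HH.comul_α x)
  simp only [LinearMap.sum_apply, mk2_apply, ap23_apply] at e1
  rw [e1]
  conv_lhs => rw [Finset.sum_comm]
  have e2 := HH.sum_eq (∑ i ∈ HH.T x, ∑ n ∈ HH.T (HH.α z),
      mk2 (ap13 f (HH.α (HH.d1 x i)) (HH.d1 (HH.α z) n))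
        (ap13 g (HH.α (HH.d2 x i)) (HH.d2 (HH.α z) n))) (HH.comul_α y)
  simp only [LinearMap.sum_apply, mk2_apply, ap13_apply] at e2
  rw [e2]
  conv_lhs => rw [Finset.sum_comm, sum_rot3]
  have e3 := HH.sum_eq (∑ i ∈ HH.T x, ∑ j ∈ HH.T y,
      mk2 (f (HH.α (HH.d1 x i)) (HH.α (HH.d1 y j)))
        (g (HH.α (HH.d2 x i)) (HH.α (HH.d2 y j)))) (HH.comul_α z)
  simp only [LinearMap.sum_apply, mk2_apply] at e3
  rw [e3, ← sum_rot3]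

lemma HomHopf.Cb2_alpha (f g : H →ₗ[k] H →ₗ[k] k) (x y : H) :
    HH.Cb2 f g (HH.α x) (HH.α y)
      = ∑ i ∈ HH.T x, ∑ j ∈ HH.T y,
          f (HH.α (HH.d1 x i)) (HH.α (HH.d1 y j))
            * g (HH.α (HH.d2 x i)) (HH.α (HH.d2 y j)) := by
  rw [HH.Cb2_apply]
  have e1 := HH.sum_eq (∑ j ∈ HH.T (HH.α y),
      mk2 (f.flip (HH.d1 (HH.α y) j)) (g.flip (HH.d2 (HH.α y) j))) (HH.comul_α x)
  simp only [LinearMap.sum_apply, mk2_apply, LinearMap.flip_apply] at e1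
  rw [e1]
  conv_lhs => rw [Finset.sum_comm]
  have e2 := HH.sum_eq (∑ i ∈ HH.T x,
      mk2 (f (HH.α (HH.d1 x i))) (g (HH.α (HH.d2 x i)))) (HH.comul_α y)
  simp only [LinearMap.sum_apply, mk2_apply] at e2
  rw [e2]
  conv_lhs => rw [Finset.sum_comm]

lemma HomHopf.sh3_Cb (f g : H →ₗ[k] H →ₗ[k] H →ₗ[k] k) :
    HH.sh3 (HH.Cb f g) = HH.Cb (HH.sh3 f) (HH.sh3 g) := by
  ext x y z
  simp only [HomHopf.sh3_apply]
  rw [HH.Cb_alpha, HH.Cb_apply]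
  rfl

@[simp] lemma HomHopf.sh3Inv_sh3 (f : H →ₗ[k] H →ₗ[k] H →ₗ[k] k) :
    HH.sh3Inv (HH.sh3 f) = f := by
  ext x y z; simp

@[simp] lemma HomHopf.sh3_sh3Inv (f : H →ₗ[k] H →ₗ[k] H →ₗ[k] k) :
    HH.sh3 (HH.sh3Inv f) = f := by
  ext x y z; simp

@[simp] lemma HomHopf.sh2Inv_sh2 (f : H →ₗ[k] H →ₗ[k] k) :
    HH.sh2Inv (HH.sh2 f) = f := by
  ext x y; simp

@[simp] lemma HomHopf.sh2_sh2Inv (f : H →ₗ[k] H →ₗ[k] k) :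
    HH.sh2 (HH.sh2Inv f) = f := by
  ext x y; simp


lemma HomHopf.sum_eq2 {ι κ : Type*} (B : H →ₗ[k] H →ₗ[k] k) {x : H} {s : Finset ι}
    {s' : Finset κ} {u v : ι → κ → H}
    (h : HH.comul x = ∑ i ∈ s, ∑ j ∈ s', u i j ⊗ₜ[k] v i j) :
    ∑ i ∈ HH.T x, B (HH.d1 x i) (HH.d2 x i)
      = ∑ i ∈ s, ∑ j ∈ s', B (u i j) (v i j) := by
  have h2 := (HH.repr x).symm.trans h
  have h3 := congrArg (TensorProduct.lift B) h2
  simpa [map_sum] using h3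

lemma HomHopf.unit3_left' (f : H →ₗ[k] H →ₗ[k] H →ₗ[k] k) :
    HH.Cb HH.eps3 f = HH.sh3 f := by
  ext x y z; rw [HH.unit3_left]; rfl

lemma HomHopf.unit3_right' (f : H →ₗ[k] H →ₗ[k] H →ₗ[k] k) :
    HH.Cb f HH.eps3 = HH.sh3 f := by
  ext x y z; rw [HH.unit3_right]; rfl

lemma HomHopf.unit2_left' (f : H →ₗ[k] H →ₗ[k] k) :
    HH.Cb2 HH.eps2 f = HH.sh2 f := by
  ext x y; rw [HH.unit2_left]; rfl

lemma HomHopf.unit2_right' (f : H →ₗ[k] H →ₗ[k] k) :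
    HH.Cb2 f HH.eps2 = HH.sh2 f := by
  ext x y; rw [HH.unit2_right]; rfl

lemma HomHopf.assoc3' (f g e : H →ₗ[k] H →ₗ[k] H →ₗ[k] k) :
    HH.Cb (HH.Cb f g) e = HH.Cb (HH.sh3 f) (HH.Cb g (HH.sh3Inv e)) := by
  ext x y z; exact HH.assoc3 f g e x y z

lemma HomHopf.assoc2' (f g e : H →ₗ[k] H →ₗ[k] k) :
    HH.Cb2 (HH.Cb2 f g) e = HH.Cb2 (HH.sh2 f) (HH.Cb2 g (HH.sh2Inv e)) := by
  ext x y; exact HH.assoc2 f g e x y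

lemma HomHopf.shInv_of_sh3 {f : H →ₗ[k] H →ₗ[k] H →ₗ[k] k} (hf : HH.sh3 f = f) :
    HH.sh3Inv f = f := by
  conv_lhs => rw [← hf]
  rw [HH.sh3Inv_sh3]

lemma HomHopf.inv_unique {a x y : H →ₗ[k] H →ₗ[k] H →ₗ[k] k}
    (hx : HH.sh3 x = x) (hy : HH.sh3 y = y)
    (hxa : HH.Cb x a = HH.eps3) (hay : HH.Cb a y = HH.eps3) : x = y := by
  have hyInv : HH.sh3Inv y = y := HH.shInv_of_sh3 hy
  have h1 : HH.Cb (HH.Cb x a) y = HH.Cb x (HH.Cb a y) := by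
    rw [HH.assoc3', hx, hyInv]
  rw [hxa, hay, HH.unit3_left', HH.unit3_right', hx, hy] at h1
  exact h1.symm

lemma HomHopf.prod_inv {f g f' g' : H →ₗ[k] H →ₗ[k] H →ₗ[k] k}
    (hf : HH.sh3 f = f) (hg : HH.sh3 g = g) (hf' : HH.sh3 f' = f') (hg' : HH.sh3 g' = g')
    (hgg' : HH.Cb g g' = HH.eps3) (hff' : HH.Cb f f' = HH.eps3) :
    HH.Cb (HH.Cb f g) (HH.Cb g' f') = HH.eps3 := by
  have hE : HH.sh3 (HH.Cb g' f') = HH.Cb g' f' := by rw [HH.sh3_Cb, hg', hf']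
  have inner : HH.Cb g (HH.Cb g' f') = f' := by
    have h := HH.assoc3' g g' f'
    rw [hgg', hg, HH.shInv_of_sh3 hf', HH.unit3_left', hf'] at h
    exact h.symm
  rw [HH.assoc3', HH.shInv_of_sh3 hE, inner, hf, hff']

lemma HomHopf.sigma'_alpha (σ σ' : H →ₗ[k] H →ₗ[k] k)
    (hα : ∀ h g, σ (HH.α h) (HH.α g) = σ h g)
    (h1 : HH.Cb2 σ σ' = HH.eps2) (h2 : HH.Cb2 σ' σ = HH.eps2) :
    ∀ h g, σ' (HH.α h) (HH.α g) = σ' h g := by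
  have hcε : ∀ w : H, HH.counit (HH.α.symm w) = HH.counit w := by
    intro w
    have := HH.counit_α (HH.α.symm w)
    rw [HH.α.apply_symm_apply] at this
    exact this.symm
  -- (a) sh2Inv σ' is a left inverse of σ
  have ha : HH.Cb2 (HH.sh2Inv σ') σ = HH.eps2 := by
    ext x y
    rw [HH.Cb2_apply]
    have hσinv : ∀ a b, σ a b = σ (HH.α.symm a) (HH.α.symm b) := by
      intro a b
      have := hα (HH.α.symm a) (HH.α.symm b)
      rw [HH.α.apply_symm_apply, HH.α.apply_symm_apply] at this
      exact this
    have hcx : HH.comul x = ∑ i ∈ HH.T (HH.α.symm x),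
        HH.α (HH.d1 (HH.α.symm x) i) ⊗ₜ[k] HH.α (HH.d2 (HH.α.symm x) i) := by
      have := HH.comul_α (HH.α.symm x); rwa [HH.α.apply_symm_apply] at this
    have hcy : HH.comul y = ∑ j ∈ HH.T (HH.α.symm y),
        HH.α (HH.d1 (HH.α.symm y) j) ⊗ₜ[k] HH.α (HH.d2 (HH.α.symm y) j) := by
      have := HH.comul_α (HH.α.symm y); rwa [HH.α.apply_symm_apply] at this
    calc ∑ i ∈ HH.T x, ∑ j ∈ HH.T y,
          HH.sh2Inv σ' (HH.d1 x i) (HH.d1 y j) * σ (HH.d2 x i) (HH.d2 y j)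
        = ∑ i ∈ HH.T x, ∑ j ∈ HH.T y,
            σ' (HH.α.symm (HH.d1 x i)) (HH.α.symm (HH.d1 y j))
              * σ (HH.α.symm (HH.d2 x i)) (HH.α.symm (HH.d2 y j)) := by
          refine Finset.sum_congr rfl fun i _ => Finset.sum_congr rfl fun j _ => ?_
          rw [HomHopf.sh2Inv_apply, ← hσinv]
      _ = ∑ i ∈ HH.T (HH.α.symm x), ∑ j ∈ HH.T y,
            σ' (HH.d1 (HH.α.symm x) i) (HH.α.symm (HH.d1 y j))
              * σ (HH.d2 (HH.α.symm x) i) (HH.α.symm (HH.d2 y j)) := by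
          have e1 := HH.sum_eq (∑ j ∈ HH.T y,
            mk2 ((σ'.comp HH.α.symm.toLinearMap).flip (HH.α.symm (HH.d1 y j)))
              ((σ.comp HH.α.symm.toLinearMap).flip (HH.α.symm (HH.d2 y j)))) hcx
          simp only [LinearMap.sum_apply, mk2_apply, LinearMap.flip_apply,
            LinearMap.comp_apply, LinearEquiv.coe_coe, LinearEquiv.symm_apply_apply] at e1
          exact e1
      _ = ∑ i ∈ HH.T (HH.α.symm x), ∑ j ∈ HH.T (HH.α.symm y),
            σ' (HH.d1 (HH.α.symm x) i) (HH.d1 (HH.α.symm y) j)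
              * σ (HH.d2 (HH.α.symm x) i) (HH.d2 (HH.α.symm y) j) := by
          rw [Finset.sum_comm]
          conv_rhs => rw [Finset.sum_comm]
          have e2 := HH.sum_eq (∑ i ∈ HH.T (HH.α.symm x),
            mk2 ((σ' (HH.d1 (HH.α.symm x) i)).comp HH.α.symm.toLinearMap)
              ((σ (HH.d2 (HH.α.symm x) i)).comp HH.α.symm.toLinearMap)) hcy
          simp only [LinearMap.sum_apply, mk2_apply, LinearMap.flip_apply,
            LinearMap.comp_apply, LinearEquiv.coe_coe, LinearEquiv.symm_apply_apply] at e2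
          exact e2
      _ = HH.eps2 (HH.α.symm x) (HH.α.symm y) := by
          rw [← h2, HH.Cb2_apply]
      _ = HH.eps2 x y := by simp [hcε]
  -- (b) sh2 σ' is a right inverse of σ
  have hb : HH.Cb2 σ (HH.sh2 σ') = HH.eps2 := by
    ext x y
    rw [HH.Cb2_apply]
    have hβ := HH.Cb2_alpha σ σ' x y
    rw [h1] at hβ
    simp only [HomHopf.eps2_apply, HH.counit_α] at hβ
    calc ∑ i ∈ HH.T x, ∑ j ∈ HH.T y,
          σ (HH.d1 x i) (HH.d1 y j) * HH.sh2 σ' (HH.d2 x i) (HH.d2 y j)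
        = ∑ i ∈ HH.T x, ∑ j ∈ HH.T y,
            σ (HH.α (HH.d1 x i)) (HH.α (HH.d1 y j))
              * σ' (HH.α (HH.d2 x i)) (HH.α (HH.d2 y j)) := by
          refine Finset.sum_congr rfl fun i _ => Finset.sum_congr rfl fun j _ => ?_
          rw [HomHopf.sh2_apply, hα]
      _ = HH.counit x * HH.counit y := hβ.symm
      _ = HH.eps2 x y := by simp
  -- (c) associativity forces sh2 σ' = σ'
  have hassoc := HH.assoc2' (HH.sh2Inv σ') σ (HH.sh2 σ')
  rw [ha, HH.sh2_sh2Inv, HH.sh2Inv_sh2, h1, HH.unit2_left', HH.unit2_right'] at hassoc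
  have key : HH.sh2 σ' = σ' := by
    have := congrArg HH.sh2Inv hassoc
    rwa [HH.sh2Inv_sh2, HH.sh2Inv_sh2] at this
  intro h g
  calc σ' (HH.α h) (HH.α g) = HH.sh2 σ' h g := rfl
    _ = σ' h g := by rw [key]


noncomputable def HomHopf.Ua (τ : H →ₗ[k] H →ₗ[k] k) : H →ₗ[k] H →ₗ[k] H →ₗ[k] k :=
  HH.counit.smulRight τ

@[simp] lemma HomHopf.Ua_apply (τ : H →ₗ[k] H →ₗ[k] k) (a b c : H) :
    HH.Ua τ a b c = HH.counit a * τ b c := by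
  simp [HomHopf.Ua, smul_eq_mul]

noncomputable def HomHopf.Va (τ : H →ₗ[k] H →ₗ[k] k) : H →ₗ[k] H →ₗ[k] H →ₗ[k] k :=
  ((LinearMap.lflip : (H →ₗ[k] H →ₗ[k] k) ≃ₗ[k] (H →ₗ[k] H →ₗ[k] k)).toLinearMap ∘ₗ (HH.mul.compr₂ ((τ.comp HH.α.toLinearMap).flip))).flip

@[simp] lemma HomHopf.Va_apply (τ : H →ₗ[k] H →ₗ[k] k) (a b c : H) :
    HH.Va τ a b c = τ (HH.α a) (HH.mul b c) := rfl

noncomputable def HomHopf.Pa (τ : H →ₗ[k] H →ₗ[k] k) : H →ₗ[k] H →ₗ[k] H →ₗ[k] k :=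
  τ.compr₂ (LinearMap.id.smulRight HH.counit)

@[simp] lemma HomHopf.Pa_apply (τ : H →ₗ[k] H →ₗ[k] k) (a b c : H) :
    HH.Pa τ a b c = τ a b * HH.counit c := by
  simp [HomHopf.Pa, smul_eq_mul]

noncomputable def HomHopf.Qa (τ : H →ₗ[k] H →ₗ[k] k) : H →ₗ[k] H →ₗ[k] H →ₗ[k] k :=
  HH.mul.compr₂ ((LinearMap.lcomp k k HH.α.toLinearMap).comp τ)

@[simp] lemma HomHopf.Qa_apply (τ : H →ₗ[k] H →ₗ[k] k) (a b c : H) :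
    HH.Qa τ a b c = τ (HH.mul a b) (HH.α c) := rfl

section Atoms
variable {τ τ₁ τ₂ : H →ₗ[k] H →ₗ[k] k}

lemma HomHopf.sh3_Ua (hτ : ∀ a b, τ (HH.α a) (HH.α b) = τ a b) :
    HH.sh3 (HH.Ua τ) = HH.Ua τ := by
  ext a b c; simp [HH.counit_α, hτ]

lemma HomHopf.sh3_Va (hτ : ∀ a b, τ (HH.α a) (HH.α b) = τ a b) :
    HH.sh3 (HH.Va τ) = HH.Va τ := by
  ext a b c
  simp only [HomHopf.sh3_apply, HomHopf.Va_apply]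
  rw [← HH.α_mul, hτ]

lemma HomHopf.sh3_Pa (hτ : ∀ a b, τ (HH.α a) (HH.α b) = τ a b) :
    HH.sh3 (HH.Pa τ) = HH.Pa τ := by
  ext a b c; simp [HH.counit_α, hτ]

lemma HomHopf.sh3_Qa (hτ : ∀ a b, τ (HH.α a) (HH.α b) = τ a b) :
    HH.sh3 (HH.Qa τ) = HH.Qa τ := by
  ext a b c
  simp only [HomHopf.sh3_apply, HomHopf.Qa_apply]
  rw [← HH.α_mul, hτ]

variable (hc : ∀ h g, ∑ i ∈ HH.T h, ∑ j ∈ HH.T g,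
    τ₁ (HH.d1 h i) (HH.d1 g j) * τ₂ (HH.d2 h i) (HH.d2 g j) = HH.counit h * HH.counit g)

include hc

lemma HomHopf.CbUU : HH.Cb (HH.Ua τ₁) (HH.Ua τ₂) = HH.eps3 := by
  ext x y z
  rw [HH.Cb_apply]
  simp only [HomHopf.Ua_apply, HomHopf.eps3_apply]
  have hx : ∑ i ∈ HH.T x, HH.counit (HH.d1 x i) * HH.counit (HH.d2 x i) = HH.counit x := by
    have := HH.sum_counit_left HH.counit x
    rwa [HH.counit_α] at this
  calc ∑ i ∈ HH.T x, ∑ j ∈ HH.T y, ∑ n ∈ HH.T z,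
        HH.counit (HH.d1 x i) * τ₁ (HH.d1 y j) (HH.d1 z n) *
          (HH.counit (HH.d2 x i) * τ₂ (HH.d2 y j) (HH.d2 z n))
      = ∑ i ∈ HH.T x, (HH.counit (HH.d1 x i) * HH.counit (HH.d2 x i)) *
          ∑ j ∈ HH.T y, ∑ n ∈ HH.T z,
            τ₁ (HH.d1 y j) (HH.d1 z n) * τ₂ (HH.d2 y j) (HH.d2 z n) := by
        refine Finset.sum_congr rfl fun i _ => ?_
        rw [Finset.mul_sum]
        refine Finset.sum_congr rfl fun j _ => ?_
        rw [Finset.mul_sum]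
        refine Finset.sum_congr rfl fun n _ => ?_
        ring
    _ = (∑ i ∈ HH.T x, HH.counit (HH.d1 x i) * HH.counit (HH.d2 x i)) *
          ∑ j ∈ HH.T y, ∑ n ∈ HH.T z,
            τ₁ (HH.d1 y j) (HH.d1 z n) * τ₂ (HH.d2 y j) (HH.d2 z n) :=
        (Finset.sum_mul _ _ _).symm
    _ = HH.counit x * (HH.counit y * HH.counit z) := by rw [hx, hc y z]

lemma HomHopf.CbPP : HH.Cb (HH.Pa τ₁) (HH.Pa τ₂) = HH.eps3 := by
  ext x y z
  rw [HH.Cb_apply]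
  simp only [HomHopf.Pa_apply, HomHopf.eps3_apply]
  have hz : ∑ n ∈ HH.T z, HH.counit (HH.d1 z n) * HH.counit (HH.d2 z n) = HH.counit z := by
    have := HH.sum_counit_left HH.counit z
    rwa [HH.counit_α] at this
  calc ∑ i ∈ HH.T x, ∑ j ∈ HH.T y, ∑ n ∈ HH.T z,
        τ₁ (HH.d1 x i) (HH.d1 y j) * HH.counit (HH.d1 z n) *
          (τ₂ (HH.d2 x i) (HH.d2 y j) * HH.counit (HH.d2 z n))
      = ∑ i ∈ HH.T x, ∑ j ∈ HH.T y,
          (τ₁ (HH.d1 x i) (HH.d1 y j) * τ₂ (HH.d2 x i) (HH.d2 y j)) *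
            ∑ n ∈ HH.T z, HH.counit (HH.d1 z n) * HH.counit (HH.d2 z n) := by
        refine Finset.sum_congr rfl fun i _ => Finset.sum_congr rfl fun j _ => ?_
        rw [Finset.mul_sum]
        refine Finset.sum_congr rfl fun n _ => ?_
        ring
    _ = (∑ i ∈ HH.T x, ∑ j ∈ HH.T y,
          τ₁ (HH.d1 x i) (HH.d1 y j) * τ₂ (HH.d2 x i) (HH.d2 y j)) * HH.counit z := by
        rw [hz]
        simp only [← Finset.sum_mul]
    _ = HH.counit x * (HH.counit y * HH.counit z) := by rw [hc x y]; ring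

lemma HomHopf.CbVV : HH.Cb (HH.Va τ₁) (HH.Va τ₂) = HH.eps3 := by
  ext x y z
  rw [HH.Cb_apply]
  simp only [HomHopf.Va_apply, HomHopf.eps3_apply]
  have hc' := hc (HH.α x) (HH.mul y z)
  have e1 := HH.sum_eq (∑ m ∈ HH.T (HH.mul y z),
      mk2 (τ₁.flip (HH.d1 (HH.mul y z) m)) (τ₂.flip (HH.d2 (HH.mul y z) m))) (HH.comul_α x)
  simp only [LinearMap.sum_apply, mk2_apply, LinearMap.flip_apply] at e1
  rw [e1, Finset.sum_comm] at hc'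
  have e2 := HH.sum_eq2 (∑ i ∈ HH.T x,
      mk2 (τ₁ (HH.α (HH.d1 x i))) (τ₂ (HH.α (HH.d2 x i)))) (HH.comul_mul y z)
  simp only [LinearMap.sum_apply, mk2_apply] at e2
  rw [e2, sum_rot3] at hc'
  rw [HH.counit_α, HH.counit_mul] at hc'
  exact hc'

lemma HomHopf.CbQQ : HH.Cb (HH.Qa τ₁) (HH.Qa τ₂) = HH.eps3 := by
  ext x y z
  rw [HH.Cb_apply]
  simp only [HomHopf.Qa_apply, HomHopf.eps3_apply]
  have hc' := hc (HH.mul x y) (HH.α z)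
  have e1 := HH.sum_eq2 (∑ m ∈ HH.T (HH.α z),
      mk2 (τ₁.flip (HH.d1 (HH.α z) m)) (τ₂.flip (HH.d2 (HH.α z) m))) (HH.comul_mul x y)
  simp only [LinearMap.sum_apply, mk2_apply, LinearMap.flip_apply] at e1
  rw [e1, sum_rot3] at hc'
  have e2 := HH.sum_eq (∑ i ∈ HH.T x, ∑ j ∈ HH.T y,
      mk2 (τ₁ (HH.mul (HH.d1 x i) (HH.d1 y j)))
        (τ₂ (HH.mul (HH.d2 x i) (HH.d2 y j)))) (HH.comul_α z)
  simp only [LinearMap.sum_apply, mk2_apply] at e2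
  rw [e2, ← sum_rot3] at hc'
  rw [HH.counit_mul, HH.counit_α, mul_assoc] at hc'
  exact hc'

omit hc in
lemma HomHopf.CbUV_apply (h l m : H) :
    HH.Cb (HH.Ua τ) (HH.Va τ) h l m
      = ∑ j ∈ HH.T l, ∑ n ∈ HH.T m,
          τ (HH.d1 l j) (HH.d1 m n) *
            τ (HH.α (HH.α h)) (HH.mul (HH.d2 l j) (HH.d2 m n)) := by
  rw [HH.Cb_apply]
  simp only [HomHopf.Ua_apply, HomHopf.Va_apply]
  have key : ∀ w : H, ∑ i ∈ HH.T h, HH.counit (HH.d1 h i) * τ (HH.α (HH.d2 h i)) w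
      = τ (HH.α (HH.α h)) w := by
    intro w
    simpa using HH.sum_counit_left ((τ.comp HH.α.toLinearMap).flip w) h
  conv_lhs => rw [← sum_rot3]
  refine Finset.sum_congr rfl fun j _ => Finset.sum_congr rfl fun n _ => ?_
  calc ∑ i ∈ HH.T h, HH.counit (HH.d1 h i) * τ (HH.d1 l j) (HH.d1 m n) *
        τ (HH.α (HH.d2 h i)) (HH.mul (HH.d2 l j) (HH.d2 m n))
      = τ (HH.d1 l j) (HH.d1 m n) * ∑ i ∈ HH.T h, HH.counit (HH.d1 h i) *
          τ (HH.α (HH.d2 h i)) (HH.mul (HH.d2 l j) (HH.d2 m n)) := by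
        rw [Finset.mul_sum]
        exact Finset.sum_congr rfl fun i _ => by ring
    _ = _ := by rw [key]

omit hc in
lemma HomHopf.CbPQ_apply (h l m : H) :
    HH.Cb (HH.Pa τ) (HH.Qa τ) h l m
      = ∑ i ∈ HH.T h, ∑ j ∈ HH.T l,
          τ (HH.d1 h i) (HH.d1 l j) *
            τ (HH.mul (HH.d2 h i) (HH.d2 l j)) (HH.α (HH.α m)) := by
  rw [HH.Cb_apply]
  simp only [HomHopf.Pa_apply, HomHopf.Qa_apply]
  refine Finset.sum_congr rfl fun i _ => Finset.sum_congr rfl fun j _ => ?_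
  have key : ∀ w : H, ∑ n ∈ HH.T m, HH.counit (HH.d1 m n) * τ w (HH.α (HH.d2 m n))
      = τ w (HH.α (HH.α m)) := by
    intro w
    simpa using HH.sum_counit_left ((τ w).comp HH.α.toLinearMap) m
  calc ∑ n ∈ HH.T m, τ (HH.d1 h i) (HH.d1 l j) * HH.counit (HH.d1 m n) *
        τ (HH.mul (HH.d2 h i) (HH.d2 l j)) (HH.α (HH.d2 m n))
      = τ (HH.d1 h i) (HH.d1 l j) * ∑ n ∈ HH.T m, HH.counit (HH.d1 m n) *
          τ (HH.mul (HH.d2 h i) (HH.d2 l j)) (HH.α (HH.d2 m n)) := by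
        rw [Finset.mul_sum]
        exact Finset.sum_congr rfl fun n _ => by ring
    _ = _ := by rw [key]

omit hc in
lemma HomHopf.CbVU_apply (h l m : H) :
    HH.Cb (HH.Va τ) (HH.Ua τ) h l m
      = ∑ j ∈ HH.T l, ∑ n ∈ HH.T m,
          τ (HH.α (HH.α h)) (HH.mul (HH.d1 l j) (HH.d1 m n)) *
            τ (HH.d2 l j) (HH.d2 m n) := by
  rw [HH.Cb_apply]
  simp only [HomHopf.Ua_apply, HomHopf.Va_apply]
  have key : ∀ w : H, ∑ i ∈ HH.T h, τ (HH.α (HH.d1 h i)) w * HH.counit (HH.d2 h i)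
      = τ (HH.α (HH.α h)) w := by
    intro w
    simpa using HH.sum_counit_right ((τ.comp HH.α.toLinearMap).flip w) h
  conv_lhs => rw [← sum_rot3]
  refine Finset.sum_congr rfl fun j _ => Finset.sum_congr rfl fun n _ => ?_
  calc ∑ i ∈ HH.T h, τ (HH.α (HH.d1 h i)) (HH.mul (HH.d1 l j) (HH.d1 m n)) *
        (HH.counit (HH.d2 h i) * τ (HH.d2 l j) (HH.d2 m n))
      = (∑ i ∈ HH.T h, τ (HH.α (HH.d1 h i)) (HH.mul (HH.d1 l j) (HH.d1 m n)) *
          HH.counit (HH.d2 h i)) * τ (HH.d2 l j) (HH.d2 m n) := by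
        rw [Finset.sum_mul]
        exact Finset.sum_congr rfl fun i _ => by ring
    _ = _ := by rw [key]

omit hc in
lemma HomHopf.CbQP_apply (h l m : H) :
    HH.Cb (HH.Qa τ) (HH.Pa τ) h l m
      = ∑ i ∈ HH.T h, ∑ j ∈ HH.T l,
          τ (HH.mul (HH.d1 h i) (HH.d1 l j)) (HH.α (HH.α m)) *
            τ (HH.d2 h i) (HH.d2 l j) := by
  rw [HH.Cb_apply]
  simp only [HomHopf.Pa_apply, HomHopf.Qa_apply]
  refine Finset.sum_congr rfl fun i _ => Finset.sum_congr rfl fun j _ => ?_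
  have key : ∀ w : H, ∑ n ∈ HH.T m, τ w (HH.α (HH.d1 m n)) * HH.counit (HH.d2 m n)
      = τ w (HH.α (HH.α m)) := by
    intro w
    simpa using HH.sum_counit_right ((τ w).comp HH.α.toLinearMap) m
  calc ∑ n ∈ HH.T m, τ (HH.mul (HH.d1 h i) (HH.d1 l j)) (HH.α (HH.d1 m n)) *
        (τ (HH.d2 h i) (HH.d2 l j) * HH.counit (HH.d2 m n))
      = (∑ n ∈ HH.T m, τ (HH.mul (HH.d1 h i) (HH.d1 l j)) (HH.α (HH.d1 m n)) *
          HH.counit (HH.d2 m n)) * τ (HH.d2 h i) (HH.d2 l j) := by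
        rw [Finset.sum_mul]
        exact Finset.sum_congr rfl fun n _ => by ring
    _ = _ := by rw [key]

end Atoms

end Aux

/-- If `σ : H ⊗ H → k` is normalized, convolution invertible (with
inverse `σ'`) and `σ∘(α⊗α) = σ`, then `σ` is a left Hom-2-cocycle if and only if `σ'`
is a right Hom-2-cocycle. -/
theorem leftCocycle_iff_inverse_rightCocycle
    {k : Type u} {H : Type v} [Field k] [AddCommGroup H] [Module k H]
    (HH : HomHopf k H) (σ σ' : H →ₗ[k] H →ₗ[k] k)
    (hn : Normalized2 HH (fun h g => σ h g))
    (hα : AlphaInvariant2 HH (fun h g => σ h g))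
    (hinv : ConvInv2 HH (fun h g => σ h g) (fun h g => σ' h g)) :
    IsLeftCocycle HH (fun h g => σ h g) ↔ IsRightCocycle HH (fun h g => σ' h g) := by
  classical
  have hc1 : ∀ h g, ∑ i ∈ HH.T h, ∑ j ∈ HH.T g,
      σ (HH.d1 h i) (HH.d1 g j) * σ' (HH.d2 h i) (HH.d2 g j)
        = HH.counit h * HH.counit g := hinv.1
  have hc2 : ∀ h g, ∑ i ∈ HH.T h, ∑ j ∈ HH.T g,
      σ' (HH.d1 h i) (HH.d1 g j) * σ (HH.d2 h i) (HH.d2 g j)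
        = HH.counit h * HH.counit g := hinv.2
  have hα0 : ∀ h g, σ (HH.α h) (HH.α g) = σ h g := hα
  have h1 : HH.Cb2 σ σ' = HH.eps2 := by
    ext x y; rw [HH.Cb2_apply]; simp only [HomHopf.eps2_apply]; exact hc1 x y
  have h2 : HH.Cb2 σ' σ = HH.eps2 := by
    ext x y; rw [HH.Cb2_apply]; simp only [HomHopf.eps2_apply]; exact hc2 x y
  have hα1 : ∀ h g, σ' (HH.α h) (HH.α g) = σ' h g := HH.sigma'_alpha σ σ' hα0 h1 h2
  have sU : HH.sh3 (HH.Ua σ) = HH.Ua σ := HH.sh3_Ua hα0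
  have sV : HH.sh3 (HH.Va σ) = HH.Va σ := HH.sh3_Va hα0
  have sP : HH.sh3 (HH.Pa σ) = HH.Pa σ := HH.sh3_Pa hα0
  have sQ : HH.sh3 (HH.Qa σ) = HH.Qa σ := HH.sh3_Qa hα0
  have sU' : HH.sh3 (HH.Ua σ') = HH.Ua σ' := HH.sh3_Ua hα1
  have sV' : HH.sh3 (HH.Va σ') = HH.Va σ' := HH.sh3_Va hα1
  have sP' : HH.sh3 (HH.Pa σ') = HH.Pa σ' := HH.sh3_Pa hα1
  have sQ' : HH.sh3 (HH.Qa σ') = HH.Qa σ' := HH.sh3_Qa hα1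
  have sA : HH.sh3 (HH.Cb (HH.Ua σ) (HH.Va σ)) = HH.Cb (HH.Ua σ) (HH.Va σ) := by
    rw [HH.sh3_Cb, sU, sV]
  have sB : HH.sh3 (HH.Cb (HH.Pa σ) (HH.Qa σ)) = HH.Cb (HH.Pa σ) (HH.Qa σ) := by
    rw [HH.sh3_Cb, sP, sQ]
  have sX : HH.sh3 (HH.Cb (HH.Va σ') (HH.Ua σ')) = HH.Cb (HH.Va σ') (HH.Ua σ') := by
    rw [HH.sh3_Cb, sV', sU']
  have sY : HH.sh3 (HH.Cb (HH.Qa σ') (HH.Pa σ')) = HH.Cb (HH.Qa σ') (HH.Pa σ') := by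
    rw [HH.sh3_Cb, sQ', sP']
  have iUU' : HH.Cb (HH.Ua σ) (HH.Ua σ') = HH.eps3 := HH.CbUU hc1
  have iU'U : HH.Cb (HH.Ua σ') (HH.Ua σ) = HH.eps3 := HH.CbUU hc2
  have iVV' : HH.Cb (HH.Va σ) (HH.Va σ') = HH.eps3 := HH.CbVV hc1
  have iV'V : HH.Cb (HH.Va σ') (HH.Va σ) = HH.eps3 := HH.CbVV hc2
  have iPP' : HH.Cb (HH.Pa σ) (HH.Pa σ') = HH.eps3 := HH.CbPP hc1
  have iP'P : HH.Cb (HH.Pa σ') (HH.Pa σ) = HH.eps3 := HH.CbPP hc2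
  have iQQ' : HH.Cb (HH.Qa σ) (HH.Qa σ') = HH.eps3 := HH.CbQQ hc1
  have iQ'Q : HH.Cb (HH.Qa σ') (HH.Qa σ) = HH.eps3 := HH.CbQQ hc2
  have hAX : HH.Cb (HH.Cb (HH.Ua σ) (HH.Va σ)) (HH.Cb (HH.Va σ') (HH.Ua σ')) = HH.eps3 :=
    HH.prod_inv sU sV sU' sV' iVV' iUU'
  have hXA : HH.Cb (HH.Cb (HH.Va σ') (HH.Ua σ')) (HH.Cb (HH.Ua σ) (HH.Va σ)) = HH.eps3 :=
    HH.prod_inv sV' sU' sV sU iU'U iV'V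
  have hBY : HH.Cb (HH.Cb (HH.Pa σ) (HH.Qa σ)) (HH.Cb (HH.Qa σ') (HH.Pa σ')) = HH.eps3 :=
    HH.prod_inv sP sQ sP' sQ' iQQ' iPP'
  have hYB : HH.Cb (HH.Cb (HH.Qa σ') (HH.Pa σ')) (HH.Cb (HH.Pa σ) (HH.Qa σ)) = HH.eps3 :=
    HH.prod_inv sQ' sP' sQ sP iP'P iQ'Q
  constructor
  · rintro ⟨-, hL⟩
    refine ⟨hα1, ?_⟩
    have hABeq : HH.Cb (HH.Ua σ) (HH.Va σ) = HH.Cb (HH.Pa σ) (HH.Qa σ) := by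
      ext h l m
      rw [HH.CbUV_apply, HH.CbPQ_apply]
      exact hL h l m
    have hXY : HH.Cb (HH.Va σ') (HH.Ua σ') = HH.Cb (HH.Qa σ') (HH.Pa σ') := by
      refine HH.inv_unique sX sY hXA ?_
      rw [hABeq]
      exact hBY
    intro h l m
    have hpt := LinearMap.congr_fun (LinearMap.congr_fun (LinearMap.congr_fun hXY h) l) m
    rw [HH.CbVU_apply, HH.CbQP_apply] at hpt
    exact hpt
  · rintro ⟨-, hR⟩
    refine ⟨hα0, ?_⟩
    have hXYeq : HH.Cb (HH.Va σ') (HH.Ua σ') = HH.Cb (HH.Qa σ') (HH.Pa σ') := by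
      ext h l m
      rw [HH.CbVU_apply, HH.CbQP_apply]
      exact hR h l m
    have hABeq : HH.Cb (HH.Ua σ) (HH.Va σ) = HH.Cb (HH.Pa σ) (HH.Qa σ) := by
      refine HH.inv_unique sA sB hAX ?_
      rw [hXYeq]
      exact hYB
    intro h l m
    have hpt := LinearMap.congr_fun (LinearMap.congr_fun (LinearMap.congr_fun hABeq h) l) m
    rw [HH.CbUV_apply, HH.CbPQ_apply] at hpt
    exact hpt
end

section
/- Let γ: H → k be normalized (γ(1)=1), convolution invertible, with γ∘α = γ. Then D¹(γ)(h,g) := γ(h₁)γ(g₁)γ⁻¹(h₂g₂) defines a normalized, convolution invertible left Hom-2-cocycle on H. -/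
open scoped TensorProduct BigOperators

universe u v

section Toolkit

namespace D1Aux

variable {k : Type u} {H : Type v} [Field k] [AddCommGroup H] [Module k H]

/-- product bilinear form -/
noncomputable def bf (f g : H →ₗ[k] k) : H →ₗ[k] H →ₗ[k] k :=
  (LinearMap.mul k k).compl₁₂ f g

@[simp] lemma bf_apply (f g : H →ₗ[k] k) (x y : H) : bf f g x y = f x * g y := rfl

/-- product trilinear form, right associated -/
noncomputable def tri (f g e : H →ₗ[k] k) : H →ₗ[k] H →ₗ[k] H →ₗ[k] k :=
  f.smulRight (bf g e)

@[simp] lemma tri_apply (f g e : H →ₗ[k] k) (a b c : H) :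
    tri f g e a b c = f a * (g b * e c) := by
  simp [tri, LinearMap.smulRight_apply, smul_eq_mul]

variable (HH : HomHopf k H)

lemma sum_B (B : H →ₗ[k] H →ₗ[k] k) (x : H) :
    ∑ i ∈ HH.T x, B (HH.d1 x i) (HH.d2 x i) = TensorProduct.lift B (HH.comul x) := by
  rw [HH.repr x, map_sum]
  simp

lemma sum_one (B : H →ₗ[k] H →ₗ[k] k) :
    ∑ i ∈ HH.T HH.one, B (HH.d1 HH.one i) (HH.d2 HH.one i) = B HH.one HH.one := by
  rw [sum_B, HH.comul_one]
  simp

lemma sum_mulB (B : H →ₗ[k] H →ₗ[k] k) (x y : H) :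
    ∑ i ∈ HH.T (HH.mul x y), B (HH.d1 (HH.mul x y) i) (HH.d2 (HH.mul x y) i)
      = ∑ i ∈ HH.T x, ∑ j ∈ HH.T y,
          B (HH.mul (HH.d1 x i) (HH.d1 y j)) (HH.mul (HH.d2 x i) (HH.d2 y j)) := by
  rw [sum_B, HH.comul_mul, map_sum]
  simp

lemma sum_alphaB (B : H →ₗ[k] H →ₗ[k] k) (x : H) :
    ∑ i ∈ HH.T (HH.α x), B (HH.d1 (HH.α x) i) (HH.d2 (HH.α x) i)
      = ∑ i ∈ HH.T x, B (HH.α (HH.d1 x i)) (HH.α (HH.d2 x i)) := by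
  rw [sum_B, HH.comul_α, map_sum]
  simp

lemma sum_alphainvB (B : H →ₗ[k] H →ₗ[k] k) (x : H) :
    ∑ i ∈ HH.T (HH.α.symm x), B (HH.d1 (HH.α.symm x) i) (HH.d2 (HH.α.symm x) i)
      = ∑ i ∈ HH.T x, B (HH.α.symm (HH.d1 x i)) (HH.α.symm (HH.d2 x i)) := by
  have h := sum_alphaB HH
    (B.compl₁₂ HH.α.symm.toLinearMap HH.α.symm.toLinearMap) (HH.α.symm x)
  rw [HH.α.apply_symm_apply] at h
  simpa using h.symm

lemma sum_counit_left (f : H →ₗ[k] k) (x : H) :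
    ∑ i ∈ HH.T x, HH.counit (HH.d1 x i) * f (HH.d2 x i) = f (HH.α x) := by
  have h := congrArg f (HH.counit_left x)
  rw [map_sum] at h
  simpa [smul_eq_mul] using h

lemma sum_counit_right (f : H →ₗ[k] k) (x : H) :
    ∑ i ∈ HH.T x, f (HH.d1 x i) * HH.counit (HH.d2 x i) = f (HH.α x) := by
  have h := congrArg f (HH.counit_right x)
  rw [map_sum] at h
  have : ∀ i ∈ HH.T x, HH.counit (HH.d2 x i) * f (HH.d1 x i)
      = f (HH.d1 x i) * HH.counit (HH.d2 x i) := fun i _ => mul_comm _ _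
  rw [← Finset.sum_congr rfl this]
  simpa [smul_eq_mul] using h

noncomputable def lift3 (C : H →ₗ[k] H →ₗ[k] H →ₗ[k] k) :
    H ⊗[k] (H ⊗[k] H) →ₗ[k] k :=
  TensorProduct.lift ((TensorProduct.lift.equiv (RingHom.id k) H H k).toLinearMap.comp C)

@[simp] lemma lift3_tmul (C : H →ₗ[k] H →ₗ[k] H →ₗ[k] k) (a b c : H) :
    lift3 C (a ⊗ₜ[k] (b ⊗ₜ[k] c)) = C a b c := by
  simp [lift3, TensorProduct.lift.equiv]

lemma sum_coassoc (C : H →ₗ[k] H →ₗ[k] H →ₗ[k] k) (x : H) :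
    (∑ i ∈ HH.T x, ∑ p ∈ HH.T (HH.d1 x i),
      C (HH.d1 (HH.d1 x i) p) (HH.d2 (HH.d1 x i) p) (HH.α (HH.d2 x i)))
  = ∑ i ∈ HH.T x, ∑ p ∈ HH.T (HH.d2 x i),
      C (HH.α (HH.d1 x i)) (HH.d1 (HH.d2 x i) p) (HH.d2 (HH.d2 x i) p) := by
  have h := congrArg (lift3 C) (HH.hom_coassoc x)
  simp only [map_sum, HH.repr, TensorProduct.sum_tmul, TensorProduct.tmul_sum,
    TensorProduct.assoc_tmul, lift3_tmul] at h
  exact h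

end D1Aux

end Toolkit
namespace D1Aux

variable {k : Type u} {H : Type v} [Field k] [AddCommGroup H] [Module k H]
variable (HH : HomHopf k H)

lemma alphainv_mul (a b : H) :
    HH.α.symm (HH.mul a b) = HH.mul (HH.α.symm a) (HH.α.symm b) := by
  have h := HH.α_mul (HH.α.symm a) (HH.α.symm b)
  rw [HH.α.apply_symm_apply, HH.α.apply_symm_apply] at h
  rw [← h, HH.α.symm_apply_apply]

lemma gamma_alphainv (γ : H →ₗ[k] k) (hα : ∀ h, γ (HH.α h) = γ h) (x : H) : γ (HH.α.symm x) = γ x := by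
  have := hα (HH.α.symm x); rw [HH.α.apply_symm_apply] at this; exact this.symm

lemma sum_delta_alpha_gamma (γ δ : H →ₗ[k] k) (hα : ∀ h, γ (HH.α h) = γ h)
    (hinv2 : ∀ h, ∑ i ∈ HH.T h, δ (HH.d1 h i) * γ (HH.d2 h i) = HH.counit h) (c : H) :
    ∑ i ∈ HH.T c, δ (HH.α (HH.d1 c i)) * γ (HH.d2 c i) = HH.counit c := by
  have h := hinv2 (HH.α c)
  have h2 := sum_alphaB HH (bf δ γ) c
  simp only [bf_apply] at h2
  rw [h2] at h
  rw [HH.counit_α] at h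
  calc ∑ i ∈ HH.T c, δ (HH.α (HH.d1 c i)) * γ (HH.d2 c i)
      = ∑ i ∈ HH.T c, δ (HH.α (HH.d1 c i)) * γ (HH.α (HH.d2 c i)) := by
        refine Finset.sum_congr rfl fun i _ => ?_; rw [hα]
    _ = HH.counit c := h

lemma delta_alpha (γ δ : H →ₗ[k] k) (hα : ∀ h, γ (HH.α h) = γ h)
    (hinv1 : ∀ h, ∑ i ∈ HH.T h, γ (HH.d1 h i) * δ (HH.d2 h i) = HH.counit h)
    (hinv2 : ∀ h, ∑ i ∈ HH.T h, δ (HH.d1 h i) * γ (HH.d2 h i) = HH.counit h) (x : H) : δ (HH.α x) = δ x := by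
  have key : ∀ y, δ (HH.α (HH.α y)) = δ (HH.α (HH.α (HH.α y))) := by
    intro y
    have h := sum_coassoc HH (tri (δ ∘ₗ HH.α.toLinearMap) γ δ) y
    simp only [tri_apply, LinearMap.comp_apply, LinearEquiv.coe_coe] at h
    have hL : (∑ i ∈ HH.T y, ∑ p ∈ HH.T (HH.d1 y i),
        δ (HH.α (HH.d1 (HH.d1 y i) p)) * (γ (HH.d2 (HH.d1 y i) p) * δ (HH.α (HH.d2 y i))))
        = δ (HH.α (HH.α y)) := by
      have : ∀ i ∈ HH.T y, (∑ p ∈ HH.T (HH.d1 y i),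
          δ (HH.α (HH.d1 (HH.d1 y i) p)) * (γ (HH.d2 (HH.d1 y i) p) * δ (HH.α (HH.d2 y i))))
          = HH.counit (HH.d1 y i) * δ (HH.α (HH.d2 y i)) := by
        intro i _
        rw [← sum_delta_alpha_gamma HH γ δ hα hinv2 (HH.d1 y i), Finset.sum_mul]
        exact Finset.sum_congr rfl fun p _ => by ring
      rw [Finset.sum_congr rfl this]
      exact sum_counit_left HH (δ ∘ₗ HH.α.toLinearMap) y
    have hR : (∑ i ∈ HH.T y, ∑ p ∈ HH.T (HH.d2 y i),
        δ (HH.α (HH.α (HH.d1 y i))) * (γ (HH.d1 (HH.d2 y i) p) * δ (HH.d2 (HH.d2 y i) p)))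
        = δ (HH.α (HH.α (HH.α y))) := by
      have : ∀ i ∈ HH.T y, (∑ p ∈ HH.T (HH.d2 y i),
          δ (HH.α (HH.α (HH.d1 y i))) * (γ (HH.d1 (HH.d2 y i) p) * δ (HH.d2 (HH.d2 y i) p)))
          = δ (HH.α (HH.α (HH.d1 y i))) * HH.counit (HH.d2 y i) := by
        intro i _
        rw [← Finset.mul_sum, hinv1]
      rw [Finset.sum_congr rfl this]
      exact sum_counit_right HH (δ ∘ₗ HH.α.toLinearMap ∘ₗ HH.α.toLinearMap) y
    rw [← hL, ← hR]
    exact h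
  have h := key (HH.α.symm (HH.α.symm x))
  rw [HH.α.apply_symm_apply, HH.α.apply_symm_apply] at h
  exact h.symm

end D1Aux
namespace D1Aux

variable {k : Type u} {H : Type v} [Field k] [AddCommGroup H] [Module k H]
variable (HH : HomHopf k H)

/-- `c ↦ ∑ e(c₁) d(c₂)` as a linear map. -/
noncomputable def cv (e d : H →ₗ[k] k) : H →ₗ[k] k :=
  (TensorProduct.lift (bf e d)) ∘ₗ HH.comul

lemma cv_eq (e d : H →ₗ[k] k) (c : H) :
    cv HH e d c = ∑ q ∈ HH.T c, e (HH.d1 c q) * d (HH.d2 c q) := by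
  simpa [cv] using (sum_B HH (bf e d) c).symm

lemma cv_alphainv (e d : H →ₗ[k] k) (c : H) :
    cv HH e d (HH.α.symm c)
      = ∑ q ∈ HH.T c, e (HH.α.symm (HH.d1 c q)) * d (HH.α.symm (HH.d2 c q)) := by
  rw [cv_eq]
  simpa using sum_alphainvB HH (bf e d) c

lemma xph (f g e d : H →ₗ[k] k) (x : H) :
    (∑ i ∈ HH.T x, ∑ p ∈ HH.T (HH.d1 x i), ∑ q ∈ HH.T (HH.d2 x i),
      f (HH.d1 (HH.d1 x i) p) * (g (HH.d2 (HH.d1 x i) p) *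
        (e (HH.d1 (HH.d2 x i) q) * d (HH.d2 (HH.d2 x i) q))))
  = ∑ i ∈ HH.T x, ∑ p ∈ HH.T (HH.d2 x i), ∑ q ∈ HH.T (HH.d1 (HH.d2 x i) p),
      f (HH.α (HH.d1 x i)) *
        (g (HH.α.symm (HH.d1 (HH.d1 (HH.d2 x i) p) q)) *
         (e (HH.α.symm (HH.d2 (HH.d1 (HH.d2 x i) p) q)) * d (HH.d2 (HH.d2 x i) p))) := by
  have step1 : (∑ i ∈ HH.T x, ∑ p ∈ HH.T (HH.d1 x i), ∑ q ∈ HH.T (HH.d2 x i),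
      f (HH.d1 (HH.d1 x i) p) * (g (HH.d2 (HH.d1 x i) p) *
        (e (HH.d1 (HH.d2 x i) q) * d (HH.d2 (HH.d2 x i) q))))
      = ∑ i ∈ HH.T x, ∑ p ∈ HH.T (HH.d1 x i),
          tri f g ((cv HH e d) ∘ₗ HH.α.symm.toLinearMap)
            (HH.d1 (HH.d1 x i) p) (HH.d2 (HH.d1 x i) p) (HH.α (HH.d2 x i)) := by
    refine Finset.sum_congr rfl fun i _ => Finset.sum_congr rfl fun p _ => ?_
    rw [← Finset.mul_sum, ← Finset.mul_sum, ← cv_eq]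
    simp [tri_apply]
  rw [step1, sum_coassoc HH _ x]
  have step2 : ∀ i ∈ HH.T x, (∑ p ∈ HH.T (HH.d2 x i),
      tri f g ((cv HH e d) ∘ₗ HH.α.symm.toLinearMap)
        (HH.α (HH.d1 x i)) (HH.d1 (HH.d2 x i) p) (HH.d2 (HH.d2 x i) p))
      = f (HH.α (HH.d1 x i)) * ∑ p ∈ HH.T (HH.d2 x i), ∑ q ∈ HH.T (HH.d2 (HH.d2 x i) p),
          g (HH.d1 (HH.d2 x i) p) *
            (e (HH.α.symm (HH.d1 (HH.d2 (HH.d2 x i) p) q)) *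
             d (HH.α.symm (HH.d2 (HH.d2 (HH.d2 x i) p) q))) := by
    intro i _
    rw [Finset.mul_sum]
    refine Finset.sum_congr rfl fun p _ => ?_
    rw [tri_apply]
    simp only [LinearMap.comp_apply, LinearEquiv.coe_coe]
    rw [cv_alphainv, Finset.mul_sum, Finset.mul_sum]
  rw [Finset.sum_congr rfl step2]
  refine Finset.sum_congr rfl fun i _ => ?_
  have h2 := sum_coassoc HH
    (tri (g ∘ₗ HH.α.symm.toLinearMap) (e ∘ₗ HH.α.symm.toLinearMap)
      (d ∘ₗ HH.α.symm.toLinearMap)) (HH.d2 x i)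
  simp only [tri_apply, LinearMap.comp_apply, LinearEquiv.coe_coe,
    HH.α.symm_apply_apply] at h2
  rw [← h2, Finset.mul_sum]
  exact Finset.sum_congr rfl fun p _ => Finset.mul_sum _ _ _

end D1Aux
namespace D1Aux

variable {k : Type u} {H : Type v} [Field k] [AddCommGroup H] [Module k H]
variable (HH : HomHopf k H)

lemma telm (A P Q D : H →ₗ[k] H →ₗ[k] k)
    (hP : ∀ a b, P (HH.α.symm a) (HH.α.symm b) = P a b)
    (hQ : ∀ a b, Q (HH.α.symm a) (HH.α.symm b) = Q a b)
    (hPQ : ∀ a b, (∑ p ∈ HH.T a, ∑ q ∈ HH.T b,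
        P (HH.d1 a p) (HH.d1 b q) * Q (HH.d2 a p) (HH.d2 b q))
        = HH.counit a * HH.counit b)
    (x y : H) :
    (∑ i ∈ HH.T x, ∑ j ∈ HH.T y,
     ∑ p ∈ HH.T (HH.d1 x i), ∑ r ∈ HH.T (HH.d1 y j),
     ∑ q ∈ HH.T (HH.d2 x i), ∑ s ∈ HH.T (HH.d2 y j),
       A (HH.d1 (HH.d1 x i) p) (HH.d1 (HH.d1 y j) r) *
       (P (HH.d2 (HH.d1 x i) p) (HH.d2 (HH.d1 y j) r) *
        (Q (HH.d1 (HH.d2 x i) q) (HH.d1 (HH.d2 y j) s) *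
         D (HH.d2 (HH.d2 x i) q) (HH.d2 (HH.d2 y j) s))))
  = ∑ i ∈ HH.T x, ∑ j ∈ HH.T y,
      A (HH.α (HH.d1 x i)) (HH.α (HH.d1 y j)) *
        D (HH.α (HH.d2 x i)) (HH.α (HH.d2 y j)) := by
  -- Phase 0: reorder (i,j,p,r,q,s) → (j,r,s,i,p,q)
  conv_lhs => rw [Finset.sum_comm]
  conv_lhs => enter [2,j,2,i]; rw [Finset.sum_comm]
  conv_lhs => enter [2,j]; rw [Finset.sum_comm]
  conv_lhs => enter [2,j,2,r,2,i,2,p]; rw [Finset.sum_comm]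
  conv_lhs => enter [2,j,2,r,2,i]; rw [Finset.sum_comm]
  conv_lhs => enter [2,j,2,r]; rw [Finset.sum_comm]
  -- Phase 1: xph in x
  refine Eq.trans (Finset.sum_congr rfl fun j _ => Finset.sum_congr rfl fun r _ =>
    Finset.sum_congr rfl fun s _ =>
      xph HH (A.flip (HH.d1 (HH.d1 y j) r)) (P.flip (HH.d2 (HH.d1 y j) r))
        (Q.flip (HH.d1 (HH.d2 y j) s)) (D.flip (HH.d2 (HH.d2 y j) s)) x) ?_
  -- Phase 2: reorder (j,r,s,i,p,q) → (i,p,q,j,r,s)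
  conv_lhs => enter [2,j,2,r]; rw [Finset.sum_comm]
  conv_lhs => enter [2,j]; rw [Finset.sum_comm]
  conv_lhs => rw [Finset.sum_comm]
  conv_lhs => enter [2,i,2,j,2,r]; rw [Finset.sum_comm]
  conv_lhs => enter [2,i,2,j]; rw [Finset.sum_comm]
  conv_lhs => enter [2,i]; rw [Finset.sum_comm]
  conv_lhs => enter [2,i,2,p,2,j,2,r]; rw [Finset.sum_comm]
  conv_lhs => enter [2,i,2,p,2,j]; rw [Finset.sum_comm]
  conv_lhs => enter [2,i,2,p]; rw [Finset.sum_comm]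
  -- Phase 3: xph in y
  refine Eq.trans (Finset.sum_congr rfl fun i _ => Finset.sum_congr rfl fun p _ =>
    Finset.sum_congr rfl fun q _ =>
      xph HH (A (HH.α (HH.d1 x i)))
        (P (HH.α.symm (HH.d1 (HH.d1 (HH.d2 x i) p) q)))
        (Q (HH.α.symm (HH.d2 (HH.d1 (HH.d2 x i) p) q)))
        (D (HH.d2 (HH.d2 x i) p)) y) ?_
  -- Phase 4: strip the α⁻¹'s using invariance of P and Q
  simp only [hP, hQ]
  -- Phase 5: reorder (i,p,q,j,r,s) → (i,j,p,r,q,s)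
  conv_lhs => enter [2,i,2,p]; rw [Finset.sum_comm]
  conv_lhs => enter [2,i]; rw [Finset.sum_comm]
  conv_lhs => enter [2,i,2,j,2,p]; rw [Finset.sum_comm]
  -- Phase 6: collapse
  have step6a : ∀ i ∈ HH.T x, ∀ j ∈ HH.T y, ∀ p ∈ HH.T (HH.d2 x i), ∀ r ∈ HH.T (HH.d2 y j),
      (∑ q ∈ HH.T (HH.d1 (HH.d2 x i) p), ∑ s ∈ HH.T (HH.d1 (HH.d2 y j) r),
        A (HH.α (HH.d1 x i)) (HH.α (HH.d1 y j)) *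
          (P (HH.d1 (HH.d1 (HH.d2 x i) p) q) (HH.d1 (HH.d1 (HH.d2 y j) r) s) *
           (Q (HH.d2 (HH.d1 (HH.d2 x i) p) q) (HH.d2 (HH.d1 (HH.d2 y j) r) s) *
            D (HH.d2 (HH.d2 x i) p) (HH.d2 (HH.d2 y j) r))))
      = HH.counit (HH.d1 (HH.d2 x i) p) *
          (HH.counit (HH.d1 (HH.d2 y j) r) *
            (A (HH.α (HH.d1 x i)) (HH.α (HH.d1 y j)) *
              D (HH.d2 (HH.d2 x i) p) (HH.d2 (HH.d2 y j) r))) := by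
    intro i _ j _ p _ r _
    have h := hPQ (HH.d1 (HH.d2 x i) p) (HH.d1 (HH.d2 y j) r)
    calc (∑ q ∈ HH.T (HH.d1 (HH.d2 x i) p), ∑ s ∈ HH.T (HH.d1 (HH.d2 y j) r),
        A (HH.α (HH.d1 x i)) (HH.α (HH.d1 y j)) *
          (P (HH.d1 (HH.d1 (HH.d2 x i) p) q) (HH.d1 (HH.d1 (HH.d2 y j) r) s) *
           (Q (HH.d2 (HH.d1 (HH.d2 x i) p) q) (HH.d2 (HH.d1 (HH.d2 y j) r) s) *
            D (HH.d2 (HH.d2 x i) p) (HH.d2 (HH.d2 y j) r))))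
        = (∑ q ∈ HH.T (HH.d1 (HH.d2 x i) p), ∑ s ∈ HH.T (HH.d1 (HH.d2 y j) r),
            P (HH.d1 (HH.d1 (HH.d2 x i) p) q) (HH.d1 (HH.d1 (HH.d2 y j) r) s) *
              Q (HH.d2 (HH.d1 (HH.d2 x i) p) q) (HH.d2 (HH.d1 (HH.d2 y j) r) s)) *
            (A (HH.α (HH.d1 x i)) (HH.α (HH.d1 y j)) *
              D (HH.d2 (HH.d2 x i) p) (HH.d2 (HH.d2 y j) r)) := by
          rw [Finset.sum_mul]
          refine Finset.sum_congr rfl fun q _ => ?_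
          rw [Finset.sum_mul]
          exact Finset.sum_congr rfl fun s _ => by ring
      _ = HH.counit (HH.d1 (HH.d2 x i) p) *
          (HH.counit (HH.d1 (HH.d2 y j) r) *
            (A (HH.α (HH.d1 x i)) (HH.α (HH.d1 y j)) *
              D (HH.d2 (HH.d2 x i) p) (HH.d2 (HH.d2 y j) r))) := by
          rw [h]; ring
  have step6b : ∀ i ∈ HH.T x, ∀ j ∈ HH.T y,
      (∑ p ∈ HH.T (HH.d2 x i), ∑ r ∈ HH.T (HH.d2 y j),
        HH.counit (HH.d1 (HH.d2 x i) p) *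
          (HH.counit (HH.d1 (HH.d2 y j) r) *
            (A (HH.α (HH.d1 x i)) (HH.α (HH.d1 y j)) *
              D (HH.d2 (HH.d2 x i) p) (HH.d2 (HH.d2 y j) r))))
      = A (HH.α (HH.d1 x i)) (HH.α (HH.d1 y j)) *
          D (HH.α (HH.d2 x i)) (HH.α (HH.d2 y j)) := by
    intro i _ j _
    have inner : ∀ p ∈ HH.T (HH.d2 x i),
        (∑ r ∈ HH.T (HH.d2 y j),
          HH.counit (HH.d1 (HH.d2 x i) p) *
            (HH.counit (HH.d1 (HH.d2 y j) r) *
              (A (HH.α (HH.d1 x i)) (HH.α (HH.d1 y j)) *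
                D (HH.d2 (HH.d2 x i) p) (HH.d2 (HH.d2 y j) r))))
        = HH.counit (HH.d1 (HH.d2 x i) p) *
            (A (HH.α (HH.d1 x i)) (HH.α (HH.d1 y j)) *
              D (HH.d2 (HH.d2 x i) p) (HH.α (HH.d2 y j))) := by
      intro p _
      have h := sum_counit_left HH (D (HH.d2 (HH.d2 x i) p)) (HH.d2 y j)
      calc (∑ r ∈ HH.T (HH.d2 y j),
          HH.counit (HH.d1 (HH.d2 x i) p) *
            (HH.counit (HH.d1 (HH.d2 y j) r) *
              (A (HH.α (HH.d1 x i)) (HH.α (HH.d1 y j)) *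
                D (HH.d2 (HH.d2 x i) p) (HH.d2 (HH.d2 y j) r))))
          = (∑ r ∈ HH.T (HH.d2 y j),
              HH.counit (HH.d1 (HH.d2 y j) r) * D (HH.d2 (HH.d2 x i) p) (HH.d2 (HH.d2 y j) r)) *
              (HH.counit (HH.d1 (HH.d2 x i) p) * A (HH.α (HH.d1 x i)) (HH.α (HH.d1 y j))) := by
            rw [Finset.sum_mul]
            exact Finset.sum_congr rfl fun r _ => by ring
        _ = HH.counit (HH.d1 (HH.d2 x i) p) *
            (A (HH.α (HH.d1 x i)) (HH.α (HH.d1 y j)) *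
              D (HH.d2 (HH.d2 x i) p) (HH.α (HH.d2 y j))) := by rw [h]; ring
    have h := sum_counit_left HH ((D.flip (HH.α (HH.d2 y j)))) (HH.d2 x i)
    calc (∑ p ∈ HH.T (HH.d2 x i), ∑ r ∈ HH.T (HH.d2 y j),
        HH.counit (HH.d1 (HH.d2 x i) p) *
          (HH.counit (HH.d1 (HH.d2 y j) r) *
            (A (HH.α (HH.d1 x i)) (HH.α (HH.d1 y j)) *
              D (HH.d2 (HH.d2 x i) p) (HH.d2 (HH.d2 y j) r))))
        = ∑ p ∈ HH.T (HH.d2 x i),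
            HH.counit (HH.d1 (HH.d2 x i) p) *
              (A (HH.α (HH.d1 x i)) (HH.α (HH.d1 y j)) *
                D (HH.d2 (HH.d2 x i) p) (HH.α (HH.d2 y j))) :=
          Finset.sum_congr rfl inner
      _ = (∑ p ∈ HH.T (HH.d2 x i),
            HH.counit (HH.d1 (HH.d2 x i) p) * D (HH.d2 (HH.d2 x i) p) (HH.α (HH.d2 y j))) *
            A (HH.α (HH.d1 x i)) (HH.α (HH.d1 y j)) := by
          rw [Finset.sum_mul]
          exact Finset.sum_congr rfl fun p _ => by ring
      _ = A (HH.α (HH.d1 x i)) (HH.α (HH.d1 y j)) *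
            D (HH.α (HH.d2 x i)) (HH.α (HH.d2 y j)) := by
          simp only [LinearMap.flip_apply] at h
          rw [h]; ring
  exact Finset.sum_congr rfl fun i hi => Finset.sum_congr rfl fun j hj =>
    (Finset.sum_congr rfl fun p hp => Finset.sum_congr rfl fun r hr =>
      step6a i hi j hj p hp r hr).trans (step6b i hi j hj)

end D1Aux
namespace D1Aux

variable {k : Type u} {H : Type v} [Field k] [AddCommGroup H] [Module k H]
variable (HH : HomHopf k H)

lemma sum_alpha2B (B : H →ₗ[k] H →ₗ[k] k) (x : H) :
    ∑ i ∈ HH.T (HH.α (HH.α x)), B (HH.d1 (HH.α (HH.α x)) i) (HH.d2 (HH.α (HH.α x)) i)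
      = ∑ i ∈ HH.T x, B (HH.α (HH.α (HH.d1 x i))) (HH.α (HH.α (HH.d2 x i))) := by
  rw [sum_alphaB]
  have := sum_alphaB HH (B.compl₁₂ HH.α.toLinearMap HH.α.toLinearMap) x
  simpa using this

section WithGamma

variable (γ δ : H →ₗ[k] k)
variable (hone : γ HH.one = 1)
variable (hα : ∀ h, γ (HH.α h) = γ h)
variable (hinv1 : ∀ h, ∑ i ∈ HH.T h, γ (HH.d1 h i) * δ (HH.d2 h i) = HH.counit h)
variable (hinv2 : ∀ h, ∑ i ∈ HH.T h, δ (HH.d1 h i) * γ (HH.d2 h i) = HH.counit h)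

lemma delta_alphainv (hα : ∀ h, γ (HH.α h) = γ h)
    (hinv1 : ∀ h, ∑ i ∈ HH.T h, γ (HH.d1 h i) * δ (HH.d2 h i) = HH.counit h)
    (hinv2 : ∀ h, ∑ i ∈ HH.T h, δ (HH.d1 h i) * γ (HH.d2 h i) = HH.counit h)
    (x : H) : δ (HH.α.symm x) = δ x := by
  have := delta_alpha HH γ δ hα hinv1 hinv2 (HH.α.symm x)
  rw [HH.α.apply_symm_apply] at this; exact this.symm

lemma norm_left (hone : γ HH.one = 1) (hα : ∀ h, γ (HH.α h) = γ h)
    (hinv1 : ∀ h, ∑ i ∈ HH.T h, γ (HH.d1 h i) * δ (HH.d2 h i) = HH.counit h)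
    (hinv2 : ∀ h, ∑ i ∈ HH.T h, δ (HH.d1 h i) * γ (HH.d2 h i) = HH.counit h)
    (h : H) :
    (∑ i ∈ HH.T HH.one, ∑ j ∈ HH.T h,
      γ (HH.d1 HH.one i) * γ (HH.d1 h j) * δ (HH.mul (HH.d2 HH.one i) (HH.d2 h j)))
    = HH.counit h := by
  rw [Finset.sum_comm]
  have key : ∀ j ∈ HH.T h,
      (∑ i ∈ HH.T HH.one,
        γ (HH.d1 HH.one i) * γ (HH.d1 h j) * δ (HH.mul (HH.d2 HH.one i) (HH.d2 h j)))
      = γ (HH.d1 h j) * δ (HH.d2 h j) := by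
    intro j _
    have h1 := sum_one HH (bf γ (γ (HH.d1 h j) • (δ ∘ₗ (HH.mul.flip (HH.d2 h j)))))
    simp only [bf_apply, LinearMap.smul_apply, LinearMap.comp_apply, LinearMap.flip_apply,
      smul_eq_mul] at h1
    calc (∑ i ∈ HH.T HH.one,
        γ (HH.d1 HH.one i) * γ (HH.d1 h j) * δ (HH.mul (HH.d2 HH.one i) (HH.d2 h j)))
        = ∑ i ∈ HH.T HH.one,
            γ (HH.d1 HH.one i) * (γ (HH.d1 h j) * δ (HH.mul (HH.d2 HH.one i) (HH.d2 h j))) :=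
          Finset.sum_congr rfl fun i _ => by ring
      _ = γ HH.one * (γ (HH.d1 h j) * δ (HH.mul HH.one (HH.d2 h j))) := h1
      _ = γ (HH.d1 h j) * δ (HH.d2 h j) := by
          rw [hone, HH.one_mul, delta_alpha HH γ δ hα hinv1 hinv2]; ring
  rw [Finset.sum_congr rfl key, hinv1]

lemma norm_right (hone : γ HH.one = 1) (hα : ∀ h, γ (HH.α h) = γ h)
    (hinv1 : ∀ h, ∑ i ∈ HH.T h, γ (HH.d1 h i) * δ (HH.d2 h i) = HH.counit h)
    (hinv2 : ∀ h, ∑ i ∈ HH.T h, δ (HH.d1 h i) * γ (HH.d2 h i) = HH.counit h)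
    (h : H) :
    (∑ i ∈ HH.T h, ∑ j ∈ HH.T HH.one,
      γ (HH.d1 h i) * γ (HH.d1 HH.one j) * δ (HH.mul (HH.d2 h i) (HH.d2 HH.one j)))
    = HH.counit h := by
  have key : ∀ i ∈ HH.T h,
      (∑ j ∈ HH.T HH.one,
        γ (HH.d1 h i) * γ (HH.d1 HH.one j) * δ (HH.mul (HH.d2 h i) (HH.d2 HH.one j)))
      = γ (HH.d1 h i) * δ (HH.d2 h i) := by
    intro i _
    have h1 := sum_one HH (bf (γ (HH.d1 h i) • γ) (δ ∘ₗ (HH.mul (HH.d2 h i))))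
    simp only [bf_apply, LinearMap.smul_apply, LinearMap.comp_apply, smul_eq_mul] at h1
    calc (∑ j ∈ HH.T HH.one,
        γ (HH.d1 h i) * γ (HH.d1 HH.one j) * δ (HH.mul (HH.d2 h i) (HH.d2 HH.one j)))
        = ∑ j ∈ HH.T HH.one,
            γ (HH.d1 h i) * γ (HH.d1 HH.one j) * δ (HH.mul (HH.d2 h i) (HH.d2 HH.one j)) := rfl
      _ = γ (HH.d1 h i) * γ HH.one * δ (HH.mul (HH.d2 h i) HH.one) := h1
      _ = γ (HH.d1 h i) * δ (HH.d2 h i) := by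
          rw [hone, HH.mul_one, delta_alpha HH γ δ hα hinv1 hinv2]; ring
  rw [Finset.sum_congr rfl key, hinv1]

lemma alpha_inv2 (hα : ∀ h, γ (HH.α h) = γ h)
    (hinv1 : ∀ h, ∑ i ∈ HH.T h, γ (HH.d1 h i) * δ (HH.d2 h i) = HH.counit h)
    (hinv2 : ∀ h, ∑ i ∈ HH.T h, δ (HH.d1 h i) * γ (HH.d2 h i) = HH.counit h)
    (h g : H) :
    (∑ i ∈ HH.T (HH.α h), ∑ j ∈ HH.T (HH.α g),
      γ (HH.d1 (HH.α h) i) * γ (HH.d1 (HH.α g) j) *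
        δ (HH.mul (HH.d2 (HH.α h) i) (HH.d2 (HH.α g) j)))
    = ∑ i ∈ HH.T h, ∑ j ∈ HH.T g,
        γ (HH.d1 h i) * γ (HH.d1 g j) * δ (HH.mul (HH.d2 h i) (HH.d2 g j)) := by
  rw [Finset.sum_comm]
  have key1 : ∀ j ∈ HH.T (HH.α g),
      (∑ i ∈ HH.T (HH.α h),
        γ (HH.d1 (HH.α h) i) * γ (HH.d1 (HH.α g) j) *
          δ (HH.mul (HH.d2 (HH.α h) i) (HH.d2 (HH.α g) j)))
      = ∑ i ∈ HH.T h,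
          γ (HH.d1 h i) * γ (HH.d1 (HH.α g) j) *
            δ (HH.mul (HH.α (HH.d2 h i)) (HH.d2 (HH.α g) j)) := by
    intro j _
    have h1 := sum_alphaB HH
      (bf γ (γ (HH.d1 (HH.α g) j) • (δ ∘ₗ (HH.mul.flip (HH.d2 (HH.α g) j))))) h
    simp only [bf_apply, LinearMap.smul_apply, LinearMap.comp_apply, LinearMap.flip_apply,
      smul_eq_mul] at h1
    calc (∑ i ∈ HH.T (HH.α h),
        γ (HH.d1 (HH.α h) i) * γ (HH.d1 (HH.α g) j) *
          δ (HH.mul (HH.d2 (HH.α h) i) (HH.d2 (HH.α g) j)))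
        = ∑ i ∈ HH.T (HH.α h),
            γ (HH.d1 (HH.α h) i) * (γ (HH.d1 (HH.α g) j) *
              δ (HH.mul (HH.d2 (HH.α h) i) (HH.d2 (HH.α g) j))) :=
          Finset.sum_congr rfl fun i _ => by ring
      _ = ∑ i ∈ HH.T h,
            γ (HH.α (HH.d1 h i)) * (γ (HH.d1 (HH.α g) j) *
              δ (HH.mul (HH.α (HH.d2 h i)) (HH.d2 (HH.α g) j))) := h1
      _ = ∑ i ∈ HH.T h,
            γ (HH.d1 h i) * γ (HH.d1 (HH.α g) j) *
              δ (HH.mul (HH.α (HH.d2 h i)) (HH.d2 (HH.α g) j)) := by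
          refine Finset.sum_congr rfl fun i _ => ?_
          rw [hα]; ring
  rw [Finset.sum_congr rfl key1, Finset.sum_comm]
  refine Finset.sum_congr rfl fun i _ => ?_
  have h2 := sum_alphaB HH
    (bf (γ (HH.d1 h i) • γ) (δ ∘ₗ (HH.mul (HH.α (HH.d2 h i))))) g
  simp only [bf_apply, LinearMap.smul_apply, LinearMap.comp_apply, smul_eq_mul] at h2
  calc (∑ j ∈ HH.T (HH.α g),
      γ (HH.d1 h i) * γ (HH.d1 (HH.α g) j) *
        δ (HH.mul (HH.α (HH.d2 h i)) (HH.d2 (HH.α g) j)))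
      = ∑ j ∈ HH.T g,
          γ (HH.d1 h i) * γ (HH.α (HH.d1 g j)) *
            δ (HH.mul (HH.α (HH.d2 h i)) (HH.α (HH.d2 g j))) := h2
    _ = ∑ j ∈ HH.T g,
          γ (HH.d1 h i) * γ (HH.d1 g j) * δ (HH.mul (HH.d2 h i) (HH.d2 g j)) := by
        refine Finset.sum_congr rfl fun j _ => ?_
        rw [hα, ← HH.α_mul, delta_alpha HH γ δ hα hinv1 hinv2]

end WithGamma

end D1Aux
namespace D1Aux

variable {k : Type u} {H : Type v} [Field k] [AddCommGroup H] [Module k H]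
variable (HH : HomHopf k H)
variable (γ δ : H →ₗ[k] k)

section PQ

lemma hP_mul (f : H →ₗ[k] k) (hf : ∀ x, f (HH.α.symm x) = f x) :
    ∀ a b, (HH.mul.compr₂ f) (HH.α.symm a) (HH.α.symm b) = (HH.mul.compr₂ f) a b := by
  intro a b
  simp only [LinearMap.compr₂_apply]
  rw [← alphainv_mul, hf]

lemma hP_bf (f g : H →ₗ[k] k) (hf : ∀ x, f (HH.α.symm x) = f x)
    (hg : ∀ x, g (HH.α.symm x) = g x) :
    ∀ a b, (bf f g) (HH.α.symm a) (HH.α.symm b) = (bf f g) a b := by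
  intro a b; simp only [bf_apply, hf, hg]

lemma hPQ_mul
    (hinvmul : ∀ h, ∑ i ∈ HH.T h, δ (HH.d1 h i) * γ (HH.d2 h i) = HH.counit h) :
    ∀ a b, (∑ p ∈ HH.T a, ∑ q ∈ HH.T b,
        (HH.mul.compr₂ δ) (HH.d1 a p) (HH.d1 b q) *
          (HH.mul.compr₂ γ) (HH.d2 a p) (HH.d2 b q))
      = HH.counit a * HH.counit b := by
  intro a b
  have h1 := sum_mulB HH (bf δ γ) a b
  simp only [bf_apply, LinearMap.compr₂_apply] at h1 ⊢
  rw [← h1, hinvmul, HH.counit_mul]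

lemma hPQ_bf
    (hinvmul : ∀ h, ∑ i ∈ HH.T h, δ (HH.d1 h i) * γ (HH.d2 h i) = HH.counit h) :
    ∀ a b, (∑ p ∈ HH.T a, ∑ q ∈ HH.T b,
        (bf δ δ) (HH.d1 a p) (HH.d1 b q) * (bf γ γ) (HH.d2 a p) (HH.d2 b q))
      = HH.counit a * HH.counit b := by
  intro a b
  simp only [bf_apply]
  rw [← hinvmul a, ← hinvmul b, Finset.sum_mul_sum]
  exact Finset.sum_congr rfl fun p _ => Finset.sum_congr rfl fun q _ => by ring

end PQ

lemma convinv_right (hα : ∀ h, γ (HH.α h) = γ h)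
    (hinv1 : ∀ h, ∑ i ∈ HH.T h, γ (HH.d1 h i) * δ (HH.d2 h i) = HH.counit h)
    (hinv2 : ∀ h, ∑ i ∈ HH.T h, δ (HH.d1 h i) * γ (HH.d2 h i) = HH.counit h)
    (h g : H) :
    (∑ i ∈ HH.T h, ∑ j ∈ HH.T g,
      (∑ p ∈ HH.T (HH.d1 h i), ∑ r ∈ HH.T (HH.d1 g j),
        γ (HH.d1 (HH.d1 h i) p) * γ (HH.d1 (HH.d1 g j) r) *
          δ (HH.mul (HH.d2 (HH.d1 h i) p) (HH.d2 (HH.d1 g j) r))) *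
      ∑ q ∈ HH.T (HH.d2 h i), ∑ s ∈ HH.T (HH.d2 g j),
        γ (HH.mul (HH.d1 (HH.d2 h i) q) (HH.d1 (HH.d2 g j) s)) *
          (δ (HH.d2 (HH.d2 h i) q) * δ (HH.d2 (HH.d2 g j) s)))
    = HH.counit h * HH.counit g := by
  have hδα : ∀ x, δ (HH.α x) = δ x := delta_alpha HH γ δ hα hinv1 hinv2
  have hδσ : ∀ x, δ (HH.α.symm x) = δ x := delta_alphainv HH γ δ hα hinv1 hinv2
  have tel := telm HH (bf γ γ) (HH.mul.compr₂ δ) (HH.mul.compr₂ γ) (bf δ δ)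
    (hP_mul HH δ hδσ) (hP_mul HH γ (gamma_alphainv HH γ hα)) (hPQ_mul HH γ δ hinv2) h g
  calc (∑ i ∈ HH.T h, ∑ j ∈ HH.T g,
      (∑ p ∈ HH.T (HH.d1 h i), ∑ r ∈ HH.T (HH.d1 g j),
        γ (HH.d1 (HH.d1 h i) p) * γ (HH.d1 (HH.d1 g j) r) *
          δ (HH.mul (HH.d2 (HH.d1 h i) p) (HH.d2 (HH.d1 g j) r))) *
      ∑ q ∈ HH.T (HH.d2 h i), ∑ s ∈ HH.T (HH.d2 g j),
        γ (HH.mul (HH.d1 (HH.d2 h i) q) (HH.d1 (HH.d2 g j) s)) *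
          (δ (HH.d2 (HH.d2 h i) q) * δ (HH.d2 (HH.d2 g j) s)))
      = ∑ i ∈ HH.T h, ∑ j ∈ HH.T g,
        ∑ p ∈ HH.T (HH.d1 h i), ∑ r ∈ HH.T (HH.d1 g j),
        ∑ q ∈ HH.T (HH.d2 h i), ∑ s ∈ HH.T (HH.d2 g j),
          (bf γ γ) (HH.d1 (HH.d1 h i) p) (HH.d1 (HH.d1 g j) r) *
          ((HH.mul.compr₂ δ) (HH.d2 (HH.d1 h i) p) (HH.d2 (HH.d1 g j) r) *
           ((HH.mul.compr₂ γ) (HH.d1 (HH.d2 h i) q) (HH.d1 (HH.d2 g j) s) *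
            (bf δ δ) (HH.d2 (HH.d2 h i) q) (HH.d2 (HH.d2 g j) s))) := by
        refine Finset.sum_congr rfl fun i _ => Finset.sum_congr rfl fun j _ => ?_
        rw [Finset.sum_mul]
        refine Finset.sum_congr rfl fun p _ => ?_
        rw [Finset.sum_mul]
        refine Finset.sum_congr rfl fun r _ => ?_
        rw [Finset.mul_sum]
        refine Finset.sum_congr rfl fun q _ => ?_
        rw [Finset.mul_sum]
        refine Finset.sum_congr rfl fun s _ => ?_
        simp only [bf_apply, LinearMap.compr₂_apply]
        ring
    _ = ∑ i ∈ HH.T h, ∑ j ∈ HH.T g,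
          (bf γ γ) (HH.α (HH.d1 h i)) (HH.α (HH.d1 g j)) *
            (bf δ δ) (HH.α (HH.d2 h i)) (HH.α (HH.d2 g j)) := tel
    _ = HH.counit h * HH.counit g := by
        simp only [bf_apply, hα, hδα]
        rw [← hinv1 h, ← hinv1 g, Finset.sum_mul_sum]
        exact Finset.sum_congr rfl fun i _ => Finset.sum_congr rfl fun j _ => by ring

lemma convinv_left (hα : ∀ h, γ (HH.α h) = γ h)
    (hinv1 : ∀ h, ∑ i ∈ HH.T h, γ (HH.d1 h i) * δ (HH.d2 h i) = HH.counit h)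
    (hinv2 : ∀ h, ∑ i ∈ HH.T h, δ (HH.d1 h i) * γ (HH.d2 h i) = HH.counit h)
    (h g : H) :
    (∑ i ∈ HH.T h, ∑ j ∈ HH.T g,
      (∑ p ∈ HH.T (HH.d1 h i), ∑ r ∈ HH.T (HH.d1 g j),
        γ (HH.mul (HH.d1 (HH.d1 h i) p) (HH.d1 (HH.d1 g j) r)) *
          (δ (HH.d2 (HH.d1 h i) p) * δ (HH.d2 (HH.d1 g j) r))) *
      ∑ q ∈ HH.T (HH.d2 h i), ∑ s ∈ HH.T (HH.d2 g j),
        γ (HH.d1 (HH.d2 h i) q) * γ (HH.d1 (HH.d2 g j) s) *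
          δ (HH.mul (HH.d2 (HH.d2 h i) q) (HH.d2 (HH.d2 g j) s)))
    = HH.counit h * HH.counit g := by
  have hδα : ∀ x, δ (HH.α x) = δ x := delta_alpha HH γ δ hα hinv1 hinv2
  have hδσ : ∀ x, δ (HH.α.symm x) = δ x := delta_alphainv HH γ δ hα hinv1 hinv2
  have hγσ : ∀ x, γ (HH.α.symm x) = γ x := gamma_alphainv HH γ hα
  have tel := telm HH (HH.mul.compr₂ γ) (bf δ δ) (bf γ γ) (HH.mul.compr₂ δ)
    (hP_bf HH δ δ hδσ hδσ) (hP_bf HH γ γ hγσ hγσ) (hPQ_bf HH γ δ hinv2) h g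
  calc (∑ i ∈ HH.T h, ∑ j ∈ HH.T g,
      (∑ p ∈ HH.T (HH.d1 h i), ∑ r ∈ HH.T (HH.d1 g j),
        γ (HH.mul (HH.d1 (HH.d1 h i) p) (HH.d1 (HH.d1 g j) r)) *
          (δ (HH.d2 (HH.d1 h i) p) * δ (HH.d2 (HH.d1 g j) r))) *
      ∑ q ∈ HH.T (HH.d2 h i), ∑ s ∈ HH.T (HH.d2 g j),
        γ (HH.d1 (HH.d2 h i) q) * γ (HH.d1 (HH.d2 g j) s) *
          δ (HH.mul (HH.d2 (HH.d2 h i) q) (HH.d2 (HH.d2 g j) s)))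
      = ∑ i ∈ HH.T h, ∑ j ∈ HH.T g,
        ∑ p ∈ HH.T (HH.d1 h i), ∑ r ∈ HH.T (HH.d1 g j),
        ∑ q ∈ HH.T (HH.d2 h i), ∑ s ∈ HH.T (HH.d2 g j),
          (HH.mul.compr₂ γ) (HH.d1 (HH.d1 h i) p) (HH.d1 (HH.d1 g j) r) *
          ((bf δ δ) (HH.d2 (HH.d1 h i) p) (HH.d2 (HH.d1 g j) r) *
           ((bf γ γ) (HH.d1 (HH.d2 h i) q) (HH.d1 (HH.d2 g j) s) *
            (HH.mul.compr₂ δ) (HH.d2 (HH.d2 h i) q) (HH.d2 (HH.d2 g j) s))) := by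
        refine Finset.sum_congr rfl fun i _ => Finset.sum_congr rfl fun j _ => ?_
        rw [Finset.sum_mul]
        refine Finset.sum_congr rfl fun p _ => ?_
        rw [Finset.sum_mul]
        refine Finset.sum_congr rfl fun r _ => ?_
        rw [Finset.mul_sum]
        refine Finset.sum_congr rfl fun q _ => ?_
        rw [Finset.mul_sum]
        refine Finset.sum_congr rfl fun s _ => ?_
        simp only [bf_apply, LinearMap.compr₂_apply]
        ring
    _ = ∑ i ∈ HH.T h, ∑ j ∈ HH.T g,
          (HH.mul.compr₂ γ) (HH.α (HH.d1 h i)) (HH.α (HH.d1 g j)) *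
            (HH.mul.compr₂ δ) (HH.α (HH.d2 h i)) (HH.α (HH.d2 g j)) := tel
    _ = HH.counit h * HH.counit g := by
        simp only [LinearMap.compr₂_apply, ← HH.α_mul, hα, hδα]
        have h1 := sum_mulB HH (bf γ δ) h g
        simp only [bf_apply] at h1
        rw [← h1, hinv1, HH.counit_mul]

end D1Aux
namespace D1Aux

variable {k : Type u} {H : Type v} [Field k] [AddCommGroup H] [Module k H]
variable (HH : HomHopf k H)
variable (γ δ : H →ₗ[k] k)

lemma cocyL (hα : ∀ h, γ (HH.α h) = γ h)
    (hinv1 : ∀ h, ∑ i ∈ HH.T h, γ (HH.d1 h i) * δ (HH.d2 h i) = HH.counit h)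
    (hinv2 : ∀ h, ∑ i ∈ HH.T h, δ (HH.d1 h i) * γ (HH.d2 h i) = HH.counit h)
    (h l m : H) :
    (∑ j ∈ HH.T l, ∑ n ∈ HH.T m,
      (∑ p ∈ HH.T (HH.d1 l j), ∑ r ∈ HH.T (HH.d1 m n),
        γ (HH.d1 (HH.d1 l j) p) * γ (HH.d1 (HH.d1 m n) r) *
          δ (HH.mul (HH.d2 (HH.d1 l j) p) (HH.d2 (HH.d1 m n) r))) *
      ∑ a ∈ HH.T (HH.α (HH.α h)), ∑ b ∈ HH.T (HH.mul (HH.d2 l j) (HH.d2 m n)),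
        γ (HH.d1 (HH.α (HH.α h)) a) * γ (HH.d1 (HH.mul (HH.d2 l j) (HH.d2 m n)) b) *
          δ (HH.mul (HH.d2 (HH.α (HH.α h)) a)
              (HH.d2 (HH.mul (HH.d2 l j) (HH.d2 m n)) b)))
    = ∑ a ∈ HH.T h, ∑ j ∈ HH.T l, ∑ n ∈ HH.T m,
        γ (HH.α (HH.α (HH.d1 h a))) *
          (γ (HH.α (HH.d1 l j)) * γ (HH.α (HH.d1 m n)) *
            δ (HH.mul (HH.α (HH.α (HH.d2 h a)))
                (HH.mul (HH.α (HH.d2 l j)) (HH.α (HH.d2 m n))))) := by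
  have hδα : ∀ x, δ (HH.α x) = δ x := delta_alpha HH γ δ hα hinv1 hinv2
  have hδσ : ∀ x, δ (HH.α.symm x) = δ x := delta_alphainv HH γ δ hα hinv1 hinv2
  have hγσ : ∀ x, γ (HH.α.symm x) = γ x := gamma_alphainv HH γ hα
  -- Step A : rewrite the second bracket
  have expA : ∀ j ∈ HH.T l, ∀ n ∈ HH.T m,
      (∑ a ∈ HH.T (HH.α (HH.α h)), ∑ b ∈ HH.T (HH.mul (HH.d2 l j) (HH.d2 m n)),
        γ (HH.d1 (HH.α (HH.α h)) a) * γ (HH.d1 (HH.mul (HH.d2 l j) (HH.d2 m n)) b) *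
          δ (HH.mul (HH.d2 (HH.α (HH.α h)) a)
              (HH.d2 (HH.mul (HH.d2 l j) (HH.d2 m n)) b)))
      = ∑ a ∈ HH.T h, ∑ q ∈ HH.T (HH.d2 l j), ∑ s ∈ HH.T (HH.d2 m n),
          γ (HH.α (HH.α (HH.d1 h a))) *
            (γ (HH.mul (HH.d1 (HH.d2 l j) q) (HH.d1 (HH.d2 m n) s)) *
              δ (HH.mul (HH.α (HH.α (HH.d2 h a)))
                  (HH.mul (HH.d2 (HH.d2 l j) q) (HH.d2 (HH.d2 m n) s)))) := by
    intro j _ n _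
    rw [Finset.sum_comm]
    calc (∑ b ∈ HH.T (HH.mul (HH.d2 l j) (HH.d2 m n)), ∑ a ∈ HH.T (HH.α (HH.α h)),
        γ (HH.d1 (HH.α (HH.α h)) a) * γ (HH.d1 (HH.mul (HH.d2 l j) (HH.d2 m n)) b) *
          δ (HH.mul (HH.d2 (HH.α (HH.α h)) a)
              (HH.d2 (HH.mul (HH.d2 l j) (HH.d2 m n)) b)))
        = ∑ b ∈ HH.T (HH.mul (HH.d2 l j) (HH.d2 m n)), ∑ a ∈ HH.T h,
            γ (HH.α (HH.α (HH.d1 h a))) *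
              (γ (HH.d1 (HH.mul (HH.d2 l j) (HH.d2 m n)) b) *
                δ (HH.mul (HH.α (HH.α (HH.d2 h a)))
                    (HH.d2 (HH.mul (HH.d2 l j) (HH.d2 m n)) b))) := by
          refine Finset.sum_congr rfl fun b _ => ?_
          have h1 := sum_alpha2B HH
            (bf γ (γ (HH.d1 (HH.mul (HH.d2 l j) (HH.d2 m n)) b) •
              (δ ∘ₗ HH.mul.flip (HH.d2 (HH.mul (HH.d2 l j) (HH.d2 m n)) b)))) h
          simp only [bf_apply, LinearMap.smul_apply, LinearMap.comp_apply,
            LinearMap.flip_apply, smul_eq_mul] at h1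
          rw [← h1]
          exact Finset.sum_congr rfl fun a _ => by ring
      _ = ∑ a ∈ HH.T h, ∑ b ∈ HH.T (HH.mul (HH.d2 l j) (HH.d2 m n)),
            γ (HH.α (HH.α (HH.d1 h a))) *
              (γ (HH.d1 (HH.mul (HH.d2 l j) (HH.d2 m n)) b) *
                δ (HH.mul (HH.α (HH.α (HH.d2 h a)))
                    (HH.d2 (HH.mul (HH.d2 l j) (HH.d2 m n)) b))) := Finset.sum_comm
      _ = ∑ a ∈ HH.T h, ∑ q ∈ HH.T (HH.d2 l j), ∑ s ∈ HH.T (HH.d2 m n),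
            γ (HH.α (HH.α (HH.d1 h a))) *
              (γ (HH.mul (HH.d1 (HH.d2 l j) q) (HH.d1 (HH.d2 m n) s)) *
                δ (HH.mul (HH.α (HH.α (HH.d2 h a)))
                    (HH.mul (HH.d2 (HH.d2 l j) q) (HH.d2 (HH.d2 m n) s)))) := by
          refine Finset.sum_congr rfl fun a _ => ?_
          have h2 := sum_mulB HH (bf γ (δ ∘ₗ HH.mul (HH.α (HH.α (HH.d2 h a)))))
            (HH.d2 l j) (HH.d2 m n)
          simp only [bf_apply, LinearMap.comp_apply] at h2
          rw [← Finset.mul_sum, h2, Finset.mul_sum]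
          refine Finset.sum_congr rfl fun q _ => ?_
          rw [Finset.mul_sum]
  -- rewrite brackets, expand products
  calc (∑ j ∈ HH.T l, ∑ n ∈ HH.T m,
      (∑ p ∈ HH.T (HH.d1 l j), ∑ r ∈ HH.T (HH.d1 m n),
        γ (HH.d1 (HH.d1 l j) p) * γ (HH.d1 (HH.d1 m n) r) *
          δ (HH.mul (HH.d2 (HH.d1 l j) p) (HH.d2 (HH.d1 m n) r))) *
      ∑ a ∈ HH.T (HH.α (HH.α h)), ∑ b ∈ HH.T (HH.mul (HH.d2 l j) (HH.d2 m n)),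
        γ (HH.d1 (HH.α (HH.α h)) a) * γ (HH.d1 (HH.mul (HH.d2 l j) (HH.d2 m n)) b) *
          δ (HH.mul (HH.d2 (HH.α (HH.α h)) a)
              (HH.d2 (HH.mul (HH.d2 l j) (HH.d2 m n)) b)))
      = ∑ j ∈ HH.T l, ∑ n ∈ HH.T m,
        ∑ p ∈ HH.T (HH.d1 l j), ∑ r ∈ HH.T (HH.d1 m n),
        ∑ a ∈ HH.T h, ∑ q ∈ HH.T (HH.d2 l j), ∑ s ∈ HH.T (HH.d2 m n),
          (γ (HH.d1 (HH.d1 l j) p) * γ (HH.d1 (HH.d1 m n) r) *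
            δ (HH.mul (HH.d2 (HH.d1 l j) p) (HH.d2 (HH.d1 m n) r))) *
          (γ (HH.α (HH.α (HH.d1 h a))) *
            (γ (HH.mul (HH.d1 (HH.d2 l j) q) (HH.d1 (HH.d2 m n) s)) *
              δ (HH.mul (HH.α (HH.α (HH.d2 h a)))
                  (HH.mul (HH.d2 (HH.d2 l j) q) (HH.d2 (HH.d2 m n) s))))) := by
        refine Finset.sum_congr rfl fun j hj => Finset.sum_congr rfl fun n hn => ?_
        rw [expA j hj n hn, Finset.sum_mul]
        refine Finset.sum_congr rfl fun p _ => ?_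
        rw [Finset.sum_mul]
        refine Finset.sum_congr rfl fun r _ => ?_
        rw [Finset.mul_sum]
        refine Finset.sum_congr rfl fun a _ => ?_
        rw [Finset.mul_sum]
        refine Finset.sum_congr rfl fun q _ => ?_
        rw [Finset.mul_sum]
    _ = ∑ a ∈ HH.T h, ∑ j ∈ HH.T l, ∑ n ∈ HH.T m,
        ∑ p ∈ HH.T (HH.d1 l j), ∑ r ∈ HH.T (HH.d1 m n),
        ∑ q ∈ HH.T (HH.d2 l j), ∑ s ∈ HH.T (HH.d2 m n),
          (γ (HH.d1 (HH.d1 l j) p) * γ (HH.d1 (HH.d1 m n) r) *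
            δ (HH.mul (HH.d2 (HH.d1 l j) p) (HH.d2 (HH.d1 m n) r))) *
          (γ (HH.α (HH.α (HH.d1 h a))) *
            (γ (HH.mul (HH.d1 (HH.d2 l j) q) (HH.d1 (HH.d2 m n) s)) *
              δ (HH.mul (HH.α (HH.α (HH.d2 h a)))
                  (HH.mul (HH.d2 (HH.d2 l j) q) (HH.d2 (HH.d2 m n) s))))) := by
        conv_lhs => enter [2,j,2,n,2,p]; rw [Finset.sum_comm]
        conv_lhs => enter [2,j,2,n]; rw [Finset.sum_comm]
        conv_lhs => enter [2,j]; rw [Finset.sum_comm]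
        conv_lhs => rw [Finset.sum_comm]
    _ = ∑ a ∈ HH.T h, ∑ j ∈ HH.T l, ∑ n ∈ HH.T m,
        γ (HH.α (HH.α (HH.d1 h a))) *
          (γ (HH.α (HH.d1 l j)) * γ (HH.α (HH.d1 m n)) *
            δ (HH.mul (HH.α (HH.α (HH.d2 h a)))
                (HH.mul (HH.α (HH.d2 l j)) (HH.α (HH.d2 m n))))) := by
        refine Finset.sum_congr rfl fun a _ => ?_
        have tel := telm HH (bf γ γ) (HH.mul.compr₂ δ) (HH.mul.compr₂ γ)
          (γ (HH.α (HH.α (HH.d1 h a))) •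
            (HH.mul.compr₂ (δ ∘ₗ HH.mul (HH.α (HH.α (HH.d2 h a))))))
          (hP_mul HH δ hδσ) (hP_mul HH γ hγσ) (hPQ_mul HH γ δ hinv2) l m
        calc (∑ j ∈ HH.T l, ∑ n ∈ HH.T m,
            ∑ p ∈ HH.T (HH.d1 l j), ∑ r ∈ HH.T (HH.d1 m n),
            ∑ q ∈ HH.T (HH.d2 l j), ∑ s ∈ HH.T (HH.d2 m n),
              (γ (HH.d1 (HH.d1 l j) p) * γ (HH.d1 (HH.d1 m n) r) *
                δ (HH.mul (HH.d2 (HH.d1 l j) p) (HH.d2 (HH.d1 m n) r))) *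
              (γ (HH.α (HH.α (HH.d1 h a))) *
                (γ (HH.mul (HH.d1 (HH.d2 l j) q) (HH.d1 (HH.d2 m n) s)) *
                  δ (HH.mul (HH.α (HH.α (HH.d2 h a)))
                      (HH.mul (HH.d2 (HH.d2 l j) q) (HH.d2 (HH.d2 m n) s))))))
            = ∑ j ∈ HH.T l, ∑ n ∈ HH.T m,
              ∑ p ∈ HH.T (HH.d1 l j), ∑ r ∈ HH.T (HH.d1 m n),
              ∑ q ∈ HH.T (HH.d2 l j), ∑ s ∈ HH.T (HH.d2 m n),
                (bf γ γ) (HH.d1 (HH.d1 l j) p) (HH.d1 (HH.d1 m n) r) *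
                ((HH.mul.compr₂ δ) (HH.d2 (HH.d1 l j) p) (HH.d2 (HH.d1 m n) r) *
                 ((HH.mul.compr₂ γ) (HH.d1 (HH.d2 l j) q) (HH.d1 (HH.d2 m n) s) *
                  (γ (HH.α (HH.α (HH.d1 h a))) •
                    (HH.mul.compr₂ (δ ∘ₗ HH.mul (HH.α (HH.α (HH.d2 h a))))))
                    (HH.d2 (HH.d2 l j) q) (HH.d2 (HH.d2 m n) s))) := by
              refine Finset.sum_congr rfl fun j _ => Finset.sum_congr rfl fun n _ =>
                Finset.sum_congr rfl fun p _ => Finset.sum_congr rfl fun r _ =>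
                Finset.sum_congr rfl fun q _ => Finset.sum_congr rfl fun s _ => ?_
              simp only [bf_apply, LinearMap.compr₂_apply, LinearMap.smul_apply,
                LinearMap.comp_apply, smul_eq_mul]
              ring
          _ = ∑ j ∈ HH.T l, ∑ n ∈ HH.T m,
                (bf γ γ) (HH.α (HH.d1 l j)) (HH.α (HH.d1 m n)) *
                  (γ (HH.α (HH.α (HH.d1 h a))) •
                    (HH.mul.compr₂ (δ ∘ₗ HH.mul (HH.α (HH.α (HH.d2 h a))))))
                    (HH.α (HH.d2 l j)) (HH.α (HH.d2 m n)) := tel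
          _ = ∑ j ∈ HH.T l, ∑ n ∈ HH.T m,
                γ (HH.α (HH.α (HH.d1 h a))) *
                  (γ (HH.α (HH.d1 l j)) * γ (HH.α (HH.d1 m n)) *
                    δ (HH.mul (HH.α (HH.α (HH.d2 h a)))
                        (HH.mul (HH.α (HH.d2 l j)) (HH.α (HH.d2 m n))))) := by
              refine Finset.sum_congr rfl fun j _ => Finset.sum_congr rfl fun n _ => ?_
              simp only [bf_apply, LinearMap.compr₂_apply, LinearMap.smul_apply,
                LinearMap.comp_apply, smul_eq_mul]
              ring

end D1Aux
namespace D1Aux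

variable {k : Type u} {H : Type v} [Field k] [AddCommGroup H] [Module k H]
variable (HH : HomHopf k H)
variable (γ δ : H →ₗ[k] k)

lemma cocyR (hα : ∀ h, γ (HH.α h) = γ h)
    (hinv1 : ∀ h, ∑ i ∈ HH.T h, γ (HH.d1 h i) * δ (HH.d2 h i) = HH.counit h)
    (hinv2 : ∀ h, ∑ i ∈ HH.T h, δ (HH.d1 h i) * γ (HH.d2 h i) = HH.counit h)
    (h l m : H) :
    (∑ i ∈ HH.T h, ∑ j ∈ HH.T l,
      (∑ p ∈ HH.T (HH.d1 h i), ∑ r ∈ HH.T (HH.d1 l j),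
        γ (HH.d1 (HH.d1 h i) p) * γ (HH.d1 (HH.d1 l j) r) *
          δ (HH.mul (HH.d2 (HH.d1 h i) p) (HH.d2 (HH.d1 l j) r))) *
      ∑ b ∈ HH.T (HH.mul (HH.d2 h i) (HH.d2 l j)), ∑ a ∈ HH.T (HH.α (HH.α m)),
        γ (HH.d1 (HH.mul (HH.d2 h i) (HH.d2 l j)) b) * γ (HH.d1 (HH.α (HH.α m)) a) *
          δ (HH.mul (HH.d2 (HH.mul (HH.d2 h i) (HH.d2 l j)) b)
              (HH.d2 (HH.α (HH.α m)) a)))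
    = ∑ a ∈ HH.T m, ∑ i ∈ HH.T h, ∑ j ∈ HH.T l,
        γ (HH.α (HH.α (HH.d1 m a))) *
          (γ (HH.α (HH.d1 h i)) * γ (HH.α (HH.d1 l j)) *
            δ (HH.mul (HH.mul (HH.α (HH.d2 h i)) (HH.α (HH.d2 l j)))
                (HH.α (HH.α (HH.d2 m a))))) := by
  have hδα : ∀ x, δ (HH.α x) = δ x := delta_alpha HH γ δ hα hinv1 hinv2
  have hδσ : ∀ x, δ (HH.α.symm x) = δ x := delta_alphainv HH γ δ hα hinv1 hinv2
  have hγσ : ∀ x, γ (HH.α.symm x) = γ x := gamma_alphainv HH γ hα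
  have expB : ∀ i ∈ HH.T h, ∀ j ∈ HH.T l,
      (∑ b ∈ HH.T (HH.mul (HH.d2 h i) (HH.d2 l j)), ∑ a ∈ HH.T (HH.α (HH.α m)),
        γ (HH.d1 (HH.mul (HH.d2 h i) (HH.d2 l j)) b) * γ (HH.d1 (HH.α (HH.α m)) a) *
          δ (HH.mul (HH.d2 (HH.mul (HH.d2 h i) (HH.d2 l j)) b)
              (HH.d2 (HH.α (HH.α m)) a)))
      = ∑ a ∈ HH.T m, ∑ q ∈ HH.T (HH.d2 h i), ∑ s ∈ HH.T (HH.d2 l j),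
          γ (HH.α (HH.α (HH.d1 m a))) *
            (γ (HH.mul (HH.d1 (HH.d2 h i) q) (HH.d1 (HH.d2 l j) s)) *
              δ (HH.mul (HH.mul (HH.d2 (HH.d2 h i) q) (HH.d2 (HH.d2 l j) s))
                  (HH.α (HH.α (HH.d2 m a))))) := by
    intro i _ j _
    calc (∑ b ∈ HH.T (HH.mul (HH.d2 h i) (HH.d2 l j)), ∑ a ∈ HH.T (HH.α (HH.α m)),
        γ (HH.d1 (HH.mul (HH.d2 h i) (HH.d2 l j)) b) * γ (HH.d1 (HH.α (HH.α m)) a) *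
          δ (HH.mul (HH.d2 (HH.mul (HH.d2 h i) (HH.d2 l j)) b)
              (HH.d2 (HH.α (HH.α m)) a)))
        = ∑ b ∈ HH.T (HH.mul (HH.d2 h i) (HH.d2 l j)), ∑ a ∈ HH.T m,
            γ (HH.α (HH.α (HH.d1 m a))) *
              (γ (HH.d1 (HH.mul (HH.d2 h i) (HH.d2 l j)) b) *
                δ (HH.mul (HH.d2 (HH.mul (HH.d2 h i) (HH.d2 l j)) b)
                    (HH.α (HH.α (HH.d2 m a))))) := by
          refine Finset.sum_congr rfl fun b _ => ?_
          have h1 := sum_alpha2B HH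
            (bf (γ (HH.d1 (HH.mul (HH.d2 h i) (HH.d2 l j)) b) • γ)
              (δ ∘ₗ HH.mul (HH.d2 (HH.mul (HH.d2 h i) (HH.d2 l j)) b))) m
          simp only [bf_apply, LinearMap.smul_apply, LinearMap.comp_apply,
            smul_eq_mul] at h1
          rw [h1]
          exact Finset.sum_congr rfl fun a _ => by ring
      _ = ∑ a ∈ HH.T m, ∑ b ∈ HH.T (HH.mul (HH.d2 h i) (HH.d2 l j)),
            γ (HH.α (HH.α (HH.d1 m a))) *
              (γ (HH.d1 (HH.mul (HH.d2 h i) (HH.d2 l j)) b) *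
                δ (HH.mul (HH.d2 (HH.mul (HH.d2 h i) (HH.d2 l j)) b)
                    (HH.α (HH.α (HH.d2 m a))))) := Finset.sum_comm
      _ = ∑ a ∈ HH.T m, ∑ q ∈ HH.T (HH.d2 h i), ∑ s ∈ HH.T (HH.d2 l j),
            γ (HH.α (HH.α (HH.d1 m a))) *
              (γ (HH.mul (HH.d1 (HH.d2 h i) q) (HH.d1 (HH.d2 l j) s)) *
                δ (HH.mul (HH.mul (HH.d2 (HH.d2 h i) q) (HH.d2 (HH.d2 l j) s))
                    (HH.α (HH.α (HH.d2 m a))))) := by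
          refine Finset.sum_congr rfl fun a _ => ?_
          have h2 := sum_mulB HH (bf γ (δ ∘ₗ HH.mul.flip (HH.α (HH.α (HH.d2 m a)))))
            (HH.d2 h i) (HH.d2 l j)
          simp only [bf_apply, LinearMap.comp_apply, LinearMap.flip_apply] at h2
          rw [← Finset.mul_sum, h2, Finset.mul_sum]
          refine Finset.sum_congr rfl fun q _ => ?_
          rw [Finset.mul_sum]
  calc (∑ i ∈ HH.T h, ∑ j ∈ HH.T l,
      (∑ p ∈ HH.T (HH.d1 h i), ∑ r ∈ HH.T (HH.d1 l j),
        γ (HH.d1 (HH.d1 h i) p) * γ (HH.d1 (HH.d1 l j) r) *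
          δ (HH.mul (HH.d2 (HH.d1 h i) p) (HH.d2 (HH.d1 l j) r))) *
      ∑ b ∈ HH.T (HH.mul (HH.d2 h i) (HH.d2 l j)), ∑ a ∈ HH.T (HH.α (HH.α m)),
        γ (HH.d1 (HH.mul (HH.d2 h i) (HH.d2 l j)) b) * γ (HH.d1 (HH.α (HH.α m)) a) *
          δ (HH.mul (HH.d2 (HH.mul (HH.d2 h i) (HH.d2 l j)) b)
              (HH.d2 (HH.α (HH.α m)) a)))
      = ∑ i ∈ HH.T h, ∑ j ∈ HH.T l,
        ∑ p ∈ HH.T (HH.d1 h i), ∑ r ∈ HH.T (HH.d1 l j),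
        ∑ a ∈ HH.T m, ∑ q ∈ HH.T (HH.d2 h i), ∑ s ∈ HH.T (HH.d2 l j),
          (γ (HH.d1 (HH.d1 h i) p) * γ (HH.d1 (HH.d1 l j) r) *
            δ (HH.mul (HH.d2 (HH.d1 h i) p) (HH.d2 (HH.d1 l j) r))) *
          (γ (HH.α (HH.α (HH.d1 m a))) *
            (γ (HH.mul (HH.d1 (HH.d2 h i) q) (HH.d1 (HH.d2 l j) s)) *
              δ (HH.mul (HH.mul (HH.d2 (HH.d2 h i) q) (HH.d2 (HH.d2 l j) s))
                  (HH.α (HH.α (HH.d2 m a)))))) := by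
        refine Finset.sum_congr rfl fun i hi => Finset.sum_congr rfl fun j hj => ?_
        rw [expB i hi j hj, Finset.sum_mul]
        refine Finset.sum_congr rfl fun p _ => ?_
        rw [Finset.sum_mul]
        refine Finset.sum_congr rfl fun r _ => ?_
        rw [Finset.mul_sum]
        refine Finset.sum_congr rfl fun a _ => ?_
        rw [Finset.mul_sum]
        refine Finset.sum_congr rfl fun q _ => ?_
        rw [Finset.mul_sum]
    _ = ∑ a ∈ HH.T m, ∑ i ∈ HH.T h, ∑ j ∈ HH.T l,
        ∑ p ∈ HH.T (HH.d1 h i), ∑ r ∈ HH.T (HH.d1 l j),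
        ∑ q ∈ HH.T (HH.d2 h i), ∑ s ∈ HH.T (HH.d2 l j),
          (γ (HH.d1 (HH.d1 h i) p) * γ (HH.d1 (HH.d1 l j) r) *
            δ (HH.mul (HH.d2 (HH.d1 h i) p) (HH.d2 (HH.d1 l j) r))) *
          (γ (HH.α (HH.α (HH.d1 m a))) *
            (γ (HH.mul (HH.d1 (HH.d2 h i) q) (HH.d1 (HH.d2 l j) s)) *
              δ (HH.mul (HH.mul (HH.d2 (HH.d2 h i) q) (HH.d2 (HH.d2 l j) s))
                  (HH.α (HH.α (HH.d2 m a)))))) := by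
        conv_lhs => enter [2,i,2,j,2,p]; rw [Finset.sum_comm]
        conv_lhs => enter [2,i,2,j]; rw [Finset.sum_comm]
        conv_lhs => enter [2,i]; rw [Finset.sum_comm]
        conv_lhs => rw [Finset.sum_comm]
    _ = ∑ a ∈ HH.T m, ∑ i ∈ HH.T h, ∑ j ∈ HH.T l,
        γ (HH.α (HH.α (HH.d1 m a))) *
          (γ (HH.α (HH.d1 h i)) * γ (HH.α (HH.d1 l j)) *
            δ (HH.mul (HH.mul (HH.α (HH.d2 h i)) (HH.α (HH.d2 l j)))
                (HH.α (HH.α (HH.d2 m a))))) := by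
        refine Finset.sum_congr rfl fun a _ => ?_
        have tel := telm HH (bf γ γ) (HH.mul.compr₂ δ) (HH.mul.compr₂ γ)
          (γ (HH.α (HH.α (HH.d1 m a))) •
            (HH.mul.compr₂ (δ ∘ₗ HH.mul.flip (HH.α (HH.α (HH.d2 m a))))))
          (hP_mul HH δ hδσ) (hP_mul HH γ hγσ) (hPQ_mul HH γ δ hinv2) h l
        calc (∑ i ∈ HH.T h, ∑ j ∈ HH.T l,
            ∑ p ∈ HH.T (HH.d1 h i), ∑ r ∈ HH.T (HH.d1 l j),
            ∑ q ∈ HH.T (HH.d2 h i), ∑ s ∈ HH.T (HH.d2 l j),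
              (γ (HH.d1 (HH.d1 h i) p) * γ (HH.d1 (HH.d1 l j) r) *
                δ (HH.mul (HH.d2 (HH.d1 h i) p) (HH.d2 (HH.d1 l j) r))) *
              (γ (HH.α (HH.α (HH.d1 m a))) *
                (γ (HH.mul (HH.d1 (HH.d2 h i) q) (HH.d1 (HH.d2 l j) s)) *
                  δ (HH.mul (HH.mul (HH.d2 (HH.d2 h i) q) (HH.d2 (HH.d2 l j) s))
                      (HH.α (HH.α (HH.d2 m a)))))))
            = ∑ i ∈ HH.T h, ∑ j ∈ HH.T l,
              ∑ p ∈ HH.T (HH.d1 h i), ∑ r ∈ HH.T (HH.d1 l j),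
              ∑ q ∈ HH.T (HH.d2 h i), ∑ s ∈ HH.T (HH.d2 l j),
                (bf γ γ) (HH.d1 (HH.d1 h i) p) (HH.d1 (HH.d1 l j) r) *
                ((HH.mul.compr₂ δ) (HH.d2 (HH.d1 h i) p) (HH.d2 (HH.d1 l j) r) *
                 ((HH.mul.compr₂ γ) (HH.d1 (HH.d2 h i) q) (HH.d1 (HH.d2 l j) s) *
                  (γ (HH.α (HH.α (HH.d1 m a))) •
                    (HH.mul.compr₂ (δ ∘ₗ HH.mul.flip (HH.α (HH.α (HH.d2 m a))))))
                    (HH.d2 (HH.d2 h i) q) (HH.d2 (HH.d2 l j) s))) := by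
              refine Finset.sum_congr rfl fun i _ => Finset.sum_congr rfl fun j _ =>
                Finset.sum_congr rfl fun p _ => Finset.sum_congr rfl fun r _ =>
                Finset.sum_congr rfl fun q _ => Finset.sum_congr rfl fun s _ => ?_
              simp only [bf_apply, LinearMap.compr₂_apply, LinearMap.smul_apply,
                LinearMap.comp_apply, LinearMap.flip_apply, smul_eq_mul]
              ring
          _ = ∑ i ∈ HH.T h, ∑ j ∈ HH.T l,
                (bf γ γ) (HH.α (HH.d1 h i)) (HH.α (HH.d1 l j)) *
                  (γ (HH.α (HH.α (HH.d1 m a))) •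
                    (HH.mul.compr₂ (δ ∘ₗ HH.mul.flip (HH.α (HH.α (HH.d2 m a))))))
                    (HH.α (HH.d2 h i)) (HH.α (HH.d2 l j)) := tel
          _ = ∑ i ∈ HH.T h, ∑ j ∈ HH.T l,
                γ (HH.α (HH.α (HH.d1 m a))) *
                  (γ (HH.α (HH.d1 h i)) * γ (HH.α (HH.d1 l j)) *
                    δ (HH.mul (HH.mul (HH.α (HH.d2 h i)) (HH.α (HH.d2 l j)))
                        (HH.α (HH.α (HH.d2 m a))))) := by
              refine Finset.sum_congr rfl fun i _ => Finset.sum_congr rfl fun j _ => ?_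
              simp only [bf_apply, LinearMap.compr₂_apply, LinearMap.smul_apply,
                LinearMap.comp_apply, LinearMap.flip_apply, smul_eq_mul]
              ring

end D1Aux
namespace D1Aux

variable {k : Type u} {H : Type v} [Field k] [AddCommGroup H] [Module k H]
variable (HH : HomHopf k H)
variable (γ δ : H →ₗ[k] k)

lemma cocycle (hα : ∀ h, γ (HH.α h) = γ h)
    (hinv1 : ∀ h, ∑ i ∈ HH.T h, γ (HH.d1 h i) * δ (HH.d2 h i) = HH.counit h)
    (hinv2 : ∀ h, ∑ i ∈ HH.T h, δ (HH.d1 h i) * γ (HH.d2 h i) = HH.counit h)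
    (h l m : H) :
    (∑ j ∈ HH.T l, ∑ n ∈ HH.T m,
      (∑ p ∈ HH.T (HH.d1 l j), ∑ r ∈ HH.T (HH.d1 m n),
        γ (HH.d1 (HH.d1 l j) p) * γ (HH.d1 (HH.d1 m n) r) *
          δ (HH.mul (HH.d2 (HH.d1 l j) p) (HH.d2 (HH.d1 m n) r))) *
      ∑ a ∈ HH.T (HH.α (HH.α h)), ∑ b ∈ HH.T (HH.mul (HH.d2 l j) (HH.d2 m n)),
        γ (HH.d1 (HH.α (HH.α h)) a) * γ (HH.d1 (HH.mul (HH.d2 l j) (HH.d2 m n)) b) *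
          δ (HH.mul (HH.d2 (HH.α (HH.α h)) a)
              (HH.d2 (HH.mul (HH.d2 l j) (HH.d2 m n)) b)))
    = ∑ i ∈ HH.T h, ∑ j ∈ HH.T l,
      (∑ p ∈ HH.T (HH.d1 h i), ∑ r ∈ HH.T (HH.d1 l j),
        γ (HH.d1 (HH.d1 h i) p) * γ (HH.d1 (HH.d1 l j) r) *
          δ (HH.mul (HH.d2 (HH.d1 h i) p) (HH.d2 (HH.d1 l j) r))) *
      ∑ b ∈ HH.T (HH.mul (HH.d2 h i) (HH.d2 l j)), ∑ a ∈ HH.T (HH.α (HH.α m)),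
        γ (HH.d1 (HH.mul (HH.d2 h i) (HH.d2 l j)) b) * γ (HH.d1 (HH.α (HH.α m)) a) *
          δ (HH.mul (HH.d2 (HH.mul (HH.d2 h i) (HH.d2 l j)) b)
              (HH.d2 (HH.α (HH.α m)) a)) := by
  rw [cocyL HH γ δ hα hinv1 hinv2 h l m, cocyR HH γ δ hα hinv1 hinv2 h l m]
  conv_lhs => enter [2,a]; rw [Finset.sum_comm]
  conv_lhs => rw [Finset.sum_comm]
  refine Finset.sum_congr rfl fun n _ => Finset.sum_congr rfl fun a _ =>
    Finset.sum_congr rfl fun j _ => ?_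
  rw [HH.hom_assoc (HH.α (HH.d2 h a)) (HH.α (HH.d2 l j)) (HH.α (HH.d2 m n))]
  simp only [hα]
  ring

end D1Aux

open D1Aux in
/-- If `γ : H → k` is normalized (`γ(1) = 1`), convolution invertible
(with inverse `δ`) and satisfies `γ∘α = γ`, then
`D¹(γ)(h,g) = γ(h₁)γ(g₁)γ⁻¹(h₂g₂)` is a normalized, convolution invertible left
Hom-2-cocycle. -/
theorem D1_is_leftCocycle
    {k : Type u} {H : Type v} [Field k] [AddCommGroup H] [Module k H]
    (HH : HomHopf k H) (γ δ : H →ₗ[k] k)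
    (hone : γ HH.one = 1)
    (hα : ∀ h, γ (HH.α h) = γ h)
    (hinv : ConvInv1 HH (fun h => γ h) (fun h => δ h)) :
    Normalized2 HH (D1 HH (fun h => γ h) (fun h => δ h)) ∧
    IsLeftCocycle HH (D1 HH (fun h => γ h) (fun h => δ h)) ∧
    (∃ τ, ConvInv2 HH (D1 HH (fun h => γ h) (fun h => δ h)) τ) := by
  obtain ⟨hinv1, hinv2⟩ := hinv
  simp only [conv1] at hinv1 hinv2
  refine ⟨⟨?_, ?_⟩, ⟨?_, ?_⟩, ?_⟩
  · intro h
    simp only [D1]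
    exact norm_left HH γ δ hone hα hinv1 hinv2 h
  · intro h
    simp only [D1]
    exact norm_right HH γ δ hone hα hinv1 hinv2 h
  · intro h g
    simp only [D1]
    exact alpha_inv2 HH γ δ hα hinv1 hinv2 h g
  · intro h l m
    simp only [D1]
    exact cocycle HH γ δ hα hinv1 hinv2 h l m
  · refine ⟨fun a b => ∑ q ∈ HH.T a, ∑ s ∈ HH.T b,
      γ (HH.mul (HH.d1 a q) (HH.d1 b s)) * (δ (HH.d2 a q) * δ (HH.d2 b s)), ?_, ?_⟩
    · intro h g
      simp only [D1]
      exact convinv_right HH γ δ hα hinv1 hinv2 h g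
    · intro h g
      simp only [D1]
      exact convinv_left HH γ δ hα hinv1 hinv2 h g
end
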